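/- arXiv:1705.09797 — 11 statements merged into one kernel-verified Lean document; each statement's English description precedes it below -/
import Mathlib

section
/- Let G be a finite connected simple graph and let s be an arbitrary vertex of G. Then for every vertex q of G, the cluster-diameter of the layering partition of G with respect to q is at most three times the cluster-diameter of the layering partition with respect to s, i.e., Δ_q(G) ≤ 3·Δ_s(G). -/
open SimpleGraph

/-- Two vertices `u, v` lie in the same cluster of the layering partition of `G`
with respect to start vertex `s`: they are in the same layer and are connected by a
walk all of whose vertices are at distance at least `d_G(s,u)` from `s`. -/
def SameCluster {V : Type} (G : SimpleGraph V) (s u v : V) : Prop :=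
  G.dist s u = G.dist s v ∧
  ∃ p : G.Walk u v, ∀ w ∈ p.support, G.dist s u ≤ G.dist s w

open scoped Classical in
/-- The cluster-diameter `Δ_s(G)` of the layering partition of `G` w.r.t. `s`:
the largest distance in `G` between two vertices lying in a common cluster. -/
noncomputable def clusterDiam {V : Type} [Fintype V] (G : SimpleGraph V) (s : V) : ℕ :=
  Finset.univ.sup fun p : V × V =>
    if SameCluster G s p.1 p.2 then G.dist p.1 p.2 else 0

namespace LayeringAux

variable {V : Type} (G : SimpleGraph V) (s : V)

/-- `x` and `y` are joined by a walk all of whose vertices are at distance at least `j`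
from `s`. -/
def Conn (j : ℕ) (x y : V) : Prop :=
  ∃ p : G.Walk x y, ∀ w ∈ p.support, j ≤ G.dist s w

variable {G s}

lemma Conn.le_left {j : ℕ} {x y : V} (h : Conn G s j x y) : j ≤ G.dist s x := by
  obtain ⟨p, hp⟩ := h
  exact hp x p.start_mem_support

lemma Conn.symm {j : ℕ} {x y : V} (h : Conn G s j x y) : Conn G s j y x := by
  obtain ⟨p, hp⟩ := h
  exact ⟨p.reverse, fun w hw => hp w (by
    rwa [SimpleGraph.Walk.support_reverse, List.mem_reverse] at hw)⟩

lemma Conn.trans {j : ℕ} {x y z : V} (h1 : Conn G s j x y) (h2 : Conn G s j y z) :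
    Conn G s j x z := by
  obtain ⟨p, hp⟩ := h1
  obtain ⟨q, hq⟩ := h2
  refine ⟨p.append q, fun w hw => ?_⟩
  rcases (SimpleGraph.Walk.mem_support_append_iff _ _).1 hw with h | h
  · exact hp w h
  · exact hq w h

lemma Conn.mono {i j : ℕ} {x y : V} (hij : i ≤ j) (h : Conn G s j x y) : Conn G s i x y := by
  obtain ⟨p, hp⟩ := h
  exact ⟨p, fun w hw => le_trans hij (hp w hw)⟩

lemma conn_refl {j : ℕ} {x : V} (h : j ≤ G.dist s x) : Conn G s j x x :=
  ⟨SimpleGraph.Walk.nil, by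
    intro w hw
    simp only [SimpleGraph.Walk.support_nil, List.mem_singleton] at hw
    subst hw
    exact h⟩

open scoped Classical in
/-- The largest `j` such that `x` and `y` are joined by a walk avoiding the open ball of
radius `j` around `s` (the depth of the least common ancestor cluster in the layering
partition tree). -/
noncomputable def mval (G : SimpleGraph V) (s x y : V) : ℕ :=
  Nat.findGreatest (fun j => Conn G s j x y) (G.dist s x)

lemma conn_mval (hG : G.Connected) (x y : V) : Conn G s (mval G s x y) x y := by
  classical
  obtain ⟨p⟩ := hG.preconnected x y
  have h0 : Conn G s 0 x y := ⟨p, fun w _ => Nat.zero_le _⟩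
  unfold mval
  exact Nat.findGreatest_spec (P := fun j => Conn G s j x y) (Nat.zero_le _) h0

lemma le_mval {j : ℕ} {x y : V} (h : Conn G s j x y) : j ≤ mval G s x y := by
  classical
  unfold mval
  exact Nat.le_findGreatest (P := fun j => Conn G s j x y) h.le_left h

/-- First-hit lemma: if a walk starting at `u` (with `d(s,u) ≥ j`) reaches the level
set `{d(s,·) ≤ j}`, then it contains a vertex `x` at distance exactly `j` from `s`
which is joined to `u` by a walk staying at distance at least `j` from `s`. -/
lemma firstHit (hG : G.Connected) (j : ℕ) {u v : V} (p : G.Walk u v) :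
    j ≤ G.dist s u → (∃ w ∈ p.support, G.dist s w ≤ j) →
    ∃ x ∈ p.support, G.dist s x = j ∧ Conn G s j u x := by
  induction p with
  | nil =>
    rename_i u
    intro hju hex
    obtain ⟨w, hw, hwle⟩ := hex
    have hwu : w = u := by simpa using hw
    rw [hwu] at hwle
    exact ⟨u, by simp, le_antisymm hwle hju, conn_refl hju⟩
  | @cons a b c hab q ih =>
    intro hju hex
    by_cases hj : G.dist s a = j
    · exact ⟨a, by simp, hj, conn_refl (le_of_eq hj.symm)⟩
    · have hgt : j < G.dist s a := lt_of_le_of_ne hju (Ne.symm hj)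
      have hba : G.dist b a ≤ 1 := by
        simpa using SimpleGraph.dist_le (SimpleGraph.Walk.cons hab.symm SimpleGraph.Walk.nil)
      have htri : G.dist s a ≤ G.dist s b + G.dist b a := hG.dist_triangle
      have hb : j ≤ G.dist s b := by omega
      have hex' : ∃ w ∈ q.support, G.dist s w ≤ j := by
        obtain ⟨w, hw, hwle⟩ := hex
        rw [SimpleGraph.Walk.support_cons, List.mem_cons] at hw
        rcases hw with rfl | hw
        · omega
        · exact ⟨w, hw, hwle⟩
      obtain ⟨x, hxmem, hxd, hxconn⟩ := ih hb hex'
      refine ⟨x, by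
        rw [SimpleGraph.Walk.support_cons, List.mem_cons]; exact Or.inr hxmem, hxd, ?_⟩
      obtain ⟨r, hr⟩ := hxconn
      refine ⟨SimpleGraph.Walk.cons hab r, ?_⟩
      intro w hw
      rw [SimpleGraph.Walk.support_cons, List.mem_cons] at hw
      rcases hw with rfl | hw
      · exact le_of_lt hgt
      · exact hr w hw

/-- Descent lemma: any vertex `x` has a "projection" `x'` onto layer `j ≤ d(s,x)`:
`d(s,x') = j`, `x` and `x'` are joined outside the ball of radius `j - 1` around `s`,
and `d(x,x') = d(s,x) - j`. -/
lemma descend (hG : G.Connected) {x : V} (j : ℕ) (hj : j ≤ G.dist s x) :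
    ∃ x', G.dist s x' = j ∧ Conn G s j x x' ∧ G.dist x x' + j ≤ G.dist s x := by
  classical
  obtain ⟨p, hp⟩ := (hG.preconnected x s).exists_walk_length_eq_dist
  have hexs : ∃ w ∈ p.support, G.dist s w ≤ j := by
    refine ⟨s, p.end_mem_support, ?_⟩
    simp [SimpleGraph.dist_self]
  obtain ⟨x', hmem, hd, hconn⟩ := firstHit hG j p hj hexs
  refine ⟨x', hd, hconn, ?_⟩
  have h1 : G.dist x x' ≤ (p.takeUntil x' hmem).length := SimpleGraph.dist_le _
  have h2 : G.dist x' s ≤ (p.dropUntil x' hmem).length := SimpleGraph.dist_le _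
  have h3 : (p.takeUntil x' hmem).length + (p.dropUntil x' hmem).length = p.length := by
    rw [← SimpleGraph.Walk.length_append, SimpleGraph.Walk.take_spec]
  have h4 : G.dist x' s = j := by rw [SimpleGraph.dist_comm]; exact hd
  have h5 : G.dist x s = G.dist s x := SimpleGraph.dist_comm
  omega

lemma dist_le_clusterDiam [Fintype V] {x y : V} (h : SameCluster G s x y) :
    G.dist x y ≤ clusterDiam G s := by
  classical
  have hle := Finset.le_sup (f := fun p : V × V =>
      if SameCluster G s p.1 p.2 then G.dist p.1 p.2 else 0) (Finset.mem_univ (x, y))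
  rw [clusterDiam]
  calc G.dist x y
      = (if SameCluster G s (x, y).1 (x, y).2 then G.dist (x, y).1 (x, y).2 else 0) := by
        rw [if_pos h]
    _ ≤ _ := hle

/-- The distance between two vertices exceeds the tree distance
`d(s,x) + d(s,y) - 2·mval(x,y)` by at most the cluster diameter. -/
lemma dist_le_rho_add [Fintype V] (hG : G.Connected) (x y : V) :
    G.dist x y + 2 * mval G s x y ≤ G.dist s x + G.dist s y + clusterDiam G s := by
  set j := mval G s x y with hjdef
  have hj : Conn G s j x y := conn_mval hG x y
  have hjx : j ≤ G.dist s x := hj.le_left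
  have hjy : j ≤ G.dist s y := hj.symm.le_left
  obtain ⟨x', hx'd, hx'c, hx'⟩ := descend hG j hjx
  obtain ⟨y', hy'd, hy'c, hy'⟩ := descend hG j hjy
  have hcl : SameCluster G s x' y' := by
    refine ⟨by rw [hx'd, hy'd], ?_⟩
    have hc : Conn G s j x' y' := (hx'c.symm.trans hj).trans hy'c
    obtain ⟨p, hp⟩ := hc
    exact ⟨p, fun w hw => by rw [hx'd]; exact hp w hw⟩
  have hΔ : G.dist x' y' ≤ clusterDiam G s := dist_le_clusterDiam hcl
  have ta : G.dist x y ≤ G.dist x x' + G.dist x' y := hG.dist_triangle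
  have tb : G.dist x' y ≤ G.dist x' y' + G.dist y' y := hG.dist_triangle
  have hyy : G.dist y' y = G.dist y y' := SimpleGraph.dist_comm
  omega

/-- The tree distance `d(s,x) + d(s,y) - 2·mval(x,y)` is at most the graph distance:
walk version. -/
lemma rho_le_length (hG : G.Connected) {x y : V} (p : G.Walk x y) :
    G.dist s x + G.dist s y ≤ p.length + 2 * mval G s x y := by
  induction p with
  | @nil a =>
    have h : G.dist s a ≤ mval G s a a := le_mval (conn_refl le_rfl)
    simp only [SimpleGraph.Walk.length_nil]
    omega
  | @cons a b c hab q ih =>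
    have hj : Conn G s (mval G s b c) b c := conn_mval hG b c
    have hjb : mval G s b c ≤ G.dist s b := hj.le_left
    have hba : G.dist b a ≤ 1 := by
      simpa using SimpleGraph.dist_le (SimpleGraph.Walk.cons hab.symm SimpleGraph.Walk.nil)
    have hab1 : G.dist a b ≤ 1 := by
      simpa using SimpleGraph.dist_le (SimpleGraph.Walk.cons hab SimpleGraph.Walk.nil)
    have htri1 : G.dist s a ≤ G.dist s b + G.dist b a := hG.dist_triangle
    have htri2 : G.dist s b ≤ G.dist s a + G.dist a b := hG.dist_triangle
    have hkey : min (mval G s b c) (G.dist s a) ≤ mval G s a c := by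
      apply le_mval
      obtain ⟨r, hr⟩ := hj
      refine ⟨SimpleGraph.Walk.cons hab r, ?_⟩
      intro w hw
      rw [SimpleGraph.Walk.support_cons, List.mem_cons] at hw
      rcases hw with rfl | hw
      · exact min_le_right _ _
      · exact le_trans (min_le_left _ _) (hr w hw)
    simp only [SimpleGraph.Walk.length_cons]
    omega

/-- The tree distance `d(s,x) + d(s,y) - 2·mval(x,y)` is at most the graph distance. -/
lemma rho_le_dist (hG : G.Connected) (x y : V) :
    G.dist s x + G.dist s y ≤ G.dist x y + 2 * mval G s x y := by
  obtain ⟨p, hp⟩ := (hG.preconnected x y).exists_walk_length_eq_dist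
  have := rho_le_length (s := s) hG p
  omega

end LayeringAux

open LayeringAux in
/-- For every finite connected graph `G`, every vertex `s` and every vertex `q`,
`Δ_q(G) ≤ 3 ⬝ Δ_s(G)`. -/
theorem clusterDiam_le_three_mul {V : Type} [Fintype V] (G : SimpleGraph V)
    (hG : G.Connected) (s q : V) :
    clusterDiam G q ≤ 3 * clusterDiam G s := by
  classical
  have key : ∀ u v : V, SameCluster G q u v → G.dist u v ≤ 3 * clusterDiam G s := by
    intro u v h
    obtain ⟨hk, W, hW⟩ := h
    set k := G.dist q u with hkdef
    set α := mval G s u q with hα'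
    set β := mval G s v q with hβ'
    set γ := mval G s u v with hγ'
    set t := G.dist s q with ht'
    set Δ := clusterDiam G s with hΔ'
    have hα : Conn G s α u q := conn_mval hG u q
    have hβ : Conn G s β v q := conn_mval hG v q
    have hγ : Conn G s γ u v := conn_mval hG u v
    -- key inequality: k + α + β ≤ Δ + t + γ
    have hkey : k + α + β ≤ Δ + t + γ := by
      by_cases hc1 : α ≤ γ ∧ β ≤ γ
      · -- Case 1: the median cluster is the lca of u and v
        have hexx : ∃ w ∈ W.support, G.dist s w ≤ γ := by
          by_contra hno
          push_neg at hno
          have hcc : Conn G s (γ + 1) u v := ⟨W, fun w hw => hno w hw⟩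
          have := le_mval hcc
          omega
        obtain ⟨x, hxm, hxd, hxc⟩ := firstHit hG γ W hγ.le_left hexx
        have hxq1 : Conn G s α x q := (Conn.mono hc1.1 hxc.symm).trans hα
        have hxq2 : Conn G s β x q :=
          (Conn.mono hc1.2 (hxc.symm.trans hγ)).trans hβ
        have hm1 : α ≤ mval G s x q := le_mval hxq1
        have hm2 : β ≤ mval G s x q := le_mval hxq2
        have hL2 := dist_le_rho_add (s := s) hG x q
        have hkx : k ≤ G.dist q x := hW x hxm
        have hcm : G.dist q x = G.dist x q := SimpleGraph.dist_comm
        omega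
      · by_cases hc2 : γ < α
        · -- Case 2a: the median cluster is the lca of u and q
          have hmin : min α β ≤ γ := by
            apply le_mval
            exact ((hα.mono (min_le_left _ _)).trans (hβ.mono (min_le_right _ _)).symm)
          have hβγ : β ≤ γ := by omega
          have hexx : ∃ w ∈ W.support, G.dist s w ≤ α := by
            by_contra hno
            push_neg at hno
            have hcc : Conn G s (γ + 1) u v :=
              ⟨W, fun w hw => by have := hno w hw; omega⟩
            have := le_mval hcc
            omega
          obtain ⟨x, hxm, hxd, hxc⟩ := firstHit hG α W hα.le_left hexx
          have hxq : Conn G s α x q := hxc.symm.trans hα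
          have hm : α ≤ mval G s x q := le_mval hxq
          have hL2 := dist_le_rho_add (s := s) hG x q
          have hkx : k ≤ G.dist q x := hW x hxm
          have hcm : G.dist q x = G.dist x q := SimpleGraph.dist_comm
          omega
        · -- Case 2b: the median cluster is the lca of v and q
          have hαγ : α ≤ γ := not_lt.mp hc2
          have hβγ : γ < β := by
            rcases not_and_or.mp hc1 with h' | h'
            · omega
            · omega
          have hexx : ∃ w ∈ W.support, G.dist s w ≤ β := by
            by_contra hno
            push_neg at hno
            have hcc : Conn G s (γ + 1) u v :=
              ⟨W, fun w hw => by have := hno w hw; omega⟩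
            have := le_mval hcc
            omega
          have hexx' : ∃ w ∈ W.reverse.support, G.dist s w ≤ β := by
            obtain ⟨w, hw, hwle⟩ := hexx
            exact ⟨w, by rwa [SimpleGraph.Walk.support_reverse, List.mem_reverse], hwle⟩
          obtain ⟨x, hxm, hxd, hxc⟩ := firstHit hG β W.reverse hβ.le_left hexx'
          have hxm' : x ∈ W.support := by
            rwa [SimpleGraph.Walk.support_reverse, List.mem_reverse] at hxm
          have hxq : Conn G s β x q := hxc.symm.trans hβ
          have hm : β ≤ mval G s x q := le_mval hxq
          have hL2 := dist_le_rho_add (s := s) hG x q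
          have hkx : k ≤ G.dist q x := hW x hxm'
          have hcm : G.dist q x = G.dist x q := SimpleGraph.dist_comm
          omega
    -- assemble the final bound
    have h1 : G.dist s u + t ≤ k + 2 * α := by
      have := rho_le_dist (s := s) hG u q
      have hcm : G.dist u q = G.dist q u := SimpleGraph.dist_comm
      omega
    have h2 : G.dist s v + t ≤ k + 2 * β := by
      have := rho_le_dist (s := s) hG v q
      have hcm : G.dist v q = G.dist q v := SimpleGraph.dist_comm
      omega
    have h3 : G.dist u v + 2 * γ ≤ G.dist s u + G.dist s v + Δ :=
      dist_le_rho_add (s := s) hG u v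
    omega
  rw [clusterDiam]
  apply Finset.sup_le
  intro p _
  by_cases h : SameCluster G q p.1 p.2
  · rw [if_pos h]
    exact key _ _ h
  · rw [if_neg h]
    exact Nat.zero_le _
end

section
/- For every finite connected simple graph G, the maximum cluster-diameter over all layering partitions of G is at most three times the minimum cluster-diameter over all layering partitions of G, i.e., Δ̂(G) ≤ 3·Δ(G). -/
open SimpleGraph

/-- `Δ̂(G)`: the maximum cluster-diameter over all layering partitions of `G`. -/
noncomputable def maxClusterDiam {V : Type} [Fintype V] (G : SimpleGraph V) : ℕ :=
  Finset.univ.sup fun s : V => clusterDiam G s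

/-- `Δ(G)`: the minimum cluster-diameter over all layering partitions of `G`. -/
noncomputable def minClusterDiam {V : Type} [Fintype V] (G : SimpleGraph V) : ℕ :=
  sInf (Set.range fun s : V => clusterDiam G s)

/-! ### Auxiliary theory: the "meet level" function `fm` -/

open scoped Classical in
/-- `fm G s x y` is the largest level `ℓ` such that `x` and `y` are joined by a walk all of
whose vertices are at distance at least `ℓ` from `s`. -/
noncomputable def fm {V : Type} (G : SimpleGraph V) (s x y : V) : ℕ :=
  Nat.findGreatest (fun ℓ => ∃ p : G.Walk x y, ∀ w ∈ p.support, ℓ ≤ G.dist s w) (G.dist s x)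

variable {V : Type} {G : SimpleGraph V}

lemma le_fm {s x y : V} {ℓ : ℕ} (p : G.Walk x y) (h : ∀ w ∈ p.support, ℓ ≤ G.dist s w) :
    ℓ ≤ fm G s x y := by
  classical
  unfold fm
  exact Nat.le_findGreatest (h x p.start_mem_support) ⟨p, h⟩

lemma fm_spec (hG : G.Connected) (s x y : V) :
    ∃ p : G.Walk x y, ∀ w ∈ p.support, fm G s x y ≤ G.dist s w := by
  classical
  obtain ⟨p⟩ := hG.preconnected x y
  unfold fm
  exact Nat.findGreatest_spec
    (P := fun ℓ => ∃ p : G.Walk x y, ∀ w ∈ p.support, ℓ ≤ G.dist s w)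
    (Nat.zero_le _) ⟨p, fun w _ => Nat.zero_le _⟩

lemma fm_le_left (s x y : V) : fm G s x y ≤ G.dist s x := by
  classical
  unfold fm
  exact Nat.findGreatest_le _

lemma fm_le_right (hG : G.Connected) (s x y : V) : fm G s x y ≤ G.dist s y := by
  obtain ⟨p, hp⟩ := fm_spec hG s x y
  exact hp y p.end_mem_support

lemma fm_comm (hG : G.Connected) (s x y : V) : fm G s x y = fm G s y x := by
  have key : ∀ a b : V, fm G s a b ≤ fm G s b a := by
    intro a b
    obtain ⟨p, hp⟩ := fm_spec hG s a b
    exact le_fm p.reverse (fun w hw => hp w (by simpa using hw))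
  exact le_antisymm (key x y) (key y x)

lemma fm_self (s x : V) : fm G s x x = G.dist s x := by
  refine le_antisymm (fm_le_left s x x) (le_fm Walk.nil ?_)
  intro w hw
  simp only [Walk.support_nil, List.mem_singleton] at hw
  subst hw; exact le_rfl

lemma fm_ultra (hG : G.Connected) (s x y z : V) :
    min (fm G s x y) (fm G s y z) ≤ fm G s x z := by
  obtain ⟨p, hp⟩ := fm_spec hG s x y
  obtain ⟨q, hq⟩ := fm_spec hG s y z
  refine le_fm (p.append q) ?_
  intro w hw
  rcases (Walk.mem_support_append_iff p q).1 hw with h | h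
  · exact le_trans (min_le_left _ _) (hp w h)
  · exact le_trans (min_le_right _ _) (hq w h)

lemma fm_adj {s x y : V} (h : G.Adj x y) : min (G.dist s x) (G.dist s y) ≤ fm G s x y := by
  refine le_fm (Walk.cons h Walk.nil) ?_
  intro w hw
  simp only [Walk.support_cons, Walk.support_nil, List.mem_cons, List.mem_singleton,
    List.not_mem_nil, or_false] at hw
  rcases hw with rfl | rfl
  · exact min_le_left _ _
  · exact min_le_right _ _

/-- The tree-like pseudometric induced by the layering partition rooted at `s`. -/
noncomputable def gI (G : SimpleGraph V) (s x y : V) : ℤ :=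
  (G.dist s x : ℤ) + (G.dist s y : ℤ) - 2 * (fm G s x y : ℤ)

lemma gI_self (s x : V) : gI G s x x = 0 := by
  simp only [gI, fm_self]; ring

/-- Every vertex of a walk splits the length. -/
lemma walk_split (hG : G.Connected) {x y : V} (p : G.Walk x y) :
    ∀ w ∈ p.support, G.dist x w + G.dist w y ≤ p.length := by
  induction p with
  | nil =>
      intro w hw
      simp only [Walk.support_nil, List.mem_singleton] at hw
      subst hw; simp
  | @cons a b c hadj q ih =>
      intro w hw
      simp only [Walk.support_cons, List.mem_cons] at hw
      have hab : G.dist a b ≤ 1 := by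
        simpa using SimpleGraph.dist_le (Walk.cons hadj Walk.nil)
      rcases hw with rfl | hw
      · have h1 : G.dist w c ≤ q.length + 1 := by
          simpa using SimpleGraph.dist_le (Walk.cons hadj q)
        have h2 : G.dist w w = 0 := SimpleGraph.dist_self
        simp only [Walk.length_cons]
        omega
      · have h1 := ih w hw
        have h2 : G.dist a w ≤ G.dist a b + G.dist b w := hG.dist_triangle
        simp only [Walk.length_cons]
        omega

/-- `gI` is a lower bound on the graph distance. -/
lemma gI_le_dist (hG : G.Connected) (s x y : V) : gI G s x y ≤ (G.dist x y : ℤ) := by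
  classical
  obtain ⟨p, hp⟩ := hG.exists_walk_length_eq_dist x y
  obtain ⟨w, hw_mem, hw_min⟩ :=
    Finset.exists_min_image p.support.toFinset (G.dist s)
      ⟨x, List.mem_toFinset.2 p.start_mem_support⟩
  have h1 : G.dist s w ≤ fm G s x y :=
    le_fm p (fun z hz => hw_min z (List.mem_toFinset.2 hz))
  have h2 : G.dist x w + G.dist w y ≤ p.length :=
    walk_split hG p w (List.mem_toFinset.1 hw_mem)
  have h3 : G.dist s x ≤ G.dist s w + G.dist w x := hG.dist_triangle
  have h4 : G.dist s y ≤ G.dist s w + G.dist w y := hG.dist_triangle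
  have h5 : G.dist w x = G.dist x w := SimpleGraph.dist_comm
  have key : G.dist s x + G.dist s y ≤ 2 * fm G s x y + G.dist x y := by omega
  simp only [gI]
  omega

/-- Descend from `x` along a geodesic to level `ℓ`. -/
lemma descend (hG : G.Connected) (s : V) (ℓ : ℕ) :
    ∀ x : V, ℓ ≤ G.dist s x →
      ∃ (x' : V) (q : G.Walk x' x), G.dist s x' = ℓ ∧ q.length + ℓ = G.dist s x ∧
        ∀ w ∈ q.support, ℓ ≤ G.dist s w := by
  suffices h : ∀ (n : ℕ) (x : V), G.dist s x - ℓ = n → ℓ ≤ G.dist s x →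
      ∃ (x' : V) (q : G.Walk x' x), G.dist s x' = ℓ ∧ q.length + ℓ = G.dist s x ∧
        ∀ w ∈ q.support, ℓ ≤ G.dist s w by
    intro x hx; exact h _ x rfl hx
  intro n
  induction n with
  | zero =>
      intro x hn hx
      refine ⟨x, Walk.nil, by omega, by simp; omega, ?_⟩
      intro w hw
      simp only [Walk.support_nil, List.mem_singleton] at hw
      subst hw; exact hx
  | succ n ih =>
      intro x hn hx
      obtain ⟨p, hp⟩ := hG.exists_walk_length_eq_dist s x
      have hlen : 0 < p.reverse.length := by
        rw [Walk.length_reverse, hp]; omega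
      cases hpr : p.reverse with
      | nil => rw [hpr] at hlen; simp at hlen
      | @cons _ b _ hadj q =>
          have hql : q.length = G.dist s x - 1 := by
            have hpl : p.reverse.length = G.dist s x := by rw [Walk.length_reverse, hp]
            rw [hpr] at hpl
            simp only [Walk.length_cons] at hpl
            omega
          have hdb1 : G.dist b s ≤ G.dist s x - 1 := by
            have := SimpleGraph.dist_le q
            omega
          have hdb2 : G.dist s b = G.dist s x - 1 := by
            have h1 : G.dist s x ≤ G.dist s b + G.dist b x := hG.dist_triangle
            have h2 : G.dist b x ≤ 1 := by
              simpa using SimpleGraph.dist_le (Walk.cons hadj.symm Walk.nil)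
            have h3 : G.dist s b = G.dist b s := SimpleGraph.dist_comm
            omega
          obtain ⟨x', q', hq1, hq2, hq3⟩ := ih b (by omega) (by omega)
          refine ⟨x', q'.concat hadj.symm, hq1, ?_, ?_⟩
          · rw [Walk.length_concat]; omega
          · intro w hw
            rw [Walk.support_concat] at hw
            rcases List.mem_append.1 hw with h | h
            · exact hq3 w h
            · simp only [List.mem_singleton] at h
              subst h; omega

lemma dist_le_clusterDiam [Fintype V] {s x y : V} (h : SameCluster G s x y) :
    G.dist x y ≤ clusterDiam G s := by
  classical
  have hle : (if SameCluster G s x y then G.dist x y else 0) ≤ clusterDiam G s := by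
    have := Finset.le_sup (f := fun p : V × V =>
      if SameCluster G s p.1 p.2 then G.dist p.1 p.2 else 0) (Finset.mem_univ (x, y))
    exact this
  rwa [if_pos h] at hle

/-- `gI` approximates the graph distance up to the cluster-diameter. -/
lemma dist_le_gI_add [Fintype V] (hG : G.Connected) (s x y : V) :
    (G.dist x y : ℤ) ≤ gI G s x y + (clusterDiam G s : ℤ) := by
  obtain ⟨p, hp⟩ := fm_spec hG s x y
  obtain ⟨x', qx, hx1, hx2, hx3⟩ := descend hG s (fm G s x y) x (fm_le_left s x y)
  obtain ⟨y', qy, hy1, hy2, hy3⟩ := descend hG s (fm G s x y) y (fm_le_right hG s x y)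
  have hsame : SameCluster G s x' y' := by
    refine ⟨by rw [hx1, hy1], ⟨(qx.append p).append qy.reverse, ?_⟩⟩
    intro w hw
    rw [hx1]
    rcases (Walk.mem_support_append_iff _ _).1 hw with h | h
    · rcases (Walk.mem_support_append_iff _ _).1 h with h' | h'
      · exact hx3 w h'
      · exact hp w h'
    · exact hy3 w (by simpa using h)
  have hc := dist_le_clusterDiam hsame
  have t1 : G.dist x y ≤ G.dist x x' + G.dist x' y := hG.dist_triangle
  have t2 : G.dist x' y ≤ G.dist x' y' + G.dist y' y := hG.dist_triangle
  have d1 : G.dist x x' ≤ qx.length := by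
    have hle := SimpleGraph.dist_le qx.reverse
    have hcomm : G.dist x x' = G.dist x' x := SimpleGraph.dist_comm
    rw [Walk.length_reverse] at hle
    omega
  have d2 : G.dist y' y ≤ qy.length := SimpleGraph.dist_le qy
  simp only [gI]
  omega

/-- Four-point ("0-hyperbolicity") inequality for the meet levels. -/
lemma fm_hyp (hG : G.Connected) (s t a b c : V) :
    min (fm G s a b + fm G s t c) (fm G s b c + fm G s t a) ≤ fm G s a c + fm G s t b := by
  have u1 : min (fm G s a b) (fm G s b c) ≤ fm G s a c := fm_ultra hG s a b c
  have u2 : min (fm G s t a) (fm G s a b) ≤ fm G s t b := fm_ultra hG s t a b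
  have u3 : min (fm G s t c) (fm G s c b) ≤ fm G s t b := fm_ultra hG s t c b
  have u7 : min (fm G s t a) (fm G s t c) ≤ fm G s a c := by
    have hu := fm_ultra hG s a t c
    have hc : fm G s a t = fm G s t a := fm_comm hG s a t
    omega
  have hcb : fm G s c b = fm G s b c := fm_comm hG s c b
  omega

/-- Walks whose vertices are all `gI`-far from `t` witness a large Gromov product at `t`. -/
lemma chain (hG : G.Connected) (s t : V) (K : ℤ) :
    ∀ {u v : V} (p : G.Walk u v), (∀ w ∈ p.support, K ≤ gI G s t w) →
      2 * K ≤ gI G s t u + gI G s t v - gI G s u v := by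
  intro u v p
  induction p with
  | nil =>
      intro h
      have h0 := h _ (Walk.start_mem_support _)
      rw [gI_self]
      omega
  | @cons a b c hadj q ih =>
      intro h
      have ha : K ≤ gI G s t a := h _ (Walk.start_mem_support _)
      have hb : K ≤ gI G s t b := h b (by simp [Walk.support_cons, q.start_mem_support])
      have IH := ih (fun w hw => h w (by simp [Walk.support_cons, hw]))
      have hab : gI G s a b ≤ 1 := by
        have hmin : min (G.dist s a) (G.dist s b) ≤ fm G s a b := fm_adj hadj
        have e1 : G.dist s a ≤ G.dist s b + G.dist b a := hG.dist_triangle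
        have e2 : G.dist s b ≤ G.dist s a + G.dist a b := hG.dist_triangle
        have e3 : G.dist b a ≤ 1 := by
          simpa using SimpleGraph.dist_le (Walk.cons hadj.symm Walk.nil)
        have e4 : G.dist a b ≤ 1 := by
          simpa using SimpleGraph.dist_le (Walk.cons hadj Walk.nil)
        simp only [gI]
        omega
      have hyp := fm_hyp hG s t a b c
      simp only [gI] at *
      omega

/-- For every finite connected graph `G`, `Δ̂(G) ≤ 3 ⬝ Δ(G)`. -/
theorem maxClusterDiam_le_three_mul_minClusterDiam {V : Type} [Fintype V]
    (G : SimpleGraph V) (hG : G.Connected) :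
    maxClusterDiam G ≤ 3 * minClusterDiam G := by
  classical
  have hne : Nonempty V := hG.nonempty
  have hrange : (Set.range fun s : V => clusterDiam G s).Nonempty := Set.range_nonempty _
  obtain ⟨s, hs⟩ := Nat.sInf_mem hrange
  have hmin : clusterDiam G s = minClusterDiam G := hs
  rw [maxClusterDiam]
  apply Finset.sup_le
  intro t _
  rw [clusterDiam]
  apply Finset.sup_le
  intro pq _
  obtain ⟨u, v⟩ := pq
  by_cases hc : SameCluster G t u v
  · simp only
    rw [if_pos hc]
    obtain ⟨hk, p, hp⟩ := hc
    have h1 : ∀ w ∈ p.support, (G.dist t u : ℤ) - (clusterDiam G s : ℤ) ≤ gI G s t w := by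
      intro w hw
      have hA := dist_le_gI_add hG s t w
      have hB : G.dist t u ≤ G.dist t w := hp w hw
      have hB' : (G.dist t u : ℤ) ≤ (G.dist t w : ℤ) := by exact_mod_cast hB
      omega
    have h2 := chain hG s t ((G.dist t u : ℤ) - (clusterDiam G s : ℤ)) p h1
    have h3 : gI G s t u ≤ (G.dist t u : ℤ) := gI_le_dist hG s t u
    have h4 : gI G s t v ≤ (G.dist t u : ℤ) := by
      rw [hk]; exact gI_le_dist hG s t v
    have h5 : (G.dist u v : ℤ) ≤ gI G s u v + (clusterDiam G s : ℤ) :=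
      dist_le_gI_add hG s u v
    have hfinal : (G.dist u v : ℤ) ≤ 3 * (clusterDiam G s : ℤ) := by omega
    have hnat : G.dist u v ≤ 3 * clusterDiam G s := by exact_mod_cast hfinal
    omega
  · simp only
    rw [if_neg hc]
    exact Nat.zero_le _
end

section
/- For every finite connected simple graph G, the slimness of G is at most ⌊Δ̂(G)/2⌋, where Δ̂(G) is the maximum cluster-diameter over all layering partitions of G. -/
open SimpleGraph

/-- A walk is a geodesic (shortest path) if its length equals the distance
between its endpoints. -/
def IsGeodesic {V : Type} (G : SimpleGraph V) {x y : V} (p : G.Walk x y) : Prop :=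
  p.length = G.dist x y

/-- `G` is `δ`-slim: in every geodesic triangle, every vertex on one side is within
distance `δ` (in `G`) from the union of the other two sides. -/
def IsSlim {V : Type} (G : SimpleGraph V) (δ : ℕ) : Prop :=
  ∀ (x y z : V) (pxy : G.Walk x y) (pxz : G.Walk x z) (pyz : G.Walk y z),
    IsGeodesic G pxy → IsGeodesic G pxz → IsGeodesic G pyz →
    ∀ u ∈ pxy.support, ∃ v, (v ∈ pxz.support ∨ v ∈ pyz.support) ∧ G.dist u v ≤ δ

/-- The slimness `sl(G)`: the smallest `δ` such that `G` is `δ`-slim. -/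
noncomputable def slimness {V : Type} (G : SimpleGraph V) : ℕ :=
  sInf {δ : ℕ | IsSlim G δ}

/-- crossing lemma: on a walk from a far vertex to a near one, there is a prefix
staying at distance ≥ n from s and ending exactly at layer n. -/
lemma crossing_lemma {V : Type} {G : SimpleGraph V} (hG : G.Connected) (s : V) :
    ∀ {v w : V} (W : G.Walk v w) (n : ℕ), G.dist s w < n → n ≤ G.dist s v →
    ∃ (a : V) (W' : G.Walk v a), G.dist s a = n ∧
      (∀ t ∈ W'.support, n ≤ G.dist s t) ∧ a ∈ W.support := by
  intro v w W
  induction W with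
  | nil => intro n h1 h2; omega
  | @cons v v₁ w h W₀ ih =>
    intro n h1 h2
    by_cases hn : n ≤ G.dist s v₁
    · obtain ⟨a, W', ha, hsup, hmem⟩ := ih n h1 hn
      refine ⟨a, Walk.cons h W', ha, ?_, ?_⟩
      · intro t ht
        rw [Walk.support_cons, List.mem_cons] at ht
        rcases ht with rfl | ht
        · exact h2
        · exact hsup t ht
      · rw [Walk.support_cons]; exact List.mem_cons_of_mem _ hmem
    · push_neg at hn
      have hadj : G.dist v₁ v ≤ 1 := by
        have := SimpleGraph.dist_le (Walk.cons h.symm Walk.nil)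
        simpa using this
      have htri : G.dist s v ≤ G.dist s v₁ + G.dist v₁ v := hG.dist_triangle
      have hv : G.dist s v = n := by omega
      refine ⟨v, Walk.nil, hv, ?_, Walk.start_mem_support _⟩
      intro t ht
      simp only [Walk.support_nil, List.mem_singleton] at ht
      subst ht; omega

/-- on a geodesic walk, distances to the endpoints add up for each support vertex. -/
lemma geo_support_add {V : Type} {G : SimpleGraph V} (hG : G.Connected) {x u : V}
    (q : G.Walk x u) (hq : q.length = G.dist x u) {w : V} (hw : w ∈ q.support) :
    G.dist x w + G.dist w u = G.dist x u := by
  classical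
  have h1 : G.dist x w ≤ (q.takeUntil w hw).length := SimpleGraph.dist_le _
  have h2 : G.dist w u ≤ (q.dropUntil w hw).length := SimpleGraph.dist_le _
  have hlen : (q.takeUntil w hw).length + (q.dropUntil w hw).length = q.length := by
    rw [← Walk.length_append, q.take_spec hw]
  have htri : G.dist x u ≤ G.dist x w + G.dist w u := hG.dist_triangle
  omega

/-- For every finite connected graph `G`, `sl(G) ≤ ⌊Δ̂(G)/2⌋`. -/
theorem slimness_le_maxClusterDiam_div_two {V : Type} [Fintype V]
    (G : SimpleGraph V) (hG : G.Connected) :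
    slimness G ≤ maxClusterDiam G / 2 := by
  classical
  set Δ := maxClusterDiam G with hΔdef
  apply Nat.sInf_le
  intro x y z pxy pxz pyz hxy hxz hyz u hu
  set r := Δ / 2 with hr
  by_contra hcon
  push_neg at hcon
  have hcon' : ∀ v, (v ∈ pxz.support ∨ v ∈ pyz.support) → r + 1 ≤ G.dist u v := by
    intro v hv
    have := hcon v hv; omega
  -- split pxy at u
  set q1 := pxy.takeUntil u hu with hq1
  set q2 := pxy.dropUntil u hu with hq2
  have hlen : q1.length + q2.length = pxy.length := by
    rw [← Walk.length_append, pxy.take_spec hu]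
  have hd1 : G.dist x u ≤ q1.length := SimpleGraph.dist_le _
  have hd2 : G.dist u y ≤ q2.length := SimpleGraph.dist_le _
  have htri : G.dist x y ≤ G.dist x u + G.dist u y := hG.dist_triangle
  have hpxy : pxy.length = G.dist x y := hxy
  have hq1geo : q1.length = G.dist x u := by omega
  have hq2geo : q2.length = G.dist u y := by omega
  have hsum : G.dist x u + G.dist u y = G.dist x y := by omega
  -- distances from u to x and y are large
  have hux : r + 1 ≤ G.dist u x := hcon' x (Or.inl pxz.start_mem_support)
  have huy : r + 1 ≤ G.dist u y := hcon' y (Or.inr pyz.start_mem_support)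
  have huu : G.dist u u = 0 := by simp
  -- find a on q1
  obtain ⟨a, W1, haD, hW1, haMem⟩ :=
    crossing_lemma hG u q1 (r + 1) (by omega) hux
  -- find b on q2.reverse
  obtain ⟨b, W2, hbD, hW2, hbMem⟩ :=
    crossing_lemma hG u q2.reverse (r + 1) (by omega) huy
  have hbMem' : b ∈ q2.support := by
    rwa [Walk.support_reverse, List.mem_reverse] at hbMem
  -- same cluster wrt u
  have hP : ∀ t ∈ ((W1.reverse.append pxz).append (pyz.reverse.append W2)).support,
      r + 1 ≤ G.dist u t := by
    intro t ht
    rw [Walk.mem_support_append_iff, Walk.mem_support_append_iff,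
      Walk.mem_support_append_iff] at ht
    rcases ht with (ht | ht) | (ht | ht)
    · rw [Walk.support_reverse, List.mem_reverse] at ht; exact hW1 t ht
    · exact hcon' t (Or.inl ht)
    · rw [Walk.support_reverse, List.mem_reverse] at ht; exact hcon' t (Or.inr ht)
    · exact hW2 t ht
  have hSame : SameCluster G u a b := by
    refine ⟨by rw [haD, hbD], ⟨(W1.reverse.append pxz).append (pyz.reverse.append W2), ?_⟩⟩
    intro w hw
    rw [haD]
    exact hP w hw
  -- d(a,b) ≤ Δ
  have hab_le : G.dist a b ≤ Δ := by
    have h1 : clusterDiam G u ≤ Δ := Finset.le_sup (Finset.mem_univ u)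
    have h2 : (if SameCluster G u a b then G.dist a b else 0) ≤ clusterDiam G u :=
      Finset.le_sup (f := fun p : V × V =>
        if SameCluster G u p.1 p.2 then G.dist p.1 p.2 else 0) (Finset.mem_univ (a, b))
    rw [if_pos hSame] at h2
    omega
  -- d(a,b) ≥ 2r+2
  have hxa : G.dist x a + G.dist a u = G.dist x u := geo_support_add hG q1 hq1geo haMem
  have hub : G.dist u b + G.dist b y = G.dist u y := geo_support_add hG q2 hq2geo hbMem'
  have hau : G.dist a u = r + 1 := by rw [G.dist_comm]; exact haD
  have htri2 : G.dist x y ≤ G.dist x a + G.dist a b + G.dist b y := by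
    have t1 : G.dist x y ≤ G.dist x a + G.dist a y := hG.dist_triangle
    have t2 : G.dist a y ≤ G.dist a b + G.dist b y := hG.dist_triangle
    omega
  -- contradiction
  have : 2 * r + 2 ≤ G.dist a b := by omega
  omega
end

section
/- For every finite connected simple graph G and every vertex s of G, the slimness of G is at most ⌊(3/2)·Δ_s(G)⌋, where Δ_s(G) is the cluster-diameter of the layering partition of G with respect to s. -/
open SimpleGraph

namespace LayerAux

variable {V : Type} {G : SimpleGraph V} {s : V}

/-- `u` and `v` are connected by a walk staying at distance `≥ j` from `s`. -/
def Rel (G : SimpleGraph V) (s : V) (j : ℕ) (u v : V) : Prop :=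
  ∃ p : G.Walk u v, ∀ w ∈ p.support, j ≤ G.dist s w

lemma Rel.le_left {j : ℕ} {u v : V} (h : Rel G s j u v) : j ≤ G.dist s u := by
  obtain ⟨p, hp⟩ := h; exact hp u p.start_mem_support

lemma Rel.le_right {j : ℕ} {u v : V} (h : Rel G s j u v) : j ≤ G.dist s v := by
  obtain ⟨p, hp⟩ := h; exact hp v p.end_mem_support

lemma Rel.symm {j : ℕ} {u v : V} (h : Rel G s j u v) : Rel G s j v u := by
  obtain ⟨p, hp⟩ := h
  exact ⟨p.reverse, fun w hw => hp w (by simpa [Walk.support_reverse] using hw)⟩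

lemma Rel.trans {j : ℕ} {u v w : V} (h1 : Rel G s j u v) (h2 : Rel G s j v w) :
    Rel G s j u w := by
  obtain ⟨p, hp⟩ := h1; obtain ⟨q, hq⟩ := h2
  refine ⟨p.append q, fun x hx => ?_⟩
  rcases (Walk.mem_support_append_iff p q).mp hx with h | h
  · exact hp x h
  · exact hq x h

lemma Rel.mono {j k : ℕ} (hjk : j ≤ k) {u v : V} (h : Rel G s k u v) : Rel G s j u v := by
  obtain ⟨p, hp⟩ := h; exact ⟨p, fun w hw => le_trans hjk (hp w hw)⟩

/-- the highest level at which `u` and `v` are "same cluster"-related. -/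
noncomputable def mm (G : SimpleGraph V) (s u v : V) : ℕ := sSup {j | Rel G s j u v}

lemma rel_zero (hG : G.Connected) (u v : V) : Rel G s 0 u v :=
  ⟨(hG.preconnected u v).some, fun _ _ => Nat.zero_le _⟩

lemma bddAbove_rel (u v : V) : BddAbove {j | Rel G s j u v} :=
  ⟨G.dist s u, fun _ hj => Rel.le_left hj⟩

lemma rel_mm (hG : G.Connected) (u v : V) : Rel G s (mm G s u v) u v :=
  Nat.sSup_mem ⟨0, rel_zero hG u v⟩ (bddAbove_rel u v)

lemma le_mm {j : ℕ} {u v : V} (h : Rel G s j u v) : j ≤ mm G s u v :=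
  le_csSup (bddAbove_rel u v) h

lemma mm_le_left (hG : G.Connected) (u v : V) : mm G s u v ≤ G.dist s u :=
  (rel_mm hG u v).le_left

lemma mm_le_right (hG : G.Connected) (u v : V) : mm G s u v ≤ G.dist s v :=
  (rel_mm hG u v).le_right

lemma mm_symm (hG : G.Connected) (u v : V) : mm G s u v = mm G s v u :=
  le_antisymm (le_mm (rel_mm hG u v).symm) (le_mm (rel_mm hG v u).symm)

lemma min_mm_le (hG : G.Connected) (u w v : V) :
    min (mm G s u w) (mm G s w v) ≤ mm G s u v := by
  exact le_mm (Rel.trans (Rel.mono (min_le_left _ _) (rel_mm hG u w))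
    (Rel.mono (min_le_right _ _) (rel_mm hG w v)))


/-- Lemma A: `f u + f v ≤ 2 m(u,v) + d(u,v)`. -/
lemma dist_s_pair_le (hG : G.Connected) (u v : V) :
    G.dist s u + G.dist s v ≤ 2 * mm G s u v + G.dist u v := by
  classical
  obtain ⟨p, hp⟩ := hG.exists_walk_length_eq_dist u v
  obtain ⟨w, hw, hmin⟩ := p.support.toFinset.exists_min_image (fun x => G.dist s x)
    ⟨u, by simp [List.mem_toFinset]⟩
  rw [List.mem_toFinset] at hw
  have hrel : Rel G s (G.dist s w) u v :=
    ⟨p, fun x hx => hmin x (List.mem_toFinset.mpr hx)⟩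
  have h1 : G.dist s u ≤ G.dist s w + G.dist w u := hG.dist_triangle
  have h2 : G.dist s v ≤ G.dist s w + G.dist w v := hG.dist_triangle
  have h3 := congrArg Walk.length (p.take_spec hw)
  rw [Walk.length_append] at h3
  have h4 : G.dist u w ≤ (p.takeUntil w hw).length := dist_le _
  have h5 : G.dist w v ≤ (p.dropUntil w hw).length := dist_le _
  have h6 : G.dist s w ≤ mm G s u v := le_mm hrel
  have h7 : G.dist w u = G.dist u w := dist_comm
  omega

/-- descend from `u` along a geodesic towards `t`, to any prescribed level `m`. -/
lemma descend (hG : G.Connected) : ∀ {u t : V} (p : G.Walk u t), p.length = G.dist t u →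
    ∀ m, m ≤ G.dist t u → ∃ (w : V) (q : G.Walk u w),
      G.dist t w = m ∧ (∀ x ∈ q.support, m ≤ G.dist t x) ∧ q.length + m = G.dist t u := by
  intro u t p
  induction p with
  | @nil a =>
    intro hp m hm
    have hs : G.dist a a = 0 := by simp
    have hm0 : m = 0 := by omega
    refine ⟨a, Walk.nil, by omega, by simp [hm0], by simp [hm0, hs]⟩
  | @cons a b c hadj p ih =>
    intro hp m hm
    simp only [Walk.length_cons] at hp
    have hab : G.dist b a = 1 := dist_eq_one_iff_adj.mpr hadj.symm
    have htri : G.dist c a ≤ G.dist c b + G.dist b a := hG.dist_triangle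
    have hba : G.dist c b ≤ p.length := by
      have := dist_le p
      rwa [SimpleGraph.dist_comm] at this
    have hb : G.dist c b + 1 = G.dist c a := by omega
    rcases Nat.eq_or_lt_of_le hm with he | hlt
    · refine ⟨a, Walk.nil, by omega, ?_, by simpa using he⟩
      intro x hx
      rcases (by simpa using hx : x = a) with rfl
      omega
    · have hmb : m ≤ G.dist c b := by omega
      obtain ⟨w, q, h1, h2, h3⟩ := ih (by omega) m hmb
      refine ⟨w, Walk.cons hadj q, h1, ?_, by simpa using by omega⟩
      intro x hx
      rcases (by simpa using hx : x = a ∨ x ∈ q.support) with rfl | hx'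
      · omega
      · exact h2 x hx'

lemma sameCluster_le_clusterDiam [Fintype V] {w w' : V} (h : SameCluster G s w w') :
    G.dist w w' ≤ clusterDiam G s := by
  classical
  have hle := Finset.le_sup (f := fun p : V × V =>
    if SameCluster G s p.1 p.2 then G.dist p.1 p.2 else 0)
    (Finset.mem_univ (w, w'))
  simp only [if_pos h] at hle
  exact le_trans hle (le_of_eq rfl)

/-- Lemma B: `d(u,v) + 2 m(u,v) ≤ f u + f v + Δ`. -/
lemma dist_pair_le [Fintype V] (hG : G.Connected) (u v : V) :
    G.dist u v + 2 * mm G s u v ≤ G.dist s u + G.dist s v + clusterDiam G s := by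
  obtain ⟨W, hW⟩ := rel_mm hG u v
  obtain ⟨pu, hpu⟩ := hG.exists_walk_length_eq_dist u s
  obtain ⟨pv, hpv⟩ := hG.exists_walk_length_eq_dist v s
  rw [SimpleGraph.dist_comm] at hpu hpv
  obtain ⟨w, q, h1, h2, h3⟩ := descend hG pu hpu (mm G s u v) (mm_le_left (s := s) hG u v)
  obtain ⟨w', q', h1', h2', h3'⟩ := descend hG pv hpv (mm G s u v) (mm_le_right (s := s) hG u v)
  have hsc : SameCluster G s w w' := by
    refine ⟨by rw [h1, h1'], ⟨(q.reverse.append W).append q', fun x hx => ?_⟩⟩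
    rw [h1]
    rcases (Walk.mem_support_append_iff _ _).mp hx with hx' | hx'
    · rcases (Walk.mem_support_append_iff _ _).mp hx' with hx'' | hx''
      · exact h2 x (by simpa [Walk.support_reverse] using hx'')
      · exact hW x hx''
    · exact h2' x hx'
  have hd : G.dist w w' ≤ clusterDiam G s := sameCluster_le_clusterDiam hsc
  have t1 : G.dist u v ≤ G.dist u w + G.dist w v := hG.dist_triangle
  have t2 : G.dist w v ≤ G.dist w w' + G.dist w' v := hG.dist_triangle
  have t3 : G.dist u w ≤ q.length := dist_le q
  have t4 : G.dist w' v ≤ q'.length := by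
    have := dist_le q'
    rwa [SimpleGraph.dist_comm] at this
  omega

/-- discrete intermediate value: on any walk from `c` to `c'`, if `m(c,c') ≤ ℓ ≤ f c`,
there is a vertex `v` at level exactly `ℓ` with `Rel ℓ c v`. -/
lemma ivt (hG : G.Connected) : ∀ {c c' : V} (W : G.Walk c c') (ℓ : ℕ),
    mm G s c c' ≤ ℓ → ℓ ≤ G.dist s c →
    ∃ v ∈ W.support, G.dist s v = ℓ ∧ Rel G s ℓ c v := by
  intro c c' W
  induction W with
  | @nil a =>
    intro ℓ h1 h2
    have : G.dist s a ≤ mm G s a a := le_mm ⟨Walk.nil, by simp⟩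
    have he : G.dist s a = ℓ := by omega
    exact ⟨a, by simp, he, ⟨Walk.nil, by simp [he]⟩⟩
  | @cons a b c' hadj p ih =>
    intro ℓ h1 h2
    by_cases hc : G.dist s a = ℓ
    · exact ⟨a, by simp, hc, ⟨Walk.nil, by simp [hc.ge]⟩⟩
    · have hlt : ℓ < G.dist s a := lt_of_le_of_ne h2 (Ne.symm hc)
      have htri : G.dist s a ≤ G.dist s b + G.dist b a := hG.dist_triangle
      have hab : G.dist b a = 1 := dist_eq_one_iff_adj.mpr hadj.symm
      have hb : ℓ ≤ G.dist s b := by omega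
      have hmb : mm G s b c' ≤ ℓ := by
        by_contra hcon
        push_neg at hcon
        obtain ⟨q, hq⟩ := rel_mm hG b c'
        have hrel : Rel G s (ℓ + 1) a c' := by
          refine ⟨Walk.cons hadj q, fun x hx => ?_⟩
          rcases (by simpa using hx : x = a ∨ x ∈ q.support) with rfl | hx'
          · omega
          · exact le_trans (by omega : ℓ + 1 ≤ mm G s b c') (hq x hx')
        have := le_mm hrel
        omega
      obtain ⟨v, hv, h3, h4⟩ := ih ℓ hmb hb
      refine ⟨v, by simp [hv], h3, ?_⟩
      refine Rel.trans ⟨Walk.cons hadj Walk.nil, fun x hx => ?_⟩ h4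
      rcases (by simpa using hx : x = a ∨ x = b) with rfl | rfl
      · omega
      · exact hb

lemma geodesic_split (hG : G.Connected) {x y u : V} (p : G.Walk x y)
    (hp : p.length = G.dist x y) (hu : u ∈ p.support) :
    G.dist x u + G.dist u y = G.dist x y := by
  classical
  have h1 : G.dist x u ≤ (p.takeUntil u hu).length := dist_le _
  have h2 : G.dist u y ≤ (p.dropUntil u hu).length := dist_le _
  have h3 := congrArg Walk.length (p.take_spec hu)
  rw [Walk.length_append] at h3
  have h4 : G.dist x y ≤ G.dist x u + G.dist u y := hG.dist_triangle
  omega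

/-- core lemma: assuming `m(u,y) ≤ m(x,u)`. -/
lemma core [Fintype V] (hG : G.Connected) {x y z u : V}
    (hsplit : G.dist x u + G.dist u y = G.dist x y)
    (hαβ : mm G s u y ≤ mm G s x u)
    (pxz : G.Walk x z) (pyz : G.Walk y z) :
    ∃ v, (v ∈ pxz.support ∨ v ∈ pyz.support) ∧
      2 * G.dist u v ≤ 3 * clusterDiam G s := by
  have hA1 : G.dist s x + G.dist s u ≤ 2 * mm G s x u + G.dist x u := dist_s_pair_le hG x u
  have hA2 : G.dist s u + G.dist s y ≤ 2 * mm G s u y + G.dist u y := dist_s_pair_le hG u y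
  have hB : G.dist x y + 2 * mm G s x y ≤ G.dist s x + G.dist s y + clusterDiam G s :=
    dist_pair_le hG x y
  -- ultrametric inequalities
  have hu1 : min (mm G s x u) (mm G s u y) ≤ mm G s x y := min_mm_le hG x u y
  have hu2 : min (mm G s x u) (mm G s x y) ≤ mm G s u y := by
    have h := min_mm_le (s := s) hG u x y
    rwa [mm_symm (s := s) hG u x] at h
  -- key quantitative inequality
  have hKey : 2 * G.dist s u + 2 * max (mm G s x u) (mm G s x y)
      ≤ 4 * mm G s x u + clusterDiam G s := by omega
  have hℓx : max (mm G s x u) (mm G s x y) ≤ G.dist s x := by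
    have h1 := mm_le_left (s := s) hG x u
    have h2 := mm_le_left (s := s) hG x y
    omega
  have hαu : mm G s x u ≤ G.dist s u := mm_le_right (s := s) hG x u
  -- find the target vertex v on one of the two sides
  have hfind : ∃ v, (v ∈ pxz.support ∨ v ∈ pyz.support) ∧
      G.dist s v = max (mm G s x u) (mm G s x y) ∧ mm G s x u ≤ mm G s u v := by
    rcases le_or_gt (mm G s x z) (max (mm G s x u) (mm G s x y)) with hcase | hcase
    · obtain ⟨v, hv, hfv, hrel⟩ := ivt hG pxz _ hcase hℓx
      refine ⟨v, Or.inl hv, hfv, ?_⟩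
      have h5 := le_mm hrel
      have h6 := min_mm_le (s := s) hG u x v
      rw [mm_symm (s := s) hG u x] at h6
      omega
    · -- use the side from z to y
      have hu3 : min (mm G s x z) (mm G s z y) ≤ mm G s x y := min_mm_le hG x z y
      have hτ : mm G s z y ≤ max (mm G s x u) (mm G s x y) := by omega
      have hz : max (mm G s x u) (mm G s x y) ≤ G.dist s z :=
        le_trans (le_of_lt hcase) (mm_le_right (s := s) hG x z)
      obtain ⟨v, hv, hfv, hrel⟩ := ivt hG pyz.reverse _ hτ hz
      refine ⟨v, Or.inr (by simpa [Walk.support_reverse] using hv), hfv, ?_⟩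
      have h5 := le_mm hrel
      have h6 := min_mm_le (s := s) hG x z v
      have h7 := min_mm_le (s := s) hG u x v
      rw [mm_symm (s := s) hG u x] at h7
      omega
  obtain ⟨v, hv, hfv, hmuv⟩ := hfind
  have hB2 : G.dist u v + 2 * mm G s u v ≤ G.dist s u + G.dist s v + clusterDiam G s :=
    dist_pair_le hG u v
  exact ⟨v, hv, by omega⟩

end LayerAux

/-- For every finite connected graph `G` and every vertex `s`,
`sl(G) ≤ ⌊(3/2) ⬝ Δ_s(G)⌋`. -/
theorem slimness_le_three_mul_clusterDiam_div_two {V : Type} [Fintype V]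
    (G : SimpleGraph V) (hG : G.Connected) (s : V) :
    slimness G ≤ 3 * clusterDiam G s / 2 := by
  apply Nat.sInf_le
  intro x y z pxy pxz pyz hxy _ _ u hu
  have hsplit : G.dist x u + G.dist u y = G.dist x y :=
    LayerAux.geodesic_split hG pxy hxy hu
  rcases le_total (LayerAux.mm G s u y) (LayerAux.mm G s x u) with h | h
  · obtain ⟨v, hv, hd⟩ := LayerAux.core hG hsplit h pxz pyz
    exact ⟨v, hv, by omega⟩
  · have hsplit' : G.dist y u + G.dist u x = G.dist y x := by
      rw [SimpleGraph.dist_comm (u := y) (v := u), SimpleGraph.dist_comm (u := u) (v := x),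
        SimpleGraph.dist_comm (u := y) (v := x)]
      omega
    have h' : LayerAux.mm G s u x ≤ LayerAux.mm G s y u := by
      rwa [LayerAux.mm_symm hG u x, LayerAux.mm_symm hG y u]
    obtain ⟨v, hv, hd⟩ := LayerAux.core hG hsplit' h' pyz pxz
    exact ⟨v, hv.symm, by omega⟩
end

section
/- For every finite connected simple graph G, the slimness of G is at most ⌊(3/2)·tl(G)⌋, where tl(G) is the tree-length of G. -/
open SimpleGraph

/-- A tree-decomposition of `G` with index type `ι`: a tree `T` on `ι` and bags
covering all vertices and edges, such that for any node `j` on the path of `T`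
between nodes `i` and `k`, the bag of `j` contains the intersection of the bags
of `i` and `k`. -/
structure TreeDecomp {V : Type} (G : SimpleGraph V) (ι : Type) where
  /-- the decomposition tree -/
  T : SimpleGraph ι
  isTree : T.IsTree
  /-- the bags -/
  bag : ι → Set V
  covers_vertex : ∀ v : V, ∃ i, v ∈ bag i
  covers_edge : ∀ ⦃u v : V⦄, G.Adj u v → ∃ i, u ∈ bag i ∧ v ∈ bag i
  path_inter : ∀ (i j k : ι) (p : T.Walk i k), p.IsPath → j ∈ p.support →
      bag i ∩ bag k ⊆ bag j

/-- `G` admits a tree-decomposition of length at most `lam`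
(every bag has diameter at most `lam` in `G`). -/
def HasTreeDecompOfLength {V : Type} (G : SimpleGraph V) (lam : ℕ) : Prop :=
  ∃ (ι : Type) (_ : Fintype ι) (td : TreeDecomp G ι),
    ∀ i, ∀ u ∈ td.bag i, ∀ v ∈ td.bag i, G.dist u v ≤ lam

/-- The tree-length `tl(G)`: the minimum length over all tree-decompositions of `G`. -/
noncomputable def treeLength {V : Type} (G : SimpleGraph V) : ℕ :=
  sInf {lam : ℕ | HasTreeDecompOfLength G lam}

attribute [local instance] Classical.propDecidable

namespace TreeDecomp
variable {V ι : Type} {G : SimpleGraph V} (td : TreeDecomp G ι)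

noncomputable def pth (a b : ι) : td.T.Walk a b :=
  (td.isTree.existsUnique_path a b).choose

lemma pth_isPath (a b : ι) : (td.pth a b).IsPath :=
  (td.isTree.existsUnique_path a b).choose_spec.1

lemma pth_eq {a b : ι} (p : td.T.Walk a b) (hp : p.IsPath) : p = td.pth a b :=
  ((td.isTree.existsUnique_path a b).choose_spec.2 p hp).trans rfl

lemma pth_support_subset {a b : ι} (w : td.T.Walk a b) :
    (td.pth a b).support ⊆ w.support := by
  intro v hv
  have h := td.pth_eq w.bypass w.bypass_isPath
  exact w.support_bypass_subset (h ▸ hv)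

lemma bag_pth {v : V} {i k : ι} (hi : v ∈ td.bag i) (hk : v ∈ td.bag k) :
    ∀ j ∈ (td.pth i k).support, v ∈ td.bag j :=
  fun j hj => td.path_inter i j k _ (td.pth_isPath i k) hj ⟨hi, hk⟩

lemma mem_pth_concat {v t s : ι} (hadj : td.T.Adj t s)
    (hns : s ∉ (td.pth v t).support) : t ∈ (td.pth v s).support := by
  have hp : ((td.pth v t).concat hadj).IsPath := by
    rw [Walk.isPath_def, Walk.support_concat,
      List.nodup_append]
    refine ⟨(td.pth_isPath v t).support_nodup, List.nodup_singleton s, ?_⟩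
    intro a ha b hb hab
    rw [List.mem_singleton] at hb
    subst hb; subst hab
    exact hns ha
  rw [← td.pth_eq _ hp, Walk.support_concat,
    List.mem_append]
  exact Or.inl (Walk.end_mem_support _)

lemma not_mem_pth_take {k s t : ι} (hne : s ≠ t)
    (h : t ∈ (td.pth k s).support) : s ∉ (td.pth k t).support := by
  have heq : (td.pth k s).takeUntil t h = td.pth k t :=
    td.pth_eq _ ((td.pth_isPath k s).takeUntil h)
  rw [← heq]
  intro hs
  have hnd := (td.pth_isPath k s).support_nodup
  rw [← Walk.take_spec (td.pth k s) h, Walk.support_append,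
    List.nodup_append] at hnd
  refine hnd.2.2 s hs s ?_ rfl
  have hse : s ∈ ((td.pth k s).dropUntil t h).support := Walk.end_mem_support _
  rw [Walk.support_eq_cons, List.mem_cons] at hse
  rcases hse with hse | hse
  · exact absurd hse hne
  · exact hse

/-- side lemma: vertices on the path to `s` missing `t` also miss `t`. -/
lemma side_not {j s t v : ι} (hv : v ∈ (td.pth j s).support)
    (hj : t ∉ (td.pth j s).support) : t ∉ (td.pth v s).support := by
  have heq : (td.pth j s).dropUntil v hv = td.pth v s :=
    td.pth_eq _ ((td.pth_isPath j s).dropUntil hv)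
  intro ht
  exact hj (Walk.support_dropUntil_subset _ hv (heq ▸ ht))

lemma side_mem {k s t v : ι} (hst : td.T.Adj s t)
    (hv : v ∈ (td.pth k t).support) (hk : s ∉ (td.pth k t).support) :
    t ∈ (td.pth v s).support := by
  have heq : (td.pth k t).dropUntil v hv = td.pth v t :=
    td.pth_eq _ ((td.pth_isPath k t).dropUntil hv)
  refine td.mem_pth_concat hst.symm ?_
  intro hs
  exact hk (Walk.support_dropUntil_subset _ hv (heq ▸ hs))

lemma cross {s t j k : ι} (hst : td.T.Adj s t)
    (hj : t ∉ (td.pth j s).support) (hk : t ∈ (td.pth k s).support) :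
    s ∈ (td.pth j k).support ∧ t ∈ (td.pth j k).support := by
  have hkt : s ∉ (td.pth k t).support := td.not_mem_pth_take hst.ne hk
  set P1 := td.pth j s with hP1
  set P2 := td.pth k t with hP2
  set W : td.T.Walk j k := P1.append (Walk.cons hst P2.reverse) with hW
  have hsupp : W.support = P1.support ++ P2.reverse.support := by
    rw [hW, Walk.support_append, Walk.support_cons]
    rfl
  have hWpath : W.IsPath := by
    rw [Walk.isPath_def, hsupp, List.nodup_append]
    refine ⟨(td.pth_isPath j s).support_nodup, ?_, ?_⟩
    · exact ((td.pth_isPath k t).reverse).support_nodup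
    · intro a ha b hb hab
      subst hab
      rw [Walk.support_reverse, List.mem_reverse] at hb
      exact td.side_not ha hj (td.side_mem hst hb hkt)
  have heq : W = td.pth j k := td.pth_eq _ hWpath
  constructor
  · rw [← heq, hsupp, List.mem_append]
    exact Or.inl (Walk.end_mem_support _)
  · rw [← heq, hsupp, List.mem_append]
    refine Or.inr ?_
    rw [Walk.support_reverse, List.mem_reverse]
    exact Walk.end_mem_support _

end TreeDecomp

namespace TreeDecomp
variable {V ι : Type} {G : SimpleGraph V} (td : TreeDecomp G ι)

/-- Separator lemma: if `u`'s bags are all on the `s`-side of the tree edge `st`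
and some bag of `x` is on the `t`-side, then every `G`-walk from `u` to `x`
meets `bag s ∩ bag t`. -/
lemma separator {s t : ι} (hst : td.T.Adj s t) {x : V} :
    ∀ {u : V} (W : G.Walk u x),
      (∃ k, x ∈ td.bag k ∧ t ∈ (td.pth k s).support) →
      (∀ k, u ∈ td.bag k → t ∉ (td.pth k s).support) →
      ∃ v ∈ W.support, v ∈ td.bag s ∧ v ∈ td.bag t := by
  intro u W
  induction W with
  | nil =>
    intro hx hu
    obtain ⟨k, hk1, hk2⟩ := hx
    exact absurd hk2 (hu k hk1)
  | @cons u u' _ h q ih =>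
    intro hx hu
    by_cases hc : ∃ k, u' ∈ td.bag k ∧ t ∈ (td.pth k s).support
    · obtain ⟨k', hk'1, hk'2⟩ := hc
      obtain ⟨jb, hjb1, hjb2⟩ := td.covers_edge h
      have hjbt : t ∉ (td.pth jb s).support := hu jb hjb1
      obtain ⟨hs', ht'⟩ := td.cross hst hjbt hk'2
      refine ⟨u', ?_, td.bag_pth hjb2 hk'1 s hs', td.bag_pth hjb2 hk'1 t ht'⟩
      rw [Walk.support_cons]
      exact List.mem_cons_of_mem _ (Walk.start_mem_support _)
    · push_neg at hc
      obtain ⟨v, hv1, hv2⟩ := ih hx fun k hk ht => hc k hk ht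
      refine ⟨v, ?_, hv2⟩
      rw [Walk.support_cons]
      exact List.mem_cons_of_mem _ hv1

/-- Connectivity of the union of bag-subtrees over a connected set of vertices. -/
lemma pth_subset_S (A : Set V) {w2 : V} {j2 : ι} :
    ∀ {w1 : V} (W : G.Walk w1 w2), w2 ∈ td.bag j2 → (∀ v ∈ W.support, v ∈ A) →
      ∀ {j1}, w1 ∈ td.bag j1 →
      ∀ j ∈ (td.pth j1 j2).support, ∃ w ∈ A, w ∈ td.bag j := by
  intro w1 W
  induction W with
  | nil =>
    intro h2 hW j1 h1 j hj
    exact ⟨_, hW _ (Walk.start_mem_support _), td.bag_pth h1 h2 j hj⟩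
  | @cons w w' _ h q ih =>
    intro h2 hW j1 h1 j hj
    obtain ⟨m, hm1, hm2⟩ := td.covers_edge h
    have hsub : (td.pth j1 j2).support ⊆
        ((td.pth j1 m).append (td.pth m j2)).support :=
      td.pth_support_subset _
    rcases (Walk.mem_support_append_iff _ _).mp (hsub hj) with hj' | hj'
    · exact ⟨w, hW _ (Walk.start_mem_support _), td.bag_pth h1 hm1 j hj'⟩
    · refine ih h2 (fun v hv => hW v ?_) hm2 j hj'
      rw [Walk.support_cons]
      exact List.mem_cons_of_mem _ hv

/-- First vertex of a tree walk inside a set `S`. -/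
lemma first_mem (S : Set ι) {b : ι} :
    ∀ {a : ι} (ρ : td.T.Walk a b), b ∈ S → a ∉ S →
      ∃ s t, td.T.Adj s t ∧ t ∈ S ∧
        ∃ ρ1 : td.T.Walk a s, ∀ v ∈ ρ1.support, v ∉ S := by
  intro a ρ
  induction ρ with
  | nil => intro hb ha; exact absurd hb ha
  | @cons a a' _ h q ih =>
    intro hb ha
    by_cases hc : a' ∈ S
    · exact ⟨a, a', h, hc, Walk.nil, by simp [ha]⟩
    · obtain ⟨s, t, hst, htS, ρ1, hρ1⟩ := ih hb hc
      refine ⟨s, t, hst, htS, Walk.cons h ρ1, ?_⟩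
      intro v hv
      rw [Walk.support_cons, List.mem_cons] at hv
      rcases hv with rfl | hv
      · exact ha
      · exact hρ1 v hv

end TreeDecomp

/-- For every finite connected graph `G`, `sl(G)` is at most `3*tl(G)/2`. -/
lemma trivialDecomp {V : Type} [Fintype V] (G : SimpleGraph V)
    (hG : G.Connected) : {lam : ℕ | HasTreeDecompOfLength G lam}.Nonempty := by
  refine ⟨Fintype.card V, Unit, inferInstance, ?_, ?_⟩
  · refine ⟨⊥, ⟨⟨SimpleGraph.preconnected_bot⟩, ?_⟩,
      fun _ => Set.univ, fun v => ⟨(), Set.mem_univ v⟩,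
      fun u v _ => ⟨(), Set.mem_univ u, Set.mem_univ v⟩,
      fun i j k p hp hj => fun v _ => Set.mem_univ v⟩
    intro v c hc
    cases c with
    | nil => exact hc.ne_nil rfl
    | cons h q => exact h.elim
  · intro i u _ v _
    obtain ⟨W⟩ := hG.preconnected u v
    exact le_of_lt (lt_of_le_of_lt (SimpleGraph.dist_le W.bypass)
      W.bypass_isPath.length_lt)

/-- For every finite connected graph `G`, `sl(G) ≤ ⌊(3/2) ⬝ tl(G)⌋`. -/
theorem slimness_le_three_mul_treeLength_div_two {V : Type} [Fintype V]
    (G : SimpleGraph V) (hG : G.Connected) :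
    slimness G ≤ 3 * treeLength G / 2 := by
  have hmem : HasTreeDecompOfLength G (treeLength G) :=
    Nat.sInf_mem (trivialDecomp G hG)
  set lam := treeLength G with hlam
  obtain ⟨ι, _, td, hlen⟩ := hmem
  refine Nat.sInf_le ?_
  intro x y z pxy pxz pyz hxy hxz hyz u hu
  set A : Set V := {v | v ∈ pxz.support ∨ v ∈ pyz.support} with hA
  by_cases hcase : ∃ i, u ∈ td.bag i ∧ ∃ w ∈ A, w ∈ td.bag i
  · obtain ⟨i, hui, w, hwA, hwi⟩ := hcase
    exact ⟨w, hwA, le_trans (hlen i u hui w hwi) (by omega)⟩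
  · push_neg at hcase
    obtain ⟨nu, hnu⟩ := td.covers_vertex u
    obtain ⟨n0, hn0⟩ := td.covers_vertex z
    have hzA : z ∈ A := Or.inl pxz.end_mem_support
    set S : Set ι := {i | ∃ w ∈ A, w ∈ td.bag i} with hS
    have hn0S : n0 ∈ S := ⟨z, hzA, hn0⟩
    have hnuS : nu ∉ S := fun ⟨w, hwA, hw⟩ => hcase nu hnu w hwA hw
    obtain ⟨s, t, hst, htS, ρ1, hρ1⟩ := td.first_mem S (td.pth nu n0) hn0S hnuS
    have hsS : s ∉ S := hρ1 s (SimpleGraph.Walk.end_mem_support _)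
    obtain ⟨wt, hwtA, hwt⟩ := htS
    -- walks to z inside A
    have toZ : ∀ w ∈ A, ∃ Wz : G.Walk w z, ∀ v ∈ Wz.support, v ∈ A := by
      intro w hw
      rcases hw with hw | hw
      · exact ⟨pxz.dropUntil w hw, fun v hv =>
          Or.inl (SimpleGraph.Walk.support_dropUntil_subset _ hw hv)⟩
      · exact ⟨pyz.dropUntil w hw, fun v hv =>
          Or.inr (SimpleGraph.Walk.support_dropUntil_subset _ hw hv)⟩
    -- fact (a)
    have factA : ∀ k, (∃ w ∈ A, w ∈ td.bag k) → t ∈ (td.pth k s).support := by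
      rintro k ⟨wk, hwkA, hwk⟩
      obtain ⟨W1, hW1⟩ := toZ wk hwkA
      obtain ⟨W2, hW2⟩ := toZ wt hwtA
      have hWA : ∀ v ∈ (W1.append W2.reverse).support, v ∈ A := by
        intro v hv
        rcases (SimpleGraph.Walk.mem_support_append_iff _ _).mp hv with hv | hv
        · exact hW1 v hv
        · rw [SimpleGraph.Walk.support_reverse, List.mem_reverse] at hv
          exact hW2 v hv
      have hallS : ∀ j ∈ (td.pth k t).support, ∃ w ∈ A, w ∈ td.bag j :=
        td.pth_subset_S A (W1.append W2.reverse) hwt hWA hwk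
      exact td.mem_pth_concat hst.symm (fun hs => hsS (hallS s hs))
    -- fact (b)
    have factB : ∀ k, u ∈ td.bag k → t ∉ (td.pth k s).support := by
      intro k hk ht
      have hsub := td.pth_support_subset ((td.pth k nu).append ρ1) ht
      rcases (SimpleGraph.Walk.mem_support_append_iff _ _).mp hsub with h' | h'
      · exact hcase t (td.bag_pth hk hnu t h') wt hwtA hwt
      · exact hρ1 t h' ⟨wt, hwtA, hwt⟩
    set p1 := pxy.takeUntil u hu with hp1def
    set p2 := pxy.dropUntil u hu with hp2def
    have hxk : ∃ k, x ∈ td.bag k ∧ t ∈ (td.pth k s).support := by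
      obtain ⟨k, hk⟩ := td.covers_vertex x
      exact ⟨k, hk, factA k ⟨x, Or.inl pxz.start_mem_support, hk⟩⟩
    have hyk : ∃ k, y ∈ td.bag k ∧ t ∈ (td.pth k s).support := by
      obtain ⟨k, hk⟩ := td.covers_vertex y
      exact ⟨k, hk, factA k ⟨y, Or.inr pyz.start_mem_support, hk⟩⟩
    obtain ⟨p, hpmem, hps, hpt⟩ := td.separator hst p1.reverse hxk factB
    obtain ⟨q, hqmem, hqs, hqt⟩ := td.separator hst p2 hyk factB
    rw [SimpleGraph.Walk.support_reverse, List.mem_reverse] at hpmem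
    -- length bookkeeping
    have hlen1 : (p1.takeUntil p hpmem).length + (p1.dropUntil p hpmem).length
        = p1.length := by
      rw [← SimpleGraph.Walk.length_append, SimpleGraph.Walk.take_spec]
    have hlen2 : (p2.takeUntil q hqmem).length + (p2.dropUntil q hqmem).length
        = p2.length := by
      rw [← SimpleGraph.Walk.length_append, SimpleGraph.Walk.take_spec]
    have hlen0 : p1.length + p2.length = pxy.length := by
      rw [← SimpleGraph.Walk.length_append, SimpleGraph.Walk.take_spec]
    have hdxy : pxy.length = G.dist x y := hxy
    have hd1 : G.dist x p ≤ (p1.takeUntil p hpmem).length :=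
      SimpleGraph.dist_le _
    have hd2 : G.dist p u ≤ (p1.dropUntil p hpmem).length :=
      SimpleGraph.dist_le _
    have hd3 : G.dist u q ≤ (p2.takeUntil q hqmem).length :=
      SimpleGraph.dist_le _
    have hd4 : G.dist q y ≤ (p2.dropUntil q hqmem).length :=
      SimpleGraph.dist_le _
    have tri : G.dist x y ≤ G.dist x p + G.dist p q + G.dist q y :=
      le_trans (hG.dist_triangle (v := p))
        (by
          have := hG.dist_triangle (u := p) (v := q) (w := y)
          omega)
    have hpq : G.dist p q ≤ lam := hlen s p hps q hqs
    have hsum : G.dist p u + G.dist u q ≤ lam := by omega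
    have hpwt : G.dist p wt ≤ lam := hlen t p hpt wt hwt
    have hqwt : G.dist q wt ≤ lam := hlen t q hqt wt hwt
    have hup : G.dist u p = G.dist p u := SimpleGraph.dist_comm
    have tri2 : G.dist u wt ≤ G.dist u p + G.dist p wt := hG.dist_triangle
    have tri3 : G.dist u wt ≤ G.dist u q + G.dist q wt := hG.dist_triangle
    exact ⟨wt, hwtA, by omega⟩
end

section
/- For every finite connected simple graph G, the slimness of G is at most 3·tb(G), where tb(G) is the tree-breadth of G. -/
open SimpleGraph

/-- `G` admits a tree-decomposition of breadth at most `r`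
(every bag is contained in a ball of radius `r` of `G`). -/
def HasTreeDecompOfBreadth {V : Type} (G : SimpleGraph V) (r : ℕ) : Prop :=
  ∃ (ι : Type) (_ : Fintype ι) (td : TreeDecomp G ι),
    ∀ i, ∃ c : V, ∀ u ∈ td.bag i, G.dist c u ≤ r

/-- The tree-breadth `tb(G)`: the minimum breadth over all tree-decompositions of `G`. -/
noncomputable def treeBreadth {V : Type} (G : SimpleGraph V) : ℕ :=
  sInf {r : ℕ | HasTreeDecompOfBreadth G r}

namespace SlimAux

variable {ι : Type} {T : SimpleGraph ι}

/-- The unique path between two vertices of a tree. -/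
noncomputable def tpath (hT : T.IsTree) (a b : ι) : T.Walk a b :=
  (hT.existsUnique_path a b).choose

lemma tpath_isPath (hT : T.IsTree) (a b : ι) : (tpath hT a b).IsPath :=
  (hT.existsUnique_path a b).choose_spec.1

lemma tpath_unique (hT : T.IsTree) {a b : ι} (p : T.Walk a b) (hp : p.IsPath) :
    p = tpath hT a b :=
  (hT.existsUnique_path a b).choose_spec.2 p hp

lemma tpath_support_subset (hT : T.IsTree) {a b : ι} (w : T.Walk a b) :
    (tpath hT a b).support ⊆ w.support := by
  classical
  rw [← tpath_unique hT w.bypass w.bypass_isPath]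
  exact w.support_bypass_subset

lemma mem_tpath_symm (hT : T.IsTree) {a b j : ι} (h : j ∈ (tpath hT a b).support) :
    j ∈ (tpath hT b a).support := by
  have he : (tpath hT a b).reverse = tpath hT b a :=
    tpath_unique hT _ ((tpath_isPath hT a b).reverse)
  rw [← he, SimpleGraph.Walk.support_reverse, List.mem_reverse]
  exact h

lemma isPath_append {a b c : ι} {p : T.Walk a b} {q : T.Walk b c}
    (hp : p.IsPath) (hq : q.IsPath)
    (hint : ∀ x ∈ p.support, x ∈ q.support → x = b) : (p.append q).IsPath := by
  rw [SimpleGraph.Walk.isPath_def, SimpleGraph.Walk.support_append]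
  have hqtail : q.support = b :: q.support.tail := q.support_eq_cons
  have hqn : q.support.Nodup := hq.support_nodup
  rw [hqtail] at hqn
  refine List.Nodup.append hp.support_nodup hqn.of_cons ?_
  intro x hx hx'
  have hxb : x = b := hint x hx (by rw [hqtail]; exact List.mem_cons_of_mem _ hx')
  subst hxb
  exact (List.nodup_cons.mp hqn).1 hx'

lemma exists_prefix_gate (S : ι → Prop) :
    ∀ {a b : ι} (W : T.Walk a b), S b →
      ∃ (j : ι) (W1 : T.Walk a j) (W2 : T.Walk j b),
        W1.append W2 = W ∧ S j ∧ ∀ k ∈ W1.support, S k → k = j := by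
  intro a b W
  induction W with
  | nil =>
    intro hb
    exact ⟨_, SimpleGraph.Walk.nil, SimpleGraph.Walk.nil, rfl, hb,
      fun k hk _ => by simpa using hk⟩
  | @cons a' c' b' h W' ih =>
    intro hb
    by_cases hSa : S a'
    · exact ⟨_, SimpleGraph.Walk.nil, SimpleGraph.Walk.cons h W', rfl, hSa,
        fun k hk _ => by simpa using hk⟩
    · obtain ⟨j, W1, W2, happ, hS, hmin⟩ := ih hb
      refine ⟨j, SimpleGraph.Walk.cons h W1, W2, ?_, hS, ?_⟩
      · rw [SimpleGraph.Walk.cons_append, happ]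
      · intro k hk hSk
        rw [SimpleGraph.Walk.support_cons, List.mem_cons] at hk
        rcases hk with rfl | hk
        · exact absurd hSk hSa
        · exact hmin k hk hSk

variable {V : Type} {G : SimpleGraph V}

/-- Two nodes of the decomposition tree are on the same side of `j`. -/
def Side (td : TreeDecomp G ι) (j i k : ι) : Prop :=
  ∃ w : td.T.Walk i k, j ∉ w.support

lemma Side.trans {td : TreeDecomp G ι} {j i k l : ι}
    (h1 : Side td j i k) (h2 : Side td j k l) : Side td j i l := by
  obtain ⟨w1, h1⟩ := h1
  obtain ⟨w2, h2⟩ := h2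
  refine ⟨w1.append w2, ?_⟩
  intro hmem
  rcases (SimpleGraph.Walk.mem_support_append_iff _ _).mp hmem with h | h
  · exact h1 h
  · exact h2 h

lemma side_of_two_bags (td : TreeDecomp G ι) {j i k : ι} {a : V}
    (hj : a ∉ td.bag j) (h1 : a ∈ td.bag i) (h2 : a ∈ td.bag k) : Side td j i k := by
  refine ⟨tpath td.isTree i k, fun hmem => hj ?_⟩
  exact td.path_inter i j k _ (tpath_isPath _ _ _) hmem ⟨h1, h2⟩

lemma side_of_walk (td : TreeDecomp G ι) {j : ι} :
    ∀ {a b : V} (p : G.Walk a b), (∀ w ∈ p.support, w ∉ td.bag j) →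
      ∀ {ia ib : ι}, a ∈ td.bag ia → b ∈ td.bag ib → Side td j ia ib := by
  intro a b p
  induction p with
  | nil =>
    intro hp ia ib ha hb
    exact side_of_two_bags td (hp _ (SimpleGraph.Walk.start_mem_support _)) ha hb
  | @cons a c b h p' ih =>
    intro hp ia ib ha hb
    obtain ⟨i0, ha0, hc0⟩ := td.covers_edge h
    have h1 : Side td j ia i0 :=
      side_of_two_bags td (hp _ (SimpleGraph.Walk.start_mem_support _)) ha ha0
    have h2 : Side td j i0 ib := by
      refine ih ?_ hc0 hb
      intro w hw
      exact hp w (by rw [SimpleGraph.Walk.support_cons]; exact List.mem_cons_of_mem _ hw)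
    exact h1.trans h2

lemma separation (td : TreeDecomp G ι) {j ia ib : ι} {a b : V}
    (hj : j ∈ (tpath td.isTree ia ib).support)
    (ha : a ∈ td.bag ia) (hb : b ∈ td.bag ib) (p : G.Walk a b) :
    ∃ w ∈ p.support, w ∈ td.bag j := by
  by_contra h
  push_neg at h
  obtain ⟨w0, hw0⟩ := side_of_walk td p h ha hb
  exact hw0 (tpath_support_subset td.isTree w0 hj)

lemma geodesic_mid [DecidableEq V] (hG : G.Connected) {x y u w w' : V} (q : G.Walk x y)
    (hq : q.length = G.dist x y) (hu : u ∈ q.support)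
    (hw : w ∈ (q.takeUntil u hu).support) (hw' : w' ∈ (q.dropUntil u hu).support) :
    G.dist u w + G.dist u w' ≤ G.dist w w' := by
  set t1 := q.takeUntil u hu with ht1
  set t2 := q.dropUntil u hu with ht2
  have hlen : t1.length + t2.length = q.length := by
    have := congrArg SimpleGraph.Walk.length (q.take_spec hu)
    rwa [SimpleGraph.Walk.length_append] at this
  have h1 : (t1.takeUntil w hw).length + (t1.dropUntil w hw).length = t1.length := by
    have := congrArg SimpleGraph.Walk.length (t1.take_spec hw)
    rwa [SimpleGraph.Walk.length_append] at this
  have h2 : (t2.takeUntil w' hw').length + (t2.dropUntil w' hw').length = t2.length := by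
    have := congrArg SimpleGraph.Walk.length (t2.take_spec hw')
    rwa [SimpleGraph.Walk.length_append] at this
  have dxw : G.dist x w ≤ (t1.takeUntil w hw).length := SimpleGraph.dist_le _
  have duw : G.dist u w ≤ (t1.dropUntil w hw).length := by
    rw [SimpleGraph.dist_comm]; exact SimpleGraph.dist_le _
  have duw' : G.dist u w' ≤ (t2.takeUntil w' hw').length := SimpleGraph.dist_le _
  have dw'y : G.dist w' y ≤ (t2.dropUntil w' hw').length := SimpleGraph.dist_le _
  have tri : G.dist x y ≤ G.dist x w + (G.dist w w' + G.dist w' y) :=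
    le_trans (hG.dist_triangle (v := w))
      (by exact Nat.add_le_add_left (hG.dist_triangle (v := w')) _)
  omega

lemma isSlim_of_decomp {V : Type} {G : SimpleGraph V} (hG : G.Connected) {r : ℕ}
    (h : HasTreeDecompOfBreadth G r) : IsSlim G (3 * r) := by
  classical
  obtain ⟨ι, _inst, td, hrad⟩ := h
  intro x y z pxy pxz pyz hxy hxz hyz u hu
  have hT := td.isTree
  obtain ⟨ix, hix⟩ := td.covers_vertex x
  obtain ⟨iy, hiy⟩ := td.covers_vertex y
  obtain ⟨iz, hiz⟩ := td.covers_vertex z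
  obtain ⟨iu, hiu⟩ := td.covers_vertex u
  set S : ι → Prop := fun k =>
    k ∈ (tpath hT ix iz).support ∨ k ∈ (tpath hT iy iz).support with hSdef
  obtain ⟨j, W1, W2, happ, hjS, hmin⟩ :=
    exists_prefix_gate S (tpath hT iu ix) (Or.inl ((tpath hT ix iz).start_mem_support))
  have hj_ux : j ∈ (tpath hT iu ix).support := by
    rw [← happ]
    exact SimpleGraph.Walk.subset_support_append_left _ _ W1.end_mem_support
  have hW1path : W1.IsPath := by
    have hp := tpath_isPath hT iu ix
    rw [← happ] at hp
    exact hp.of_append_left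
  have hjy_sub : ∀ k ∈ (tpath hT j iy).support, S k := by
    rcases hjS with hj1 | hj2
    · intro k hk
      have hk2 := tpath_support_subset hT
        (((tpath hT ix iz).dropUntil j hj1).append (tpath hT iz iy)) hk
      rcases (SimpleGraph.Walk.mem_support_append_iff _ _).mp hk2 with h' | h'
      · exact Or.inl (SimpleGraph.Walk.support_dropUntil_subset _ hj1 h')
      · exact Or.inr (mem_tpath_symm hT h')
    · intro k hk
      have hj2' : j ∈ (tpath hT iz iy).support := mem_tpath_symm hT hj2
      have hk2 := tpath_support_subset hT ((tpath hT iz iy).dropUntil j hj2') hk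
      exact Or.inr (mem_tpath_symm hT (SimpleGraph.Walk.support_dropUntil_subset _ hj2' hk2))
  have hj_uy : j ∈ (tpath hT iu iy).support := by
    have hpath : (W1.append (tpath hT j iy)).IsPath :=
      isPath_append hW1path (tpath_isPath hT j iy)
        (fun k hk hk' => hmin k hk (hjy_sub k hk'))
    rw [← tpath_unique hT _ hpath]
    exact SimpleGraph.Walk.subset_support_append_left _ _ W1.end_mem_support
  obtain ⟨w, hwsup, hwbag⟩ :=
    separation td (mem_tpath_symm hT hj_ux) hix hiu (pxy.takeUntil u hu)
  obtain ⟨w', hw'sup, hw'bag⟩ :=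
    separation td hj_uy hiu hiy (pxy.dropUntil u hu)
  obtain ⟨c, hc⟩ := hrad j
  have hkey : G.dist u w + G.dist u w' ≤ G.dist w w' :=
    geodesic_mid hG pxy hxy hu hwsup hw'sup
  have hcw : G.dist c w ≤ r := hc w hwbag
  have hcw' : G.dist c w' ≤ r := hc w' hw'bag
  obtain ⟨v, hvside, hvbag⟩ :
      ∃ v, (v ∈ pxz.support ∨ v ∈ pyz.support) ∧ v ∈ td.bag j := by
    rcases hjS with hj1 | hj2
    · obtain ⟨v, hv1, hv2⟩ := separation td hj1 hix hiz pxz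
      exact ⟨v, Or.inl hv1, hv2⟩
    · obtain ⟨v, hv1, hv2⟩ := separation td hj2 hiy hiz pyz
      exact ⟨v, Or.inr hv1, hv2⟩
  have hcv : G.dist c v ≤ r := hc v hvbag
  refine ⟨v, hvside, ?_⟩
  have tri0 : G.dist w w' ≤ G.dist w c + G.dist c w' := hG.dist_triangle
  have t1 : G.dist u v ≤ G.dist u w + G.dist w v :=
    hG.dist_triangle
  have t1' : G.dist w v ≤ G.dist w c + G.dist c v := hG.dist_triangle
  have t2 : G.dist u v ≤ G.dist u w' + G.dist w' v :=
    hG.dist_triangle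
  have t2' : G.dist w' v ≤ G.dist w' c + G.dist c v := hG.dist_triangle
  have e1 : G.dist w c = G.dist c w := SimpleGraph.dist_comm
  have e2 : G.dist w' c = G.dist c w' := SimpleGraph.dist_comm
  omega

end SlimAux

/-- For every finite connected graph `G`, `sl(G) ≤ 3 ⬝ tb(G)`. -/
theorem slimness_le_three_mul_treeBreadth {V : Type} [Fintype V]
    (G : SimpleGraph V) (hG : G.Connected) :
    slimness G ≤ 3 * treeBreadth G := by
  classical
  have hne : {r : ℕ | HasTreeDecompOfBreadth G r}.Nonempty := by
    obtain ⟨c⟩ : Nonempty V := hG.nonempty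
    refine ⟨Finset.univ.sup (G.dist c), ?_⟩
    refine ⟨Unit, inferInstance,
      { T := ⊥
        isTree := ⟨SimpleGraph.Connected.mk
            (fun a b => by cases a; cases b; exact SimpleGraph.Reachable.refl _),
          SimpleGraph.isAcyclic_bot⟩
        bag := fun _ => Set.univ
        covers_vertex := fun v => ⟨(), Set.mem_univ v⟩
        covers_edge := fun u v _ => ⟨(), Set.mem_univ u, Set.mem_univ v⟩
        path_inter := fun _ _ _ _ _ _ => fun x _ => Set.mem_univ x }, ?_⟩
    intro i
    exact ⟨c, fun u _ => Finset.le_sup (Finset.mem_univ u)⟩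
  have hmem : HasTreeDecompOfBreadth G (treeBreadth G) := Nat.sInf_mem hne
  exact Nat.sInf_le (SlimAux.isSlim_of_decomp hG hmem)
end

section
/- For every integer k ≥ 4 and every finite connected simple k-chordal graph G, the slimness of G is at most ⌊k/4⌋ + 1. -/
open SimpleGraph

/-- A cycle of `G` is induced (chordless) if any edge of `G` joining two vertices of
the cycle is an edge of the cycle. -/
def IsInducedCycle {V : Type} (G : SimpleGraph V) {v : V} (p : G.Walk v v) : Prop :=
  p.IsCycle ∧ ∀ a b : V, a ∈ p.support → b ∈ p.support → G.Adj a b → s(a, b) ∈ p.edges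

/-- `G` is `k`-chordal: every induced cycle of `G` has length at most `k`. -/
def KChordal {V : Type} (G : SimpleGraph V) (k : ℕ) : Prop :=
  ∀ (v : V) (p : G.Walk v v), IsInducedCycle G p → p.length ≤ k


section Helpers

variable {V : Type} {H : SimpleGraph V}

namespace SlimAux

lemma reachable_of_mem_support {u v w : V} (p : H.Walk u v) (h : w ∈ p.support) :
    H.Reachable u w := by
  classical
  exact ⟨p.takeUntil w h⟩

lemma dist_triangle3 {u v w : V} (h1 : H.Reachable u v) (h2 : H.Reachable v w) :
    H.dist u w ≤ H.dist u v + H.dist v w := by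
  obtain ⟨p, hp⟩ := h1.exists_walk_length_eq_dist
  obtain ⟨q, hq⟩ := h2.exists_walk_length_eq_dist
  calc H.dist u w ≤ (p.append q).length := SimpleGraph.dist_le _
    _ = H.dist u v + H.dist v w := by rw [SimpleGraph.Walk.length_append, hp, hq]

lemma support_eq_map_getVert {u v : V} (p : H.Walk u v) :
    p.support = (List.range (p.length + 1)).map p.getVert := by
  induction p with
  | nil => simp [List.range_succ]
  | cons h q ih =>
    rw [SimpleGraph.Walk.support_cons, SimpleGraph.Walk.length_cons, ih,
      List.range_succ_eq_map (n := q.length + 1)]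
    simp [Function.comp_def, SimpleGraph.Walk.getVert_cons_succ]

lemma mem_support_iff_getVert {u v w : V} (p : H.Walk u v) :
    w ∈ p.support ↔ ∃ i, i ≤ p.length ∧ p.getVert i = w := by
  rw [support_eq_map_getVert, List.mem_map]
  constructor
  · rintro ⟨i, hi, rfl⟩
    exact ⟨i, by simpa using Nat.lt_succ_iff.mp (List.mem_range.mp hi), rfl⟩
  · rintro ⟨i, hi, rfl⟩
    exact ⟨i, List.mem_range.mpr (Nat.lt_succ_of_le hi), rfl⟩

lemma getVert_mem_support {u v : V} (p : H.Walk u v) (i : ℕ) :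
    p.getVert i ∈ p.support := by
  rcases le_or_gt i p.length with h | h
  · exact (mem_support_iff_getVert p).mpr ⟨i, h, rfl⟩
  · rw [SimpleGraph.Walk.getVert_of_length_le p h.le]
    exact p.end_mem_support

lemma reachable_getVert {u v : V} (p : H.Walk u v) (i : ℕ) :
    H.Reachable u (p.getVert i) :=
  reachable_of_mem_support p (getVert_mem_support p i)

lemma dist_getVert_le {u v : V} (p : H.Walk u v) (i d : ℕ) :
    H.dist (p.getVert i) (p.getVert (i + d)) ≤ d := by
  induction d with
  | zero => simp
  | succ d ih =>
    show H.dist (p.getVert i) (p.getVert (i + d + 1)) ≤ d + 1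
    have hr1 : H.Reachable (p.getVert i) (p.getVert (i + d)) :=
      (reachable_getVert p i).symm.trans (reachable_getVert p (i + d))
    have hr2 : H.Reachable (p.getVert (i + d)) (p.getVert (i + d + 1)) :=
      (reachable_getVert p (i + d)).symm.trans (reachable_getVert p (i + d + 1))
    have htr := dist_triangle3 hr1 hr2
    have hlast : H.dist (p.getVert (i + d)) (p.getVert (i + d + 1)) ≤ 1 := by
      rcases lt_or_ge (i + d) p.length with h | h
      · have hadj := p.adj_getVert_succ h
        calc H.dist _ _ ≤ (SimpleGraph.Walk.cons hadj SimpleGraph.Walk.nil).length :=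
              SimpleGraph.dist_le _
          _ = 1 := rfl
      · rw [SimpleGraph.Walk.getVert_of_length_le p h,
          SimpleGraph.Walk.getVert_of_length_le p (by omega)]
        have hvv : H.dist v v = 0 := SimpleGraph.dist_self
        omega
    omega

lemma dist_getVert_le' {u v : V} (p : H.Walk u v) {i j : ℕ} (hij : i ≤ j) :
    H.dist (p.getVert i) (p.getVert j) ≤ j - i := by
  have := dist_getVert_le p i (j - i)
  rwa [Nat.add_sub_cancel' hij] at this

lemma geodesic_dist_getVert {u v : V} (p : H.Walk u v) (hp : p.length = H.dist u v)
    {i j : ℕ} (hij : i ≤ j) (hj : j ≤ p.length) :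
    H.dist (p.getVert i) (p.getVert j) = j - i := by
  have h1 : H.dist (p.getVert i) (p.getVert j) ≤ j - i := dist_getVert_le' p hij
  have h2 : H.dist u (p.getVert i) ≤ i := by
    have := dist_getVert_le' p (Nat.zero_le i)
    simpa using this
  have h3 : H.dist (p.getVert j) v ≤ p.length - j := by
    have := dist_getVert_le' p hj
    simpa [SimpleGraph.Walk.getVert_length] using this
  have hr1 : H.Reachable u (p.getVert i) := reachable_getVert p i
  have hr2 : H.Reachable (p.getVert i) (p.getVert j) :=
    (reachable_getVert p i).symm.trans (reachable_getVert p j)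
  have hr3 : H.Reachable (p.getVert j) v :=
    ((reachable_getVert p j).symm.trans (reachable_getVert p p.length)).trans
      (by rw [SimpleGraph.Walk.getVert_length])
  have htr : H.dist u v ≤ H.dist u (p.getVert i) + H.dist (p.getVert i) (p.getVert j)
      + H.dist (p.getVert j) v := by
    have t1 := dist_triangle3 hr1 (hr2.trans hr3)
    have t2 := dist_triangle3 hr2 hr3
    omega
  omega

lemma edge_getVert_succ_mem_edges {u v : V} (p : H.Walk u v) {i : ℕ} (hi : i < p.length) :
    s(p.getVert i, p.getVert (i + 1)) ∈ p.edges := by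
  induction p generalizing i with
  | nil => simp at hi
  | cons h q ih =>
    cases i with
    | zero =>
      simp [SimpleGraph.Walk.getVert_zero, SimpleGraph.Walk.getVert_cons_succ]
    | succ i =>
      rw [SimpleGraph.Walk.length_cons] at hi
      have := ih (i := i) (by omega)
      simp only [SimpleGraph.Walk.getVert_cons_succ, SimpleGraph.Walk.edges_cons]
      exact List.mem_cons_of_mem _ this

/-- Discrete intermediate value theorem for 1-Lipschitz-above sequences. -/
lemma ivt {f : ℕ → ℕ} {t : ℕ} :
    ∀ {n : ℕ}, f 0 ≤ t → t ≤ f n → (∀ i, i < n → f (i + 1) ≤ f i + 1) →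
      ∃ i, i ≤ n ∧ f i = t := by
  intro n
  induction n with
  | zero => intro h0 hn _; exact ⟨0, le_refl _, by omega⟩
  | succ n ih =>
    intro h0 hn hstep
    rcases le_or_gt t (f n) with h | h
    · obtain ⟨i, hi, hfi⟩ := ih h0 h (fun i hi => hstep i (by omega))
      exact ⟨i, by omega, hfi⟩
    · have := hstep n (by omega)
      exact ⟨n + 1, le_refl _, by omega⟩

lemma lipUp {f : ℕ → ℕ} {n : ℕ} (hstep : ∀ i, i < n → f (i + 1) ≤ f i + 1) :
    ∀ j i, i ≤ j → j ≤ n → f j ≤ f i + (j - i) := by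
  intro j
  induction j with
  | zero =>
    intro i h1 _
    have : i = 0 := by omega
    subst this; simp
  | succ j ih =>
    intro i h1 h2
    rcases Nat.eq_or_lt_of_le h1 with h | h
    · subst h; simp
    · have ha := ih i (by omega) (by omega)
      have hb := hstep j (by omega)
      omega

lemma lipDown {f : ℕ → ℕ} {n : ℕ} (hstep : ∀ i, i < n → f i ≤ f (i + 1) + 1) :
    ∀ j i, i ≤ j → j ≤ n → f i ≤ f j + (j - i) := by
  intro j
  induction j with
  | zero =>
    intro i h1 _
    have : i = 0 := by omega
    subst this; simp
  | succ j ih =>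
    intro i h1 h2
    rcases Nat.eq_or_lt_of_le h1 with h | h
    · subst h; simp
    · have ha := ih i (by omega) (by omega)
      have hb := hstep j (by omega)
      omega

/-- Build a walk along a sequence of consecutively adjacent vertices. -/
def pathSeg (g : ℕ → V) (lo : ℕ) :
    (d : ℕ) → (∀ i, lo ≤ i → i < lo + d → H.Adj (g i) (g (i + 1))) → H.Walk (g lo) (g (lo + d))
  | 0, _ => SimpleGraph.Walk.nil
  | d + 1, h =>
    (pathSeg g lo d (fun i h1 h2 => h i h1 (by omega))).concat (h (lo + d) (by omega) (by omega))

@[simp] lemma pathSeg_length (g : ℕ → V) (lo d : ℕ) (h) :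
    (pathSeg (H := H) g lo d h).length = d := by
  induction d with
  | zero => rfl
  | succ d ih => rw [pathSeg, SimpleGraph.Walk.length_concat, ih]

lemma pathSeg_support (g : ℕ → V) (lo d : ℕ) (h) :
    (pathSeg (H := H) g lo d h).support = (List.range (d + 1)).map (fun t => g (lo + t)) := by
  induction d with
  | zero => simp [pathSeg, List.range_succ]
  | succ d ih =>
    rw [pathSeg, SimpleGraph.Walk.support_concat, ih, List.range_succ (n := d + 1)]
    simp [Nat.add_assoc]

lemma pathSeg_edges (g : ℕ → V) (lo d : ℕ) (h) :
    (pathSeg (H := H) g lo d h).edges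
      = (List.range d).map (fun t => s(g (lo + t), g (lo + t + 1))) := by
  induction d with
  | zero => simp [pathSeg]
  | succ d ih =>
    rw [pathSeg, SimpleGraph.Walk.edges_concat, ih, List.range_succ (n := d)]
    simp [Nat.add_assoc]

end SlimAux

end Helpers

/-- The subgraph of `G` induced on the vertices satisfying `P` (as a graph on `V`). -/
def SlimRestrict {V : Type} (G : SimpleGraph V) (P : V → Prop) : SimpleGraph V where
  Adj u v := G.Adj u v ∧ P u ∧ P v
  symm := ⟨fun _ _ ⟨h, h1, h2⟩ => ⟨h.symm, h2, h1⟩⟩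
  loopless := ⟨fun u ⟨h, _, _⟩ => G.irrefl h⟩

set_option maxHeartbeats 1000000 in
theorem isSlim_of_kChordal {V : Type} [Fintype V] (G : SimpleGraph V)
    (hG : G.Connected) (k : ℕ) (hk : 4 ≤ k) (hchord : KChordal G k) :
    IsSlim G (k / 4 + 1) := by
  classical
  intro x y z pxy pxz pyz hxy hxz hyz u hu
  by_contra hcon
  push_neg at hcon
  set δ := k / 4 + 1 with hδdef
  have hδ2 : 2 ≤ δ := by
    have h1 : 1 ≤ k / 4 := (Nat.one_le_div_iff (by norm_num)).mpr hk
    omega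
  -- the union of the two other sides
  set Wp : V → Prop := fun v => v ∈ pxz.support ∨ v ∈ pyz.support with hWpdef
  have hWx : Wp x := Or.inl pxz.start_mem_support
  have hWy : Wp y := Or.inr pyz.start_mem_support
  have hWz : Wp z := Or.inl pxz.end_mem_support
  -- distance to W
  set dW : V → ℕ := fun v => sInf {n | ∃ w, Wp w ∧ G.dist v w = n} with hdWdef
  have hne : ∀ v : V, {n | ∃ w, Wp w ∧ G.dist v w = n}.Nonempty :=
    fun v => ⟨G.dist v x, x, hWx, rfl⟩
  have dW_spec : ∀ v, ∃ w, Wp w ∧ G.dist v w = dW v := fun v => Nat.sInf_mem (hne v)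
  have dW_le : ∀ v w, Wp w → dW v ≤ G.dist v w := fun v w hw => Nat.sInf_le ⟨w, hw, rfl⟩
  have dW_zero : ∀ v, Wp v → dW v = 0 := by
    intro v hv
    have h1 := dW_le v v hv
    have h2 : G.dist v v = 0 := SimpleGraph.dist_self
    omega
  have dW_lip : ∀ v v', G.Adj v v' → dW v ≤ dW v' + 1 := by
    intro v v' hadj
    obtain ⟨w, hw, hd⟩ := dW_spec v'
    have h1 : G.dist v w ≤ G.dist v v' + G.dist v' w := hG.dist_triangle
    have h2 : G.dist v v' = 1 := SimpleGraph.dist_eq_one_iff_adj.mpr hadj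
    have h3 := dW_le v w hw
    omega
  -- the far vertex
  have hfar : δ + 1 ≤ dW u := by
    obtain ⟨w, hw, hd⟩ := dW_spec u
    have := hcon w hw
    omega
  obtain ⟨i0, hi0n, hgi0⟩ := (SlimAux.mem_support_iff_getVert pxy).mp hu
  have hstepUp : ∀ i, i < pxy.length → dW (pxy.getVert (i + 1)) ≤ dW (pxy.getVert i) + 1 :=
    fun i hi => dW_lip _ _ (pxy.adj_getVert_succ hi).symm
  have hstepDown : ∀ i, i < pxy.length → dW (pxy.getVert i) ≤ dW (pxy.getVert (i + 1)) + 1 :=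
    fun i hi => dW_lip _ _ (pxy.adj_getVert_succ hi)
  have hf0 : dW (pxy.getVert 0) = 0 := by
    rw [SimpleGraph.Walk.getVert_zero]; exact dW_zero x hWx
  have hfn : dW (pxy.getVert pxy.length) = 0 := by
    rw [SimpleGraph.Walk.getVert_length]; exact dW_zero y hWy
  have hfi0 : δ + 1 ≤ dW (pxy.getVert i0) := by rw [hgi0]; exact hfar
  -- find a vertex at distance exactly δ+1
  obtain ⟨istar, histar_le, hfistar0⟩ :=
    SlimAux.ivt (f := fun i => dW (pxy.getVert i)) (t := δ + 1) (n := i0)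
      (by show dW (pxy.getVert 0) ≤ δ + 1; omega) hfi0
      (fun i hi => hstepUp i (by omega))
  have hfistar : dW (pxy.getVert istar) = δ + 1 := hfistar0
  have histar_n : istar ≤ pxy.length := le_trans histar_le hi0n
  -- `ja` : last index before istar where the distance is ≤ 1
  obtain ⟨ja, hja_le, hja1, hja_gt⟩ :
      ∃ ja, ja ≤ istar ∧ dW (pxy.getVert ja) ≤ 1 ∧
        ∀ j, ja < j → j ≤ istar → 2 ≤ dW (pxy.getVert j) := by
    refine ⟨Nat.findGreatest (fun j => dW (pxy.getVert j) ≤ 1) istar,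
      Nat.findGreatest_le istar, ?_, ?_⟩
    · have h0 : (fun j => dW (pxy.getVert j) ≤ 1) 0 := by
        show dW (pxy.getVert 0) ≤ 1
        omega
      exact Nat.findGreatest_spec (P := fun j => dW (pxy.getVert j) ≤ 1)
        (Nat.zero_le istar) h0
    · intro j h1 h2
      have h3 := Nat.findGreatest_is_greatest h1 h2
      have h4 : ¬ (dW (pxy.getVert j) ≤ 1) := h3
      omega
  have hja_lt : ja < istar := by
    rcases Nat.lt_or_ge ja istar with h | h
    · exact h
    · exfalso
      have heq : ja = istar := by omega
      rw [heq, hfistar] at hja1; omega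
  have hfja : dW (pxy.getVert ja) = 1 := by
    have h2 := hja_gt (ja + 1) (by omega) (by omega)
    have h3 := hstepUp ja (by omega)
    omega
  -- `jb` : first index after istar where the distance is ≤ 1
  have hTex : ∃ t, dW (pxy.getVert (istar + t)) ≤ 1 :=
    ⟨pxy.length - istar, by rw [show istar + (pxy.length - istar) = pxy.length by omega]; omega⟩
  obtain ⟨jb, hjb_ge, hjb_n, hjb1, hjb_gt⟩ :
      ∃ jb, istar ≤ jb ∧ jb ≤ pxy.length ∧ dW (pxy.getVert jb) ≤ 1 ∧
        ∀ j, istar ≤ j → j < jb → 2 ≤ dW (pxy.getVert j) := by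
    refine ⟨istar + Nat.find hTex, by omega, ?_, Nat.find_spec hTex, ?_⟩
    · have h3 : Nat.find hTex ≤ pxy.length - istar :=
        Nat.find_le (by rw [show istar + (pxy.length - istar) = pxy.length by omega]; omega)
      omega
    · intro j h1 h2
      have h3 := Nat.find_min hTex (m := j - istar) (by omega)
      have h4 : ¬ (dW (pxy.getVert (istar + (j - istar))) ≤ 1) := h3
      rw [show istar + (j - istar) = j by omega] at h4
      omega
  have hjb_lt : istar < jb := by
    rcases Nat.lt_or_ge istar jb with h | h
    · exact h
    · exfalso
      have heq : jb = istar := by omega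
      rw [heq, hfistar] at hjb1; omega
  have hfjb : dW (pxy.getVert jb) = 1 := by
    have h2 := hjb_gt (jb - 1) (by omega) (by omega)
    have h3 := hstepDown (jb - 1) (by omega)
    rw [show jb - 1 + 1 = jb by omega] at h3
    omega
  have hint : ∀ j, ja < j → j < jb → 2 ≤ dW (pxy.getVert j) := by
    intro j h1 h2
    rcases le_or_gt j istar with h | h
    · exact hja_gt j h1 h
    · exact hjb_gt j (by omega) h2
  have hf_ge1 : ∀ j, ja ≤ j → j ≤ jb → 1 ≤ dW (pxy.getVert j) := by
    intro j h1 h2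
    rcases eq_or_lt_of_le h1 with h | h
    · rw [← h]; omega
    rcases eq_or_lt_of_le h2 with h' | h'
    · rw [h']; omega
    · have := hint j h h'; omega
  -- the two ends of the far segment
  have hja_nW : ¬ Wp (pxy.getVert ja) := by
    intro hW; have := dW_zero _ hW; omega
  have hjb_nW : ¬ Wp (pxy.getVert jb) := by
    intro hW; have := dW_zero _ hW; omega
  have hlip1 := SlimAux.lipUp (f := fun i => dW (pxy.getVert i)) (n := pxy.length)
    hstepUp istar ja hja_le histar_n
  have hlip2 := SlimAux.lipDown (f := fun i => dW (pxy.getVert i)) (n := pxy.length)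
    hstepDown jb istar (by omega) hjb_n
  have hlip1' : dW (pxy.getVert istar) ≤ dW (pxy.getVert ja) + (istar - ja) := hlip1
  have hlip2' : dW (pxy.getVert istar) ≤ dW (pxy.getVert jb) + (jb - istar) := hlip2
  have hdab2 : 2 * δ ≤ jb - ja := by omega
  -- distances along the geodesic pxy
  have hdist_seg : ∀ i j, i ≤ j → j ≤ pxy.length →
      G.dist (pxy.getVert i) (pxy.getVert j) = j - i :=
    fun i j h1 h2 => SlimAux.geodesic_dist_getVert pxy hxy h1 h2
  have hginj : ∀ s t, s ≤ pxy.length → t ≤ pxy.length →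
      pxy.getVert s = pxy.getVert t → s = t := by
    intro s t h1 h2 he
    rcases le_or_gt s t with h | h
    · have hd := hdist_seg s t h h2
      rw [he] at hd
      have h0 : G.dist (pxy.getVert t) (pxy.getVert t) = 0 := SimpleGraph.dist_self
      omega
    · have hd := hdist_seg t s (by omega) h1
      rw [he] at hd
      have h0 : G.dist (pxy.getVert t) (pxy.getVert t) = 0 := SimpleGraph.dist_self
      omega
  -- the induced graph on W
  set G' := SlimRestrict G Wp with hG'def
  have hG'le : ∀ e, e ∈ G'.edgeSet → e ∈ G.edgeSet := by
    intro e
    induction e using Sym2.ind with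
    | _ c d => exact fun h => (show G.Adj c d ∧ Wp c ∧ Wp d from h).1
  have htransfer : ∀ (w1 w2 : V) (q : G.Walk w1 w2), (∀ v ∈ q.support, Wp v) →
      ∀ e ∈ q.edges, e ∈ G'.edgeSet := by
    intro w1 w2 q hq e
    induction e using Sym2.ind with
    | _ c d =>
      intro he
      exact (⟨q.edges_subset_edgeSet he, hq c (q.fst_mem_support_of_mem_edges he),
        hq d (q.snd_mem_support_of_mem_edges he)⟩ : G.Adj c d ∧ Wp c ∧ Wp d)
  have hreachz : ∀ w, Wp w → G'.Reachable w z := by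
    intro w hw
    rcases hw with hw | hw
    · have hsub : ∀ v ∈ pxz.support, Wp v := fun v hv => Or.inl hv
      have hw' : w ∈ (pxz.transfer G' (htransfer _ _ pxz hsub)).support := by
        rw [SimpleGraph.Walk.support_transfer]; exact hw
      exact ⟨(pxz.transfer G' (htransfer _ _ pxz hsub)).dropUntil w hw'⟩
    · have hsub : ∀ v ∈ pyz.support, Wp v := fun v hv => Or.inr hv
      have hw' : w ∈ (pyz.transfer G' (htransfer _ _ pyz hsub)).support := by
        rw [SimpleGraph.Walk.support_transfer]; exact hw
      exact ⟨(pyz.transfer G' (htransfer _ _ pyz hsub)).dropUntil w hw'⟩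
  -- neighbors of the segment ends inside W
  have hNa : ∃ w, G.Adj (pxy.getVert ja) w ∧ Wp w := by
    obtain ⟨w, hw, hd⟩ := dW_spec (pxy.getVert ja)
    rw [hfja] at hd
    exact ⟨w, SimpleGraph.dist_eq_one_iff_adj.mp hd, hw⟩
  have hNb : ∃ w, G.Adj (pxy.getVert jb) w ∧ Wp w := by
    obtain ⟨w, hw, hd⟩ := dW_spec (pxy.getVert jb)
    rw [hfjb] at hd
    exact ⟨w, SimpleGraph.dist_eq_one_iff_adj.mp hd, hw⟩
  -- minimizing pair of neighbors
  have hMne : {n | ∃ bs as, (G.Adj (pxy.getVert jb) bs ∧ Wp bs) ∧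
      (G.Adj (pxy.getVert ja) as ∧ Wp as) ∧ G'.dist bs as = n}.Nonempty := by
    obtain ⟨as, h1⟩ := hNa
    obtain ⟨bs, h2⟩ := hNb
    exact ⟨G'.dist bs as, bs, as, h2, h1, rfl⟩
  obtain ⟨m, bs, as, hbs, has, hdistm, hmin⟩ :
      ∃ m bs as, (G.Adj (pxy.getVert jb) bs ∧ Wp bs) ∧
        (G.Adj (pxy.getVert ja) as ∧ Wp as) ∧ G'.dist bs as = m ∧
        ∀ b' a', (G.Adj (pxy.getVert jb) b' ∧ Wp b') →
          (G.Adj (pxy.getVert ja) a' ∧ Wp a') → m ≤ G'.dist b' a' := by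
    obtain ⟨bs, as, h1, h2, h3⟩ := Nat.sInf_mem hMne
    exact ⟨_, bs, as, h1, h2, h3, fun b' a' hb' ha' => Nat.sInf_le ⟨b', a', hb', ha', rfl⟩⟩
  have hreach : G'.Reachable bs as := (hreachz bs hbs.2).trans (hreachz as has.2).symm
  obtain ⟨R, hR⟩ := hreach.exists_walk_length_eq_dist
  have hRlen : R.length = m := by rw [hR, hdistm]
  have hRW : ∀ v ∈ R.support, Wp v := by
    intro v hv
    obtain ⟨t, ht, rfl⟩ := (SlimAux.mem_support_iff_getVert R).mp hv
    rcases lt_or_eq_of_le ht with h | h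
    · exact (show G.Adj _ _ ∧ Wp _ ∧ Wp _ from R.adj_getVert_succ h).2.1
    · rw [h, SimpleGraph.Walk.getVert_length]
      exact has.2
  -- distance comparison : m is at least (jb - ja) - 2
  obtain ⟨Rg, hRgsup, hRgedges, hRglen⟩ :
      ∃ Rg : G.Walk bs as, Rg.support = R.support ∧ Rg.edges = R.edges ∧ Rg.length = m := by
    refine ⟨R.transfer G (fun e he => hG'le e (R.edges_subset_edgeSet he)), ?_, ?_, ?_⟩
    · exact SimpleGraph.Walk.support_transfer _ _
    · exact SimpleGraph.Walk.edges_transfer _ _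
    · rw [SimpleGraph.Walk.length_transfer, hRlen]
  have hGdist_le : G.dist bs as ≤ m := by
    calc G.dist bs as ≤ Rg.length := SimpleGraph.dist_le Rg
      _ = m := hRglen
  have hm_ge : jb - ja ≤ m + 2 := by
    have t1 : G.dist (pxy.getVert ja) (pxy.getVert jb) ≤
        G.dist (pxy.getVert ja) as + G.dist as (pxy.getVert jb) := hG.dist_triangle
    have t2 : G.dist as (pxy.getVert jb) ≤ G.dist as bs + G.dist bs (pxy.getVert jb) :=
      hG.dist_triangle
    have e1 : G.dist (pxy.getVert ja) as = 1 := SimpleGraph.dist_eq_one_iff_adj.mpr has.1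
    have e2 : G.dist bs (pxy.getVert jb) = 1 := by
      rw [SimpleGraph.dist_comm]
      exact SimpleGraph.dist_eq_one_iff_adj.mpr hbs.1
    have e3 : G.dist as bs = G.dist bs as := SimpleGraph.dist_comm
    have e4 := hdist_seg ja jb (by omega) hjb_n
    omega
  have hm2 : 2 ≤ m := by omega
  -- the geodesic segment S from (g ja) to (g jb)
  have hadjseg : ∀ i, ja ≤ i → i < ja + (jb - ja) → G.Adj (pxy.getVert i) (pxy.getVert (i + 1)) :=
    fun i _ h2 => pxy.adj_getVert_succ (by omega)
  obtain ⟨S, hSlen, hSsup, hSedges⟩ :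
      ∃ S : G.Walk (pxy.getVert ja) (pxy.getVert jb), S.length = jb - ja ∧
        S.support = (List.range ((jb - ja) + 1)).map (fun t => pxy.getVert (ja + t)) ∧
        S.edges = (List.range (jb - ja)).map
          (fun t => s(pxy.getVert (ja + t), pxy.getVert (ja + t + 1))) := by
    refine ⟨(SlimAux.pathSeg (H := G) pxy.getVert ja (jb - ja) hadjseg).copy rfl
      (by rw [show ja + (jb - ja) = jb by omega]), ?_, ?_, ?_⟩
    · rw [SimpleGraph.Walk.length_copy, SlimAux.pathSeg_length]
    · rw [SimpleGraph.Walk.support_copy, SlimAux.pathSeg_support]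
    · rw [SimpleGraph.Walk.edges_copy, SlimAux.pathSeg_edges]
  have hmemS : ∀ v, v ∈ S.support ↔ ∃ i, ja ≤ i ∧ i ≤ jb ∧ pxy.getVert i = v := by
    intro v
    rw [hSsup, List.mem_map]
    constructor
    · rintro ⟨t, ht, rfl⟩
      have := List.mem_range.mp ht
      exact ⟨ja + t, by omega, by omega, rfl⟩
    · rintro ⟨i, h1, h2, rfl⟩
      exact ⟨i - ja, List.mem_range.mpr (by omega), by rw [show ja + (i - ja) = i by omega]⟩
  have hSnotW : ∀ v ∈ S.support, ¬ Wp v := by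
    intro v hv hWv
    obtain ⟨i, h1, h2, rfl⟩ := (hmemS v).mp hv
    have := hf_ge1 i h1 h2
    have := dW_zero _ hWv
    omega
  have hSnodup : S.support.Nodup := by
    rw [hSsup]
    refine List.Nodup.map_on ?_ List.nodup_range
    intro s hs t ht he
    have hs' := List.mem_range.mp hs
    have ht' := List.mem_range.mp ht
    have := hginj (ja + s) (ja + t) (by omega) (by omega) he
    omega
  -- R is an induced path: distances along R
  have hRdist : ∀ s t, s ≤ t → t ≤ m → G'.dist (R.getVert s) (R.getVert t) = t - s := by
    intro s t h1 h2
    exact SlimAux.geodesic_dist_getVert R hR h1 (by omega)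
  have hRnodup : R.support.Nodup := by
    rw [SlimAux.support_eq_map_getVert R]
    refine List.Nodup.map_on ?_ List.nodup_range
    intro s hs t ht he
    have hs' := List.mem_range.mp hs
    have ht' := List.mem_range.mp ht
    rcases le_or_gt s t with h | h
    · have hd := hRdist s t h (by omega)
      rw [he] at hd
      have h0 : G'.dist (R.getVert t) (R.getVert t) = 0 := SimpleGraph.dist_self
      omega
    · have hd := hRdist t s (by omega) (by omega)
      rw [he] at hd
      have h0 : G'.dist (R.getVert t) (R.getVert t) = 0 := SimpleGraph.dist_self
      omega
  -- assemble the cycle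
  obtain ⟨C, hClen, hCsup, hCedges⟩ :
      ∃ C : G.Walk (pxy.getVert ja) (pxy.getVert ja),
        C.length = (jb - ja) + (m + 2) ∧
        C.support = S.support ++ (Rg.support ++ [pxy.getVert ja]) ∧
        C.edges = S.edges ++ (s(pxy.getVert jb, bs) :: (Rg.edges ++ [s(as, pxy.getVert ja)])) := by
    refine ⟨S.append (SimpleGraph.Walk.cons hbs.1
      (Rg.append (SimpleGraph.Walk.cons has.1.symm SimpleGraph.Walk.nil))), ?_, ?_, ?_⟩
    · rw [SimpleGraph.Walk.length_append, SimpleGraph.Walk.length_cons,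
        SimpleGraph.Walk.length_append, SimpleGraph.Walk.length_cons,
        SimpleGraph.Walk.length_nil, hSlen, hRglen]
    · rw [SimpleGraph.Walk.support_append, SimpleGraph.Walk.support_cons, List.tail_cons,
        SimpleGraph.Walk.support_append]
      simp
    · rw [SimpleGraph.Walk.edges_append, SimpleGraph.Walk.edges_cons,
        SimpleGraph.Walk.edges_append]
      simp
  -- support tail and nodup
  have haS : pxy.getVert ja ∉ S.support.tail := by
    have hcons := S.support_eq_cons
    have h2 := hSnodup
    rw [hcons] at h2
    exact (List.nodup_cons.mp h2).1
  have hRgnodup : Rg.support.Nodup := by rw [hRgsup]; exact hRnodup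
  have haRg : pxy.getVert ja ∉ Rg.support := by
    intro h
    exact hja_nW (hRW _ (by rwa [hRgsup] at h))
  have hbRg : pxy.getVert jb ∉ Rg.support := by
    intro h
    exact hjb_nW (hRW _ (by rwa [hRgsup] at h))
  have htailnodup : C.support.tail.Nodup := by
    rw [hCsup, List.tail_append_of_ne_nil (SimpleGraph.Walk.support_ne_nil S)]
    refine List.Nodup.append hSnodup.tail ?_ ?_
    · refine List.Nodup.append hRgnodup (List.nodup_singleton _) ?_
      intro v hv hv'
      rw [List.mem_singleton] at hv'
      subst hv'
      exact haRg hv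
    · intro v hv hv'
      have hvS : v ∈ S.support := List.mem_of_mem_tail hv
      rcases List.mem_append.mp hv' with h | h
      · exact hSnotW v hvS (hRW v (by rwa [hRgsup] at h))
      · rw [List.mem_singleton] at h
        subst h
        exact haS hv
  -- edges nodup
  have hSedNodup : S.edges.Nodup := SimpleGraph.Walk.edges_nodup_of_support_nodup hSnodup
  have hRgedNodup : Rg.edges.Nodup := by
    rw [hRgedges]; exact SimpleGraph.Walk.edges_nodup_of_support_nodup hRnodup
  have hjajb : pxy.getVert ja ≠ pxy.getVert jb := by
    intro h
    have := hginj ja jb (by omega) hjb_n h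
    omega
  have hedge1_notS : s(pxy.getVert jb, bs) ∉ S.edges := fun h =>
    hSnotW bs (S.snd_mem_support_of_mem_edges h) hbs.2
  have hedge2_notS : s(as, pxy.getVert ja) ∉ S.edges := fun h =>
    hSnotW as (S.fst_mem_support_of_mem_edges h) has.2
  have hedge1_notRg : s(pxy.getVert jb, bs) ∉ Rg.edges := fun h =>
    hjb_nW (hRW _ (by rw [← hRgsup]; exact Rg.fst_mem_support_of_mem_edges h))
  have hedge2_notRg : s(as, pxy.getVert ja) ∉ Rg.edges := fun h =>
    hja_nW (hRW _ (by rw [← hRgsup]; exact Rg.snd_mem_support_of_mem_edges h))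
  have hedge12 : s(pxy.getVert jb, bs) ≠ s(as, pxy.getVert ja) := by
    intro h
    rw [Sym2.eq_iff] at h
    rcases h with ⟨h1, h2⟩ | ⟨h1, h2⟩
    · exact hjb_nW (h1 ▸ has.2)
    · exact hjajb h1.symm
  have hSRgedisj : ∀ e ∈ S.edges, e ∉ Rg.edges := by
    intro e
    induction e using Sym2.ind with
    | _ c d =>
      intro he he'
      exact hSnotW c (S.fst_mem_support_of_mem_edges he)
        (hRW c (by rw [← hRgsup]; exact Rg.fst_mem_support_of_mem_edges he'))
  have hCedNodup : C.edges.Nodup := by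
    rw [hCedges]
    refine List.Nodup.append hSedNodup ?_ ?_
    · rw [List.nodup_cons]
      constructor
      · intro h
        rcases List.mem_append.mp h with h | h
        · exact hedge1_notRg h
        · rw [List.mem_singleton] at h
          exact hedge12 h
      · refine List.Nodup.append hRgedNodup (List.nodup_singleton _) ?_
        intro e he he'
        rw [List.mem_singleton] at he'
        subst he'
        exact hedge2_notRg he
    · intro e he he'
      rcases List.mem_cons.mp he' with h | h
      · subst h
        exact hedge1_notS he
      rcases List.mem_append.mp h with h | h
      · exact hSRgedisj e he h
      · rw [List.mem_singleton] at h
        subst h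
        exact hedge2_notS he
  have hCne : C ≠ SimpleGraph.Walk.nil := by
    intro h
    rw [h] at hClen
    simp at hClen
  have hCcycle : C.IsCycle := ⟨⟨⟨hCedNodup⟩, hCne⟩, htailnodup⟩
  -- chordlessness
  have hmemsplit : ∀ c ∈ C.support, c ∈ S.support ∨ c ∈ Rg.support := by
    intro c hc
    rw [hCsup] at hc
    rcases List.mem_append.mp hc with h | h
    · exact Or.inl h
    rcases List.mem_append.mp h with h | h
    · exact Or.inr h
    · rw [List.mem_singleton] at h
      subst h
      exact Or.inl S.start_mem_support
  have hedgeS : ∀ i, ja ≤ i → i < jb → s(pxy.getVert i, pxy.getVert (i + 1)) ∈ S.edges := by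
    intro i h1 h2
    rw [hSedges]
    refine List.mem_map.mpr ⟨i - ja, List.mem_range.mpr (by omega), ?_⟩
    rw [show ja + (i - ja) = i by omega]
  have hcaseSS : ∀ c d, c ∈ S.support → d ∈ S.support → G.Adj c d → s(c, d) ∈ S.edges := by
    intro c d hc hd hadj
    obtain ⟨i, hi1, hi2, rfl⟩ := (hmemS c).mp hc
    obtain ⟨j, hj1, hj2, rfl⟩ := (hmemS d).mp hd
    have h1 : G.dist (pxy.getVert i) (pxy.getVert j) = 1 :=
      SimpleGraph.dist_eq_one_iff_adj.mpr hadj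
    rcases le_or_gt i j with h | h
    · have h2 := hdist_seg i j h (by omega)
      have h3 : j = i + 1 := by omega
      rw [h3]
      exact hedgeS i hi1 (by omega)
    · have h2 := hdist_seg j i (by omega) (by omega)
      have h4 : G.dist (pxy.getVert j) (pxy.getVert i) = 1 := by
        rw [SimpleGraph.dist_comm]; exact h1
      have h3 : i = j + 1 := by omega
      rw [Sym2.eq_swap, h3]
      exact hedgeS j hj1 (by omega)
  have hRgmem : ∀ v, v ∈ Rg.support ↔ ∃ t, t ≤ m ∧ R.getVert t = v := by
    intro v
    rw [hRgsup, SlimAux.mem_support_iff_getVert, hRlen]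
  have hRas : R.getVert m = as := by
    rw [← hRlen]; exact R.getVert_length
  have hcaseRR : ∀ c d, c ∈ Rg.support → d ∈ Rg.support → G.Adj c d → s(c, d) ∈ Rg.edges := by
    intro c d hc hd hadj
    have hcW : Wp c := hRW c (by rwa [hRgsup] at hc)
    have hdW : Wp d := hRW d (by rwa [hRgsup] at hd)
    obtain ⟨s, hs, rfl⟩ := (hRgmem c).mp hc
    obtain ⟨t, ht, rfl⟩ := (hRgmem d).mp hd
    have hadj' : G'.Adj (R.getVert s) (R.getVert t) := (⟨hadj, hcW, hdW⟩ : G.Adj _ _ ∧ Wp _ ∧ Wp _)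
    have h1 : G'.dist (R.getVert s) (R.getVert t) = 1 :=
      SimpleGraph.dist_eq_one_iff_adj.mpr hadj'
    rw [hRgedges]
    rcases le_or_gt s t with h | h
    · have h2 := hRdist s t h ht
      have h3 : t = s + 1 := by omega
      rw [h3]
      exact SlimAux.edge_getVert_succ_mem_edges R (by omega)
    · have h2 := hRdist t s (by omega) hs
      have h4 : G'.dist (R.getVert t) (R.getVert s) = 1 := by
        rw [SimpleGraph.dist_comm]; exact h1
      have h3 : s = t + 1 := by omega
      rw [Sym2.eq_swap, h3]
      exact SlimAux.edge_getVert_succ_mem_edges R (by omega)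
  have hcaseSR : ∀ c d, c ∈ S.support → d ∈ Rg.support → G.Adj c d → s(c, d) ∈ C.edges := by
    intro c d hc hd hadj
    obtain ⟨i, hi1, hi2, rfl⟩ := (hmemS c).mp hc
    have hdWp : Wp d := hRW d (by rwa [hRgsup] at hd)
    have hdist1 : G.dist (pxy.getVert i) d = 1 := SimpleGraph.dist_eq_one_iff_adj.mpr hadj
    have hdWle : dW (pxy.getVert i) ≤ 1 := by
      have := dW_le (pxy.getVert i) d hdWp
      omega
    have hior : i = ja ∨ i = jb := by
      by_contra hcontra
      push_neg at hcontra
      have h1 : ja < i := by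
        rcases Nat.lt_or_ge ja i with h | h
        · exact h
        · exact absurd (by omega : i = ja) hcontra.1
      have h2' : i < jb := by
        rcases Nat.lt_or_ge i jb with h | h
        · exact h
        · exact absurd (by omega : i = jb) hcontra.2
      have := hint i h1 h2'
      omega
    obtain ⟨t, ht, rfl⟩ := (hRgmem d).mp hd
    rcases hior with h | h
    · subst h
      rcases lt_or_eq_of_le ht with h2 | h2
      · exfalso
        have hdist0 := hRdist 0 t (by omega) (by omega)
        rw [R.getVert_zero] at hdist0
        have hmle := hmin bs (R.getVert t) hbs ⟨hadj, hdWp⟩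
        omega
      · rw [h2, hRas, Sym2.eq_swap, hCedges]
        simp
    · subst h
      have hdistt := hRdist t m ht (le_refl m)
      rw [hRas] at hdistt
      have hmle := hmin (R.getVert t) as ⟨hadj, hdWp⟩ has
      have ht0 : t = 0 := by omega
      rw [ht0, R.getVert_zero, hCedges]
      simp
  have hchordfree : ∀ c d : V, c ∈ C.support → d ∈ C.support → G.Adj c d →
      s(c, d) ∈ C.edges := by
    intro c d hc hd hadj
    rcases hmemsplit c hc with h1 | h1 <;> rcases hmemsplit d hd with h2 | h2
    · rw [hCedges]
      exact List.mem_append_left _ (hcaseSS c d h1 h2 hadj)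
    · exact hcaseSR c d h1 h2 hadj
    · rw [Sym2.eq_swap]
      exact hcaseSR d c h2 h1 hadj.symm
    · rw [hCedges]
      have := hcaseRR c d h1 h2 hadj
      simp only [List.mem_append, List.mem_cons]
      exact Or.inr (Or.inr (Or.inl this))
  have hlenle := hchord _ C ⟨hCcycle, hchordfree⟩
  have h4 : 4 * (k / 4) + k % 4 = k := Nat.div_add_mod k 4
  have h5 : k % 4 < 4 := Nat.mod_lt _ (by norm_num)
  omega


/-- For every integer `k ≥ 4`, every finite connected `k`-chordal graph `G`
satisfies `sl(G) ≤ ⌊k/4⌋ + 1`. -/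
theorem slimness_le_of_kChordal {V : Type} [Fintype V] (G : SimpleGraph V)
    (hG : G.Connected) (k : ℕ) (hk : 4 ≤ k) (hchord : KChordal G k) :
    slimness G ≤ k / 4 + 1 := by
  exact Nat.sInf_le (isSlim_of_kChordal G hG k hk hchord)
end

section
/- Every finite connected chordal graph has slimness at most 1. -/
open SimpleGraph

set_option linter.unusedSectionVars false


section Aux
variable {V : Type} [DecidableEq V] {G : SimpleGraph V}

lemma edge_mem_of_length_one {u v : V} (w : G.Walk u v) (h : w.length = 1) :
    s(u, v) ∈ w.edges := by
  cases w with
  | nil => simp at h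
  | cons h' p =>
    have h0 : p.length = 0 := by simpa using h
    have := Walk.eq_of_length_eq_zero h0
    subst this
    simp

lemma dist_le_one_of_adj {u v : V} (h : G.Adj u v) : G.dist u v ≤ 1 := by
  have := SimpleGraph.dist_le (Walk.cons h Walk.nil)
  simpa using this

lemma adj_of_dist_eq_one {u v : V} (h : G.dist u v = 1) : G.Adj u v := by
  obtain ⟨p, hp⟩ := SimpleGraph.exists_walk_of_dist_ne_zero (G := G) (u := u) (v := v) (by omega)
  exact p.adj_of_mem_edges (edge_mem_of_length_one p (hp.trans h))

lemma geodesic_append_parts (hG : G.Connected) {x y z : V} (p : G.Walk x y) (q : G.Walk y z)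
    (h : (p.append q).length = G.dist x z) :
    p.length = G.dist x y ∧ q.length = G.dist y z := by
  rw [Walk.length_append] at h
  have h1 := SimpleGraph.dist_le p
  have h2 := SimpleGraph.dist_le q
  have h3 := hG.dist_triangle (u := x) (v := y) (w := z)
  omega

lemma geodesic_takeUntil (hG : G.Connected) {x y u : V} (p : G.Walk x y)
    (hp : p.length = G.dist x y) (hu : u ∈ p.support) :
    (p.takeUntil u hu).length = G.dist x u := by
  have := geodesic_append_parts hG (p.takeUntil u hu) (p.dropUntil u hu)
    (by rw [Walk.take_spec]; exact hp)
  exact this.1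

lemma geodesic_dropUntil (hG : G.Connected) {x y u : V} (p : G.Walk x y)
    (hp : p.length = G.dist x y) (hu : u ∈ p.support) :
    (p.dropUntil u hu).length = G.dist u y := by
  have := geodesic_append_parts hG (p.takeUntil u hu) (p.dropUntil u hu)
    (by rw [Walk.take_spec]; exact hp)
  exact this.2

lemma geodesic_isPath (hG : G.Connected) {x y : V} (p : G.Walk x y)
    (hp : p.length = G.dist x y) : p.IsPath := by
  induction p with
  | nil => exact Walk.IsPath.nil
  | @cons a b c h p ih =>
    rw [Walk.length_cons] at hp
    have h1 : G.dist b c ≤ p.length := SimpleGraph.dist_le p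
    have h2 := hG.dist_triangle (u := a) (v := b) (w := c)
    have h3 : G.dist a b ≤ 1 := dist_le_one_of_adj h
    have hplen : p.length = G.dist b c := by omega
    refine Walk.IsPath.cons (ih hplen) ?_
    intro hmem
    have h4 : G.dist a c ≤ (p.dropUntil a hmem).length := SimpleGraph.dist_le _
    have h5 := Walk.length_dropUntil_le p hmem
    omega

lemma geodesic_edge_mem (hG : G.Connected) {x y : V} (p : G.Walk x y)
    (hp : p.length = G.dist x y) {u v : V} (hu : u ∈ p.support) (hv : v ∈ p.support)
    (huv : G.Adj u v) : s(u, v) ∈ p.edges := by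
  have hd1 : G.dist u v = 1 := by
    have hle := dist_le_one_of_adj huv
    have hne : G.dist u v ≠ 0 := fun h0 => huv.ne (hG.dist_eq_zero_iff.mp h0)
    omega
  rw [← Walk.take_spec p hu, Walk.mem_support_append_iff] at hv
  rcases hv with hv | hv
  · have ht : (p.takeUntil u hu).length = G.dist x u := geodesic_takeUntil hG p hp hu
    have hw : ((p.takeUntil u hu).dropUntil v hv).length = G.dist v u :=
      geodesic_dropUntil hG _ ht hv
    have hd2 : G.dist v u = 1 := by rw [SimpleGraph.dist_comm]; exact hd1
    have := edge_mem_of_length_one _ (hw.trans hd2)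
    have := Walk.edges_takeUntil_subset p hu (Walk.edges_dropUntil_subset _ hv this)
    rwa [Sym2.eq_swap]
  · have hd : (p.dropUntil u hu).length = G.dist u y := geodesic_dropUntil hG p hp hu
    have hw : ((p.dropUntil u hu).takeUntil v hv).length = G.dist u v :=
      geodesic_takeUntil hG _ hd hv
    have := edge_mem_of_length_one _ (hw.trans hd1)
    exact Walk.edges_dropUntil_subset p hu (Walk.edges_takeUntil_subset _ hv this)

lemma dropUntil_length_lt {u v w : V} (p : G.Walk v w) (h : u ∈ p.support) (hne : u ≠ v) :
    (p.dropUntil u h).length < p.length := by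
  have hs := congrArg Walk.length (p.take_spec h)
  rw [Walk.length_append] at hs
  have h0 : (p.takeUntil u h).length ≠ 0 := fun h0 =>
    hne (Walk.eq_of_length_eq_zero h0).symm
  omega

lemma exists_shorter {s t : V} (w : G.Walk s t) :
    ∀ {u v : V}, G.Adj u v → u ∈ w.support → v ∈ w.support → s(u, v) ∉ w.edges →
    ∃ w' : G.Walk s t, w'.length < w.length ∧ ∀ x ∈ w'.support, x ∈ w.support := by
  induction w with
  | nil =>
    intro u v huv hu hv _
    simp only [Walk.support_nil, List.mem_singleton] at hu hv
    subst hu; subst hv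
    exact absurd rfl huv.ne
  | @cons a b c h p ih =>
    intro u v huv hu hv he
    rw [Walk.support_cons, List.mem_cons] at hu hv
    have he' : s(u, v) ∉ p.edges := fun hc => he (by rw [Walk.edges_cons]; exact List.mem_cons_of_mem _ hc)
    by_cases hup : u ∈ p.support <;> by_cases hvp : v ∈ p.support
    · obtain ⟨w', hlt, hsub⟩ := ih huv hup hvp he'
      refine ⟨Walk.cons h w', by simpa using hlt, ?_⟩
      intro x hx
      rw [Walk.support_cons, List.mem_cons] at hx ⊢
      exact hx.imp id (hsub x)
    · -- v = a
      have hva : v = a := (hv.resolve_right hvp)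
      subst hva
      by_cases hub : u = b
      · exact absurd (by rw [Walk.edges_cons, hub, Sym2.eq_swap]; exact List.mem_cons_self) he
      · refine ⟨Walk.cons huv.symm (p.dropUntil u hup), ?_, ?_⟩
        · have := dropUntil_length_lt p hup hub
          simp only [Walk.length_cons]
          omega
        · intro x hx
          rw [Walk.support_cons, List.mem_cons] at hx ⊢
          exact hx.imp id (fun hx' => Walk.support_dropUntil_subset p hup hx')
    · -- u = a
      have hua : u = a := (hu.resolve_right hup)
      subst hua
      by_cases hvb : v = b
      · exact absurd (by rw [Walk.edges_cons, hvb]; exact List.mem_cons_self) he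
      · refine ⟨Walk.cons huv (p.dropUntil v hvp), ?_, ?_⟩
        · have := dropUntil_length_lt p hvp hvb
          simp only [Walk.length_cons]
          omega
        · intro x hx
          rw [Walk.support_cons, List.mem_cons] at hx ⊢
          exact hx.imp id (fun hx' => Walk.support_dropUntil_subset p hvp hx')
    · have hua : u = a := (hu.resolve_right hup)
      have hva : v = a := (hv.resolve_right hvp)
      exact absurd (hua.trans hva.symm) huv.ne

lemma exists_first (P : V → Prop) {s t : V} (w : G.Walk s t) :
    ¬ P s → P t →
    ∃ (c : V) (q : G.Walk s c) (r : G.Walk c t), w = q.append r ∧ P c ∧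
      ∀ x ∈ q.support, x = c ∨ ¬ P x := by
  induction w with
  | nil => intro h1 h2; exact absurd h2 h1
  | @cons a b c h p ih =>
    intro h1 h2
    by_cases hP : P b
    · refine ⟨b, Walk.cons h Walk.nil, p, (Walk.cons_nil_append h p).symm, hP, ?_⟩
      intro x hx
      simp only [Walk.support_cons, Walk.support_nil, List.mem_cons, List.mem_singleton] at hx
      rcases hx with rfl | rfl | h'
      · exact Or.inr h1
      · exact Or.inl rfl
      · exact absurd h' (by simp)
    · obtain ⟨c', q, r, heq, hc, hq⟩ := ih hP h2
      refine ⟨c', Walk.cons h q, r, by rw [Walk.cons_append, ← heq], hc, ?_⟩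
      intro x hx
      rw [Walk.support_cons, List.mem_cons] at hx
      rcases hx with rfl | hx
      · exact Or.inr h1
      · exact hq x hx

end Aux

/-- Every finite connected chordal graph has slimness at most 1. -/
theorem slimness_le_one_of_chordal {V : Type} [Fintype V] (G : SimpleGraph V)
    (hG : G.Connected) (hchord : KChordal G 3) :
    slimness G ≤ 1 := by
  classical
  have hslim : IsSlim G 1 := by
    intro x y z pxy pxz pyz hxy hxz hyz u hu
    by_contra hcon
    -- hcon : ¬ ∃ v, (v ∈ pxz.support ∨ v ∈ pyz.support) ∧ G.dist u v ≤ 1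
    have hxy' : pxy.length = G.dist x y := hxy
    have hnearx : ∃ v, (v ∈ pxz.support ∨ v ∈ pyz.support) ∧ G.dist x v ≤ 1 :=
      ⟨x, Or.inl pxz.start_mem_support, by simp [SimpleGraph.dist_self]⟩
    have hneary : ∃ v, (v ∈ pxz.support ∨ v ∈ pyz.support) ∧ G.dist y v ≤ 1 :=
      ⟨y, Or.inr pyz.start_mem_support, by simp [SimpleGraph.dist_self]⟩
    obtain ⟨a, qa, ra, hta, hna, hqa⟩ :=
      exists_first (fun w => ∃ v, (v ∈ pxz.support ∨ v ∈ pyz.support) ∧ G.dist w v ≤ 1)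
        (pxy.takeUntil u hu).reverse hcon hnearx
    obtain ⟨b, qb, rb, hdb, hnb, hqb⟩ :=
      exists_first (fun w => ∃ v, (v ∈ pxz.support ∨ v ∈ pyz.support) ∧ G.dist w v ≤ 1)
        (pxy.dropUntil u hu) hcon hneary
    -- σ : the geodesic segment from a to b
    have ht : pxy.takeUntil u hu = ra.reverse.append qa.reverse := by
      have h := congrArg Walk.reverse hta
      rwa [Walk.reverse_reverse, Walk.reverse_append] at h
    have hpxy2 : pxy = (ra.reverse.append qa.reverse).append (qb.append rb) := by
      conv_lhs => rw [← Walk.take_spec pxy hu]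
      rw [ht, hdb]
    have hE : pxy = ra.reverse.append ((qa.reverse.append qb).append rb) := by
      rw [hpxy2]
      simp [Walk.append_assoc]
    have h1 := (geodesic_append_parts hG _ _ (by rw [← hE]; exact hxy')).2
    have hσgeo : (qa.reverse.append qb).length = G.dist a b :=
      (geodesic_append_parts hG _ _ h1).1
    have hqa1 : 1 ≤ qa.length := by
      by_contra h0
      have h0' : qa.length = 0 := by omega
      have huq := Walk.eq_of_length_eq_zero h0'
      subst huq
      exact hcon hna
    have hqb1 : 1 ≤ qb.length := by
      by_contra h0
      have h0' : qb.length = 0 := by omega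
      have huq := Walk.eq_of_length_eq_zero h0'
      subst huq
      exact hcon hnb
    have hσlen : (qa.reverse.append qb).length = qa.length + qb.length := by
      rw [Walk.length_append, Walk.length_reverse]
    have hdab : 2 ≤ G.dist a b := by omega
    have hab : a ≠ b := by
      intro h
      subst h
      rw [SimpleGraph.dist_self] at hdab
      omega
    have hnadj : ¬ G.Adj a b := fun h => by
      have := dist_le_one_of_adj h
      omega
    have hPσ : ∀ v ∈ (qa.reverse.append qb).support,
        v = a ∨ v = b ∨ ¬ ∃ v', (v' ∈ pxz.support ∨ v' ∈ pyz.support) ∧ G.dist v v' ≤ 1 := by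
      intro v hv
      rw [Walk.mem_support_append_iff] at hv
      rcases hv with hv | hv
      · rw [Walk.support_reverse, List.mem_reverse] at hv
        rcases hqa v hv with h | h
        · exact Or.inl h
        · exact Or.inr (Or.inr h)
      · rcases hqb v hv with h | h
        · exact Or.inr (Or.inl h)
        · exact Or.inr (Or.inr h)
    -- walks to z through the union of the two other sides
    have hSwalk : ∀ s, (s ∈ pxz.support ∨ s ∈ pyz.support) →
        ∃ w : G.Walk s z, ∀ x' ∈ w.support, (x' ∈ pxz.support ∨ x' ∈ pyz.support) := by
      rintro s (hs | hs)
      · exact ⟨pxz.dropUntil s hs, fun x' hx' => Or.inl (Walk.support_dropUntil_subset _ _ hx')⟩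
      · exact ⟨pyz.dropUntil s hs, fun x' hx' => Or.inr (Walk.support_dropUntil_subset _ _ hx')⟩
    have hnearwalk : ∀ c, (∃ v, (v ∈ pxz.support ∨ v ∈ pyz.support) ∧ G.dist c v ≤ 1) →
        ∃ w : G.Walk c z, ∀ x' ∈ w.support, x' = c ∨ (x' ∈ pxz.support ∨ x' ∈ pyz.support) := by
      rintro c ⟨v, hvS, hdist⟩
      obtain ⟨wz, hwz⟩ := hSwalk v hvS
      rcases Nat.le_one_iff_eq_zero_or_eq_one.mp hdist with h0 | h1
      · have hcv : c = v := hG.dist_eq_zero_iff.mp h0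
        subst hcv
        exact ⟨wz, fun x' hx' => Or.inr (hwz x' hx')⟩
      · refine ⟨Walk.cons (adj_of_dist_eq_one h1) wz, ?_⟩
        intro x' hx'
        rw [Walk.support_cons, List.mem_cons] at hx'
        exact hx'.imp id (fun h => hwz x' h)
    obtain ⟨wb, hwb⟩ := hnearwalk b hnb
    obtain ⟨wa, hwa⟩ := hnearwalk a hna
    have hτ0 : ∀ x' ∈ (wb.append wa.reverse).support,
        x' = b ∨ x' = a ∨ (x' ∈ pxz.support ∨ x' ∈ pyz.support) := by
      intro x' hx'
      rw [Walk.mem_support_append_iff] at hx'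
      rcases hx' with h | h
      · rcases hwb x' h with h' | h'
        · exact Or.inl h'
        · exact Or.inr (Or.inr h')
      · rw [Walk.support_reverse, List.mem_reverse] at h
        rcases hwa x' h with h' | h'
        · exact Or.inr (Or.inl h')
        · exact Or.inr (Or.inr h')
    -- choose a minimum-length walk from b to a through the union
    have hLne : Set.Nonempty {n : ℕ | ∃ w : G.Walk b a,
        (∀ x' ∈ w.support, x' = b ∨ x' = a ∨ (x' ∈ pxz.support ∨ x' ∈ pyz.support)) ∧
          w.length = n} :=
      ⟨(wb.append wa.reverse).length, wb.append wa.reverse, hτ0, rfl⟩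
    obtain ⟨τm, hTm, hτmlen⟩ := Nat.sInf_mem hLne
    have hmin : ∀ w : G.Walk b a,
        (∀ x' ∈ w.support, x' = b ∨ x' = a ∨ (x' ∈ pxz.support ∨ x' ∈ pyz.support)) →
        sInf {n : ℕ | ∃ w : G.Walk b a,
          (∀ x' ∈ w.support, x' = b ∨ x' = a ∨ (x' ∈ pxz.support ∨ x' ∈ pyz.support)) ∧
            w.length = n} ≤ w.length :=
      fun w hw => Nat.sInf_le ⟨w, hw, rfl⟩
    have hTτ : ∀ x' ∈ τm.bypass.support,
        x' = b ∨ x' = a ∨ (x' ∈ pxz.support ∨ x' ∈ pyz.support) :=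
      fun x' hx' => hTm x' (Walk.support_bypass_subset _ hx')
    have hτpath : τm.bypass.IsPath := Walk.bypass_isPath τm
    have hτlen : τm.bypass.length ≤ τm.length := Walk.length_bypass_le τm
    have hτind : ∀ p q : V, p ∈ τm.bypass.support → q ∈ τm.bypass.support → G.Adj p q →
        s(p, q) ∈ τm.bypass.edges := by
      intro p q hp hq hadj
      by_contra hne
      obtain ⟨w', hlt, hsub⟩ := exists_shorter τm.bypass hadj hp hq hne
      have := hmin w' (fun x' hx' => hTτ x' (hsub x' hx'))
      omega
    have hτ2 : 2 ≤ τm.bypass.length := by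
      by_contra h2
      have : τm.bypass.length = 0 ∨ τm.bypass.length = 1 := by omega
      rcases this with hl | hl
      · exact hab (Walk.eq_of_length_eq_zero hl).symm
      · exact hnadj (τm.bypass.adj_of_mem_edges (edge_mem_of_length_one _ hl)).symm
    have hσpath : (qa.reverse.append qb).IsPath := geodesic_isPath hG _ hσgeo
    have hfarτ : ∀ v, ¬ (∃ v', (v' ∈ pxz.support ∨ v' ∈ pyz.support) ∧ G.dist v v' ≤ 1) →
        v ∉ τm.bypass.support := by
      intro v hfar hvτ
      rcases hTτ v hvτ with rfl | rfl | hS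
      · exact hfar hnb
      · exact hfar hna
      · exact hfar ⟨v, hS, by simp [SimpleGraph.dist_self]⟩
    -- the cycle
    have hcyc : ((qa.reverse.append qb).append τm.bypass).IsCycle := by
      rw [Walk.isCycle_def]
      refine ⟨?_, ?_, ?_⟩
      · rw [Walk.isTrail_def, Walk.edges_append, List.nodup_append]
        refine ⟨hσpath.edges_nodup, hτpath.edges_nodup, ?_⟩
        intro e heσ e' heτ heq
        subst heq
        revert heσ heτ
        induction e using Sym2.ind with
        | _ p q =>
          intro heσ heτ
          have hpσ := Walk.fst_mem_support_of_mem_edges _ heσ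
          have hqσ := Walk.snd_mem_support_of_mem_edges _ heσ
          have hpτ := Walk.fst_mem_support_of_mem_edges _ heτ
          have hqτ := Walk.snd_mem_support_of_mem_edges _ heτ
          have hadj := Walk.adj_of_mem_edges _ heσ
          have hp' : p = a ∨ p = b := by
            rcases hPσ p hpσ with h | h | h
            · exact Or.inl h
            · exact Or.inr h
            · exact absurd hpτ (hfarτ p h)
          have hq' : q = a ∨ q = b := by
            rcases hPσ q hqσ with h | h | h
            · exact Or.inl h
            · exact Or.inr h
            · exact absurd hqτ (hfarτ q h)
          rcases hp' with rfl | rfl <;> rcases hq' with rfl | rfl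
          · exact hadj.ne rfl
          · exact hnadj hadj
          · exact hnadj hadj.symm
          · exact hadj.ne rfl
      · intro hnil
        have hl0 : ((qa.reverse.append qb).append τm.bypass).length = 0 := by rw [hnil]; rfl
        rw [Walk.length_append] at hl0
        omega
      · rw [Walk.tail_support_append, List.nodup_append]
        have hσnd := hσpath.support_nodup
        rw [Walk.support_eq_cons] at hσnd
        have hτnd := hτpath.support_nodup
        rw [Walk.support_eq_cons] at hτnd
        obtain ⟨haσ, hσnd'⟩ := List.nodup_cons.mp hσnd
        obtain ⟨hbτ, hτnd'⟩ := List.nodup_cons.mp hτnd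
        refine ⟨hσnd', hτnd', ?_⟩
        intro v hvσ v' hvτ heq
        subst heq
        have hvσs : v ∈ (qa.reverse.append qb).support := List.mem_of_mem_tail hvσ
        have hvτs : v ∈ τm.bypass.support := List.mem_of_mem_tail hvτ
        have hva : v ≠ a := fun h => haσ (h ▸ hvσ)
        rcases hPσ v hvσs with h | rfl | h
        · exact hva h
        · exact hbτ hvτ
        · exact (hfarτ v h) hvτs
    -- the cycle is induced
    have hedge : ∀ p q : V, p ∈ (qa.reverse.append qb).support → q ∈ τm.bypass.support →
        G.Adj p q →
        s(p, q) ∈ (qa.reverse.append qb).edges ∨ s(p, q) ∈ τm.bypass.edges := by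
      intro p q hpσ hqτ hadj
      rcases hPσ p hpσ with rfl | rfl | hfar
      · exact Or.inr (hτind p q (Walk.end_mem_support τm.bypass) hqτ hadj)
      · exact Or.inr (hτind p q (Walk.start_mem_support τm.bypass) hqτ hadj)
      · rcases hTτ q hqτ with rfl | rfl | hqS
        · exact Or.inl (geodesic_edge_mem hG _ hσgeo hpσ
            (Walk.end_mem_support (qa.reverse.append qb)) hadj)
        · exact Or.inl (geodesic_edge_mem hG _ hσgeo hpσ
            (Walk.start_mem_support (qa.reverse.append qb)) hadj)
        · exact absurd ⟨q, hqS, dist_le_one_of_adj hadj⟩ hfar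
    have hind : IsInducedCycle G ((qa.reverse.append qb).append τm.bypass) := by
      refine ⟨hcyc, ?_⟩
      intro p q hp hq hadj
      rw [Walk.mem_support_append_iff] at hp hq
      rw [Walk.edges_append, List.mem_append]
      rcases hp with hp | hp <;> rcases hq with hq | hq
      · exact Or.inl (geodesic_edge_mem hG _ hσgeo hp hq hadj)
      · exact hedge p q hp hq hadj
      · rcases hedge q p hq hp hadj.symm with h | h
        · exact Or.inl (by rwa [Sym2.eq_swap])
        · exact Or.inr (by rwa [Sym2.eq_swap])
      · exact Or.inr (hτind p q hp hq hadj)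
    have h3 := hchord a ((qa.reverse.append qb).append τm.bypass) hind
    rw [Walk.length_append] at h3
    omega
  exact Nat.sInf_le hslim
end

section
/- Every finite connected simple AT-free graph has slimness at most 1. -/
open SimpleGraph

/-- `{x,y,z}` is an asteroidal triple of `G`: an independent triple such that each pair
is joined by a path avoiding the closed neighborhood of the third vertex. -/
def IsAsteroidalTriple {V : Type} (G : SimpleGraph V) (x y z : V) : Prop :=
  x ≠ y ∧ y ≠ z ∧ x ≠ z ∧ ¬ G.Adj x y ∧ ¬ G.Adj y z ∧ ¬ G.Adj x z ∧
  (∃ p : G.Walk x y, ∀ w ∈ p.support, w ≠ z ∧ ¬ G.Adj z w) ∧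
  (∃ p : G.Walk y z, ∀ w ∈ p.support, w ≠ x ∧ ¬ G.Adj x w) ∧
  (∃ p : G.Walk x z, ∀ w ∈ p.support, w ≠ y ∧ ¬ G.Adj y w)

/-- `G` is AT-free: it contains no asteroidal triple. -/
def ATFree {V : Type} (G : SimpleGraph V) : Prop :=
  ∀ x y z : V, ¬ IsAsteroidalTriple G x y z


lemma geo_split {V : Type} {G : SimpleGraph V} [DecidableEq V] (hG : G.Connected) {x y u : V}
    (p : G.Walk x y) (hp : p.length = G.dist x y) (hu : u ∈ p.support) :
    (p.takeUntil u hu).length = G.dist x u ∧ (p.dropUntil u hu).length = G.dist u y := by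
  have h1 : G.dist x u ≤ (p.takeUntil u hu).length := SimpleGraph.dist_le _
  have h2 : G.dist u y ≤ (p.dropUntil u hu).length := SimpleGraph.dist_le _
  have h3 : (p.takeUntil u hu).length + (p.dropUntil u hu).length = p.length := by
    rw [← SimpleGraph.Walk.length_append, SimpleGraph.Walk.take_spec]
  have h4 := hG.dist_triangle (u := x) (v := u) (w := y)
  omega

lemma geo_add {V : Type} {G : SimpleGraph V} [DecidableEq V] (hG : G.Connected) {x y u : V}
    (p : G.Walk x y) (hp : p.length = G.dist x y) (hu : u ∈ p.support) :
    G.dist x u + G.dist u y = G.dist x y := by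
  obtain ⟨h1, h2⟩ := geo_split hG p hp hu
  have h3 : (p.takeUntil u hu).length + (p.dropUntil u hu).length = p.length := by
    rw [← SimpleGraph.Walk.length_append, SimpleGraph.Walk.take_spec]
  omega

lemma adj_dist_le_one {V : Type} {G : SimpleGraph V} {a b : V} (h : G.Adj a b) :
    G.dist a b ≤ 1 := by
  have := SimpleGraph.dist_le (SimpleGraph.Walk.cons h SimpleGraph.Walk.nil)
  simpa using this

/-- Every finite connected AT-free graph has slimness at most 1. -/
theorem slimness_le_one_of_atFree {V : Type} [Fintype V] (G : SimpleGraph V)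
    (hG : G.Connected) (hAT : ATFree G) :
    slimness G ≤ 1 := by
  classical
  have hs : IsSlim G 1 := by
    intro x y z pxy pxz pyz hxy hxz hyz u hu
    by_contra hcon
    push_neg at hcon
    have hdxz : ∀ v ∈ pxz.support, 2 ≤ G.dist u v := fun v hv => hcon v (Or.inl hv)
    have hdyz : ∀ v ∈ pyz.support, 2 ≤ G.dist u v := fun v hv => hcon v (Or.inr hv)
    have hux : 2 ≤ G.dist u x := hdxz x pxz.start_mem_support
    have huy : 2 ≤ G.dist u y := hdyz y pyz.start_mem_support
    have cxu : G.dist x u = G.dist u x := SimpleGraph.dist_comm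
    have hadd : G.dist x u + G.dist u y = G.dist x y := geo_add hG pxy hxy hu
    obtain ⟨htl, hdl⟩ := geo_split hG pxy hxy hu
    apply hAT x y u
    refine ⟨?_, ?_, ?_, ?_, ?_, ?_, ?_, ?_, ?_⟩
    · intro heq
      have h0 : G.dist x y = 0 := by rw [heq]; exact SimpleGraph.dist_self
      omega
    · intro heq
      have h0 : G.dist u y = 0 := by rw [heq]; exact SimpleGraph.dist_self
      omega
    · intro heq
      have h0 : G.dist u x = 0 := by rw [heq]; exact SimpleGraph.dist_self
      omega
    · intro h
      have := adj_dist_le_one h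
      omega
    · intro h
      have := adj_dist_le_one h
      have : G.dist y u = G.dist u y := SimpleGraph.dist_comm
      omega
    · intro h
      have := adj_dist_le_one h
      omega
    · -- walk x → y through z, avoiding N[u]
      refine ⟨pxz.append pyz.reverse, ?_⟩
      intro w hw
      rw [SimpleGraph.Walk.mem_support_append_iff] at hw
      have hw2 : 2 ≤ G.dist u w := by
        rcases hw with hw | hw
        · exact hdxz w hw
        · exact hdyz w (by simpa [SimpleGraph.Walk.support_reverse] using hw)
      constructor
      · intro heq
        have h0 : G.dist u w = 0 := by rw [heq]; exact SimpleGraph.dist_self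
        omega
      · intro h
        have := adj_dist_le_one h
        omega
    · -- walk y → u, avoiding N[x]
      refine ⟨(pxy.dropUntil u hu).reverse, ?_⟩
      intro w hw
      rw [SimpleGraph.Walk.support_reverse, List.mem_reverse] at hw
      have h1 : G.dist u w + G.dist w y = G.dist u y := geo_add hG _ hdl hw
      have h2 : G.dist x y ≤ G.dist x w + G.dist w y := hG.dist_triangle
      have h3 : G.dist x w = G.dist w x := SimpleGraph.dist_comm
      have hxw : 2 ≤ G.dist x w := by omega
      constructor
      · intro heq
        have h0 : G.dist x w = 0 := by rw [heq]; exact SimpleGraph.dist_self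
        omega
      · intro h
        have := adj_dist_le_one h
        omega
    · -- walk x → u, avoiding N[y]
      refine ⟨pxy.takeUntil u hu, ?_⟩
      intro w hw
      have h1 : G.dist x w + G.dist w u = G.dist x u := geo_add hG _ htl hw
      have h2 : G.dist x y ≤ G.dist x w + G.dist w y := hG.dist_triangle
      have h3 : G.dist y w = G.dist w y := SimpleGraph.dist_comm
      have hyw : 2 ≤ G.dist w y := by omega
      constructor
      · intro heq
        have h0 : G.dist w y = 0 := by rw [heq]; exact SimpleGraph.dist_self
        omega
      · intro h
        have := adj_dist_le_one h
        omega
  exact Nat.sInf_le hs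
end

section
/- A finite connected simple graph G has slimness 0 if and only if G is a block graph, i.e., every block (maximal biconnected subgraph) of G is a clique. -/
open SimpleGraph

/-- The induced subgraph of `G` on `B` is connected and has no cut vertex
(i.e., it is biconnected: removing any vertex of `B` keeps it connected). -/
def ConnNoCutVertex {V : Type} (G : SimpleGraph V) (B : Set V) : Prop :=
  (G.induce B).Connected ∧ ∀ v ∈ B, (G.induce (B \ {v})).Connected

/-- `B` is a block of `G`: a maximal connected induced subgraph without a cut vertex. -/
def IsBlockSet {V : Type} (G : SimpleGraph V) (B : Set V) : Prop :=
  ConnNoCutVertex G B ∧ ∀ B' : Set V, B ⊆ B' → ConnNoCutVertex G B' → B = B'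

section helpers
variable {V : Type} [DecidableEq V] {G : SimpleGraph V}

lemma isPath_of_isGeodesic {x y : V} {p : G.Walk x y} (hp : IsGeodesic G p) : p.IsPath := by
  have h1 : G.dist x y ≤ p.bypass.length := G.dist_le _
  have h2 : p.length ≤ p.bypass.length := by rw [hp]; exact h1
  have := p.bypass_eq_self_of_length_le h2
  rw [← this]; exact p.bypass_isPath

lemma isGeodesic_takeUntil {x y w : V} {p : G.Walk x y} (hp : IsGeodesic G p)
    (hw : w ∈ p.support) :
    IsGeodesic G (p.takeUntil w hw) ∧ IsGeodesic G (p.dropUntil w hw) := by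
  have hlen : (p.takeUntil w hw).length + (p.dropUntil w hw).length = p.length := by
    conv_rhs => rw [← p.take_spec hw]
    exact (Walk.length_append _ _).symm
  have h1 : G.dist x w ≤ (p.takeUntil w hw).length := G.dist_le _
  have h2 : G.dist w y ≤ (p.dropUntil w hw).length := G.dist_le _
  obtain ⟨q1, hq1⟩ := (Walk.reachable (p.takeUntil w hw)).exists_walk_length_eq_dist
  obtain ⟨q2, hq2⟩ := (Walk.reachable (p.dropUntil w hw)).exists_walk_length_eq_dist
  have h3 : G.dist x y ≤ G.dist x w + G.dist w y := by
    have := G.dist_le (q1.append q2)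
    rwa [Walk.length_append, hq1, hq2] at this
  have hp' : p.length = G.dist x y := hp
  constructor <;> unfold IsGeodesic <;> omega

lemma reach_of_walk {s : Set V} : ∀ {a b : V} (p : G.Walk a b)
    (hp : ∀ c ∈ p.support, c ∈ s),
    (G.induce s).Reachable ⟨a, hp a p.start_mem_support⟩ ⟨b, hp b p.end_mem_support⟩ := by
  intro a b p
  induction p with
  | nil => exact fun _ => Reachable.refl _
  | @cons a c b h q ih =>
    intro hp
    have hc : c ∈ s := hp c (by simp)
    have hadj : (G.induce s).Adj ⟨a, hp a (Walk.start_mem_support _)⟩ ⟨c, hc⟩ := h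
    exact hadj.reachable.trans (ih fun d hd => hp d (by simp [hd]))

end helpers

section slim
variable {V : Type} [DecidableEq V] {G : SimpleGraph V}

lemma edge_geodesic {x z : V} (h : G.Adj x z) : IsGeodesic G (Walk.cons h Walk.nil) := by
  unfold IsGeodesic
  simp [dist_eq_one_iff_adj.mpr h]

/-- every geodesic between nonadjacent x,y passes through any common neighbor z -/
lemma mem_geodesic_of_common_nbr (h0 : IsSlim G 0) (hG : G.Connected) {x z y : V}
    (hxz : G.Adj x z) (hzy : G.Adj z y) (hnxy : ¬ G.Adj x y) (hne : x ≠ y) :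
    ∀ P : G.Walk x y, IsGeodesic G P → z ∈ P.support := by
  have hd : G.dist x y = 2 := by
    have hle : G.dist x y ≤ 2 := by
      have := G.dist_le (Walk.cons hxz (Walk.cons hzy Walk.nil))
      simpa using this
    have h1 : G.dist x y ≠ 1 := fun h => hnxy (dist_eq_one_iff_adj.mp h)
    have h2 : G.dist x y ≠ 0 := fun h => hne (hG.dist_eq_zero_iff.mp h)
    omega
  intro P hP
  have hlen : P.length = 2 := by rw [hP, hd]
  have hm1 : G.Adj x (P.getVert 1) := by
    have := P.adj_getVert_succ (i := 0) (by omega)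
    simpa using this
  have hm2 : G.Adj (P.getVert 1) y := by
    have := P.adj_getVert_succ (i := 1) (by omega)
    rw [show (1:ℕ)+1 = P.length by omega, P.getVert_length] at this
    exact this
  have hmem : P.getVert 1 ∈ P.support := Walk.mem_support_iff_exists_getVert.mpr ⟨1, rfl, by omega⟩
  obtain ⟨v, hv, hdist⟩ := h0 x y z P (Walk.cons hxz Walk.nil) (Walk.cons hzy.symm Walk.nil)
    hP (edge_geodesic hxz) (edge_geodesic hzy.symm) (P.getVert 1) hmem
  have hmv : P.getVert 1 = v := hG.dist_eq_zero_iff.mp (Nat.le_zero.mp hdist)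
  simp only [Walk.support_cons, Walk.support_nil, List.mem_cons, List.mem_singleton,
    List.not_mem_nil, or_false] at hv
  rcases hv with (rfl | rfl) | (rfl | rfl)
  · exact absurd (hmv ▸ hm1) G.irrefl
  · exact hmv ▸ hmem
  · exact absurd (hmv ▸ hm2) G.irrefl
  · exact hmv ▸ hmem

/-- if every geodesic between x and y passes through z, then every walk does -/
lemma lemB (h0 : IsSlim G 0) (hG : G.Connected) :
    ∀ (n : ℕ) {x y z : V} (Q : G.Walk x y), Q.length ≤ n → z ∉ Q.support →
      (∀ P : G.Walk x y, IsGeodesic G P → z ∈ P.support) → False := by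
  intro n
  induction n with
  | zero =>
    intro x y z Q hlen hz hall
    cases Q with
    | nil =>
      have := hall Walk.nil (by simp [IsGeodesic, SimpleGraph.dist_self])
      simp only [Walk.support_nil, List.mem_singleton] at this
      exact hz (by simp [this])
    | cons h Q' => simp at hlen
  | succ n ih =>
    intro x y z Q hlen hz hall
    cases Q with
    | nil =>
      have := hall Walk.nil (by simp [IsGeodesic, SimpleGraph.dist_self])
      simp only [Walk.support_nil, List.mem_singleton] at this
      exact hz (by simp [this])
    | @cons _ c _ h Q' =>
      by_cases hall' : ∀ W : G.Walk c y, IsGeodesic G W → z ∈ W.support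
      · exact ih Q' (by simpa using hlen) (fun hm => hz (by simp [hm])) hall'
      · push_neg at hall'
        obtain ⟨W, hWgeo, hzW⟩ := hall'
        obtain ⟨P0, hP0len⟩ := hG.exists_walk_length_eq_dist x y
        have hP0 : IsGeodesic G P0 := hP0len
        have hz0 : z ∈ P0.support := hall P0 hP0
        have hWrev : IsGeodesic G W.reverse := by
          unfold IsGeodesic
          rw [Walk.length_reverse, hWgeo, G.dist_comm]
        obtain ⟨v, hv, hdist⟩ := h0 x y c P0 (Walk.cons h Walk.nil) W.reverse
          hP0 (edge_geodesic h) hWrev z hz0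
        have hzv : z = v := hG.dist_eq_zero_iff.mp (Nat.le_zero.mp hdist)
        subst hzv
        rcases hv with hv | hv
        · simp only [Walk.support_cons, Walk.support_nil, List.mem_cons,
            List.mem_singleton, List.not_mem_nil, or_false] at hv
          rcases hv with rfl | rfl
          · exact hz (Walk.start_mem_support _)
          · exact hz (by simp)
        · rw [Walk.support_reverse, List.mem_reverse] at hv
          exact hzW hv

end slim

section fwd
variable {V : Type} [DecidableEq V] {G : SimpleGraph V}

lemma adj_of_induce_walk (h0 : IsSlim G 0) (hG : G.Connected) {B : Set V}
    (hB : ConnNoCutVertex G B) :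
    ∀ (n : ℕ) (a b : B) (p : (G.induce B).Walk a b), p.length ≤ n →
      (a : V) = b ∨ G.Adj a b := by
  intro n
  induction n with
  | zero =>
    intro a b p hlen
    cases p with
    | nil => exact Or.inl rfl
    | cons h q => simp at hlen
  | succ n ih =>
    intro a b p hlen
    cases p with
    | nil => exact Or.inl rfl
    | @cons _ c _ h q =>
      cases q with
      | nil => exact Or.inr h
      | @cons _ d _ h2 q2 =>
        by_cases had : (a : V) = d
        · obtain rfl : a = d := Subtype.ext had
          exact ih a b q2 (by simp at hlen ⊢; omega)
        · by_cases hadj : G.Adj a d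
          · exact ih a b (Walk.cons hadj q2) (by simp at hlen; show q2.length + 1 ≤ n; omega)
          · -- contradiction via lemB
            exfalso
            have hac : G.Adj (a : V) c := h
            have hcd : G.Adj (c : V) d := h2
            have haB : (a : V) ∈ B \ {(c : V)} := ⟨a.2, fun hc => G.irrefl (hc ▸ hac)⟩
            have hdB : (d : V) ∈ B \ {(c : V)} := ⟨d.2, fun hc => G.irrefl (hc ▸ hcd.symm)⟩
            obtain ⟨w⟩ := (hB.2 c c.2).preconnected ⟨a, haB⟩ ⟨d, hdB⟩
            let W : G.Walk a d := w.map (SimpleGraph.Embedding.induce (B \ {(c : V)})).toHom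
            have hcW : (c : V) ∉ W.support := by
              intro hmem
              change (c : V) ∈ (w.map (SimpleGraph.Embedding.induce (B \ {(c : V)})).toHom).support at hmem
              rw [Walk.support_map, List.mem_map] at hmem
              obtain ⟨t, _, ht⟩ := hmem
              exact t.2.2 ht
            exact lemB h0 hG W.length W le_rfl hcW
              (mem_geodesic_of_common_nbr h0 hG hac hcd hadj had)

lemma clique_of_cncv (h0 : IsSlim G 0) (hG : G.Connected) {B : Set V}
    (hB : ConnNoCutVertex G B) : G.IsClique B := by
  intro x hx y hy hne
  obtain ⟨p⟩ := hB.1.preconnected ⟨x, hx⟩ ⟨y, hy⟩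
  rcases adj_of_induce_walk h0 hG hB p.length ⟨x, hx⟩ ⟨y, hy⟩ p le_rfl with h | h
  · exact absurd h hne
  · exact h

end fwd

section bwd
variable {V : Type} [DecidableEq V] {G : SimpleGraph V}

/-- From a vertex on a path, one can travel along the path to one of the endpoints
avoiding any fixed vertex `v ≠ a`. -/
lemma split_avoid {x y : V} {p : G.Walk x y} (hp : p.IsPath) {a v : V}
    (ha : a ∈ p.support) (hav : a ≠ v) :
    ∃ b, (b = x ∨ b = y) ∧ ∃ q : G.Walk a b, ∀ c ∈ q.support, c ∈ p.support ∧ c ≠ v := by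
  by_cases hv2 : v ∈ (p.dropUntil a ha).support
  · -- v in the second part; walk back to x through the first part
    refine ⟨x, Or.inl rfl, (p.takeUntil a ha).reverse, fun c hc => ?_⟩
    rw [Walk.support_reverse, List.mem_reverse] at hc
    refine ⟨p.support_takeUntil_subset ha hc, fun hcv => ?_⟩
    subst hcv
    -- c = v is in both parts: contradiction with nodup
    have hsplit : p.support = (p.takeUntil a ha).support ++ (p.dropUntil a ha).support.tail := by
      conv_lhs => rw [← p.take_spec ha]
      exact Walk.support_append _ _
    have hnodup : p.support.Nodup := hp.support_nodup
    rw [hsplit] at hnodup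
    have hdisj := List.disjoint_of_nodup_append hnodup
    have hv2' : c ∈ (p.dropUntil a ha).support.tail := by
      have := (p.dropUntil a ha).support_eq_cons
      rw [this] at hv2
      rcases List.mem_cons.mp hv2 with h | h
      · exact absurd h.symm hav
      · exact h
    exact hdisj hc hv2'
  · exact ⟨y, Or.inr rfl, p.dropUntil a ha,
      fun c hc => ⟨p.support_dropUntil_subset ha hc, fun hcv => hv2 (hcv ▸ hc)⟩⟩

lemma cncv_of_two_paths {x y : V} (P Q : G.Walk x y) (hP : P.IsPath) (hQ : Q.IsPath)
    (hxy : x ≠ y)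
    (hdisj : ∀ w, w ∈ P.support → w ∈ Q.support → w = x ∨ w = y) :
    ConnNoCutVertex G {v | v ∈ P.support ∨ v ∈ Q.support} := by
  set S : Set V := {v | v ∈ P.support ∨ v ∈ Q.support} with hS
  have hxS : x ∈ S := Or.inl P.start_mem_support
  have hyS : y ∈ S := Or.inl P.end_mem_support
  constructor
  · -- connected
    rw [connected_iff]
    refine ⟨?_, ⟨⟨x, hxS⟩⟩⟩
    have key : ∀ (a : V) (ha : a ∈ S), (G.induce S).Reachable ⟨a, ha⟩ ⟨x, hxS⟩ := by
      intro a ha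
      rcases ha with haP | haQ
      · have hsub : ∀ c ∈ (P.takeUntil a haP).reverse.support, c ∈ S := by
          intro c hc
          rw [Walk.support_reverse, List.mem_reverse] at hc
          exact Or.inl (P.support_takeUntil_subset haP hc)
        exact reach_of_walk (P.takeUntil a haP).reverse hsub
      · have hsub : ∀ c ∈ (Q.takeUntil a haQ).reverse.support, c ∈ S := by
          intro c hc
          rw [Walk.support_reverse, List.mem_reverse] at hc
          exact Or.inr (Q.support_takeUntil_subset haQ hc)
        exact reach_of_walk (Q.takeUntil a haQ).reverse hsub
    rintro ⟨a, ha⟩ ⟨b, hb⟩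
    exact (key a ha).trans (key b hb).symm
  · -- no cut vertex
    intro v hv
    rw [connected_iff]
    -- every vertex of S \ {v} can reach x or y inside S \ {v}
    have key : ∀ (a : V) (ha : a ∈ S \ {v}), ∃ b, (b = x ∨ b = y) ∧ ∃ hb : b ∈ S \ {v},
        (G.induce (S \ {v})).Reachable ⟨a, ha⟩ ⟨b, hb⟩ := by
      rintro a ⟨haS, hav⟩
      have hav' : a ≠ v := hav
      rcases haS with haP | haQ
      · obtain ⟨b, hb, q, hq⟩ := split_avoid hP haP hav'
        have hsub : ∀ c ∈ q.support, c ∈ S \ {v} :=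
          fun c hc => ⟨Or.inl (hq c hc).1, (hq c hc).2⟩
        exact ⟨b, hb, hsub b q.end_mem_support, reach_of_walk q hsub⟩
      · obtain ⟨b, hb, q, hq⟩ := split_avoid hQ haQ hav'
        have hsub : ∀ c ∈ q.support, c ∈ S \ {v} :=
          fun c hc => ⟨Or.inr (hq c hc).1, (hq c hc).2⟩
        exact ⟨b, hb, hsub b q.end_mem_support, reach_of_walk q hsub⟩
    by_cases hvx : v = x
    · -- base y
      subst hvx
      have hyS' : y ∈ S \ {v} := ⟨hyS, fun h => hxy (by exact (h : y = v).symm)⟩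
      refine ⟨?_, ⟨⟨y, hyS'⟩⟩⟩
      have key2 : ∀ (a : V) (ha : a ∈ S \ {v}),
          (G.induce (S \ {v})).Reachable ⟨a, ha⟩ ⟨y, hyS'⟩ := by
        intro a ha
        obtain ⟨b, hb, hbm, hr⟩ := key a ha
        rcases hb with rfl | rfl
        · exact absurd rfl hbm.2
        · exact hr
      rintro ⟨a, ha⟩ ⟨b, hb⟩
      exact (key2 a ha).trans (key2 b hb).symm
    · by_cases hvy : v = y
      · subst hvy
        have hxS' : x ∈ S \ {v} := ⟨hxS, fun h => hxy (h : x = v)⟩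
        refine ⟨?_, ⟨⟨x, hxS'⟩⟩⟩
        have key2 : ∀ (a : V) (ha : a ∈ S \ {v}),
            (G.induce (S \ {v})).Reachable ⟨a, ha⟩ ⟨x, hxS'⟩ := by
          intro a ha
          obtain ⟨b, hb, hbm, hr⟩ := key a ha
          rcases hb with rfl | rfl
          · exact hr
          · exact absurd rfl hbm.2
        rintro ⟨a, ha⟩ ⟨b, hb⟩
        exact (key2 a ha).trans (key2 b hb).symm
      · -- v is internal to one of the two paths; x and y both remain
        have hxS' : x ∈ S \ {v} := ⟨hxS, fun h => hvx ((h : x = v).symm)⟩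
        have hyS' : y ∈ S \ {v} := ⟨hyS, fun h => hvy ((h : y = v).symm)⟩
        have hxyR : (G.induce (S \ {v})).Reachable ⟨x, hxS'⟩ ⟨y, hyS'⟩ := by
          by_cases hvQ : v ∈ Q.support
          · -- then v ∉ P.support, use P
            have hvP : v ∉ P.support := by
              intro hvP
              rcases hdisj v hvP hvQ with rfl | rfl
              · exact hvx rfl
              · exact hvy rfl
            have hsub : ∀ c ∈ P.support, c ∈ S \ {v} :=
              fun c hc => ⟨Or.inl hc, fun h => hvP ((h : c = v) ▸ hc)⟩
            exact reach_of_walk P hsub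
          · have hsub : ∀ c ∈ Q.support, c ∈ S \ {v} :=
              fun c hc => ⟨Or.inr hc, fun h => hvQ ((h : c = v) ▸ hc)⟩
            exact reach_of_walk Q hsub
        refine ⟨?_, ⟨⟨x, hxS'⟩⟩⟩
        have key2 : ∀ (a : V) (ha : a ∈ S \ {v}),
            (G.induce (S \ {v})).Reachable ⟨a, ha⟩ ⟨x, hxS'⟩ := by
          intro a ha
          obtain ⟨b, hb, hbm, hr⟩ := key a ha
          rcases hb with rfl | rfl
          · exact hr
          · exact hr.trans hxyR.symm
        rintro ⟨a, ha⟩ ⟨b, hb⟩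
        exact (key2 a ha).trans (key2 b hb).symm

end bwd

section bwd2
variable {V : Type} [DecidableEq V] {G : SimpleGraph V}

lemma cncv_clique_of_blocks [Fintype V]
    (hb : ∀ B : Set V, IsBlockSet G B → G.IsClique B) :
    ∀ S : Set V, ConnNoCutVertex G S → G.IsClique S := by
  intro S hS
  obtain ⟨B, hBF, hmax⟩ := Set.Finite.exists_maximalFor id
    {B : Set V | S ⊆ B ∧ ConnNoCutVertex G B} (Set.toFinite _) ⟨S, subset_rfl, hS⟩
  have hblock : IsBlockSet G B := ⟨hBF.2, fun B' h1 h2 => le_antisymm h1 (hmax ⟨hBF.1.trans h1, h2⟩ h1)⟩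
  exact (hb B hblock).subset hBF.1

/-- In a block graph, every vertex of a geodesic lies on every path (hence walk)
with the same endpoints. -/
lemma lemC (hG : G.Connected)
    (hcncv : ∀ S : Set V, ConnNoCutVertex G S → G.IsClique S) :
    ∀ (n : ℕ) (x y : V) (P Q : G.Walk x y), IsGeodesic G P → Q.IsPath → Q.length ≤ n →
      ∀ u ∈ P.support, u ∈ Q.support := by
  intro n
  induction n using Nat.strong_induction_on with
  | _ n ih =>
  intro x y P Q hPgeo hQpath hQlen u huP
  by_contra hu
  have hux : u ≠ x := fun h => hu (h ▸ Q.start_mem_support)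
  have huy : u ≠ y := fun h => hu (h ▸ Q.end_mem_support)
  have hPlen : 2 ≤ P.length := by
    by_contra hlt
    push_neg at hlt
    interval_cases h : P.length
    · exact hux (by cases P with
        | nil => simpa using huP
        | cons h q => simp at h)
    · cases P with
      | nil => simp at h
      | cons hadj q =>
        cases q with
        | nil =>
          simp only [Walk.support_cons, Walk.support_nil, List.mem_cons,
            List.mem_singleton, List.not_mem_nil, or_false] at huP
          rcases huP with rfl | rfl
          · exact hux rfl
          · exact huy rfl
        | cons h2 q2 => simp at h
  have hd2 : 2 ≤ G.dist x y := by
    have : P.length = G.dist x y := hPgeo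
    omega
  have hnxy : ¬ G.Adj x y := fun h => by
    have := dist_eq_one_iff_adj.mpr h
    omega
  have hxy : x ≠ y := fun h => by
    subst h
    rw [SimpleGraph.dist_self] at hd2
    omega
  by_cases hw : ∃ w, w ∈ P.support ∧ w ∈ Q.support ∧ w ≠ x ∧ w ≠ y
  · obtain ⟨w, hwP, hwQ, hwx, hwy⟩ := hw
    obtain ⟨hgeo1, hgeo2⟩ := isGeodesic_takeUntil hPgeo hwP
    have hQsplit : (Q.takeUntil w hwQ).length + (Q.dropUntil w hwQ).length = Q.length := by
      conv_rhs => rw [← Q.take_spec hwQ]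
      exact (Walk.length_append _ _).symm
    have hQ1 : 1 ≤ (Q.takeUntil w hwQ).length := by
      rcases Nat.eq_zero_or_pos (Q.takeUntil w hwQ).length with h | h
      · exact absurd (Walk.eq_of_length_eq_zero h).symm hwx
      · exact h
    have hQ2 : 1 ≤ (Q.dropUntil w hwQ).length := by
      rcases Nat.eq_zero_or_pos (Q.dropUntil w hwQ).length with h | h
      · exact absurd (Walk.eq_of_length_eq_zero h) hwy
      · exact h
    have huP' : u ∈ (P.takeUntil w hwP).support ∨ u ∈ (P.dropUntil w hwP).support := by
      have := P.take_spec hwP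
      rw [← this, Walk.mem_support_append_iff] at huP
      exact huP
    rcases huP' with h | h
    · have := ih (Q.takeUntil w hwQ).length (by omega) x w (P.takeUntil w hwP)
        (Q.takeUntil w hwQ) hgeo1 (hQpath.takeUntil hwQ) le_rfl u h
      exact hu (Q.support_takeUntil_subset hwQ this)
    · have := ih (Q.dropUntil w hwQ).length (by omega) w y (P.dropUntil w hwP)
        (Q.dropUntil w hwQ) hgeo2 (hQpath.dropUntil hwQ) le_rfl u h
      exact hu (Q.support_dropUntil_subset hwQ this)
  · push_neg at hw
    have hdisj : ∀ w, w ∈ P.support → w ∈ Q.support → w = x ∨ w = y := by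
      intro w h1 h2
      by_cases hx : w = x
      · exact Or.inl hx
      · exact Or.inr (hw w h1 h2 hx)
    have hclique := hcncv _ (cncv_of_two_paths P Q (isPath_of_isGeodesic hPgeo) hQpath hxy hdisj)
    exact hnxy (hclique (Or.inl P.start_mem_support) (Or.inl P.end_mem_support) hxy)

lemma isSlim_zero_of_blocks [Fintype V] (hG : G.Connected)
    (hb : ∀ B : Set V, IsBlockSet G B → G.IsClique B) : IsSlim G 0 := by
  have hcncv := cncv_clique_of_blocks (G := G) hb
  intro x y z pxy pxz pyz hxy hxz hyz u hu
  refine ⟨u, ?_, by simp [SimpleGraph.dist_self]⟩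
  set Q : G.Walk x y := pxz.append pyz.reverse with hQ
  have huQb : u ∈ Q.bypass.support :=
    lemC hG hcncv Q.bypass.length x y pxy Q.bypass hxy Q.bypass_isPath le_rfl u hu
  have huQ : u ∈ Q.support := Q.support_bypass_subset huQb
  rw [hQ, Walk.mem_support_append_iff] at huQ
  rcases huQ with h | h
  · exact Or.inl h
  · rw [Walk.support_reverse, List.mem_reverse] at h
    exact Or.inr h

lemma isSlim_card [Fintype V] (hG : G.Connected) : IsSlim G (Fintype.card V) := by
  intro x y z pxy pxz pyz _ _ _ u hu
  refine ⟨x, Or.inl pxz.start_mem_support, ?_⟩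
  obtain ⟨w⟩ := hG.preconnected u x
  calc G.dist u x ≤ w.bypass.length := G.dist_le _
    _ ≤ Fintype.card V := le_of_lt w.bypass_isPath.length_lt

end bwd2
/-- A finite connected graph has slimness `0` if and only if it is a block graph,
i.e., every block (maximal biconnected subgraph) of `G` is a clique. -/
theorem slimness_eq_zero_iff_blockGraph {V : Type} [Fintype V] (G : SimpleGraph V)
    (hG : G.Connected) :
    slimness G = 0 ↔ ∀ B : Set V, IsBlockSet G B → G.IsClique B := by
  letI : DecidableEq V := Classical.decEq V
  constructor
  · intro hsl B hBlock
    have hne : {δ : ℕ | IsSlim G δ}.Nonempty := ⟨Fintype.card V, isSlim_card hG⟩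
    have h0 : IsSlim G 0 := by
      rcases Nat.sInf_eq_zero.mp hsl with h | h
      · exact h
      · exact absurd h hne.ne_empty
    exact clique_of_cncv h0 hG hBlock.1
  · intro hblock
    exact Nat.sInf_eq_zero.mpr (Or.inl (isSlim_zero_of_blocks hG hblock))
end

section
/- If G has slimness 0, then G contains neither a diamond (K_4 minus an edge) nor any cycle C_k with k ≥ 4 as an isometric subgraph. -/
open SimpleGraph

/-- `f` realizes `H` as an isometric subgraph of `G`: `f` is injective, maps edges of `H`
to edges of `G`, and the distance in `G` between any two images equals the
distance in `H`. -/
def IsIsometricCopy {W V : Type} (H : SimpleGraph W) (G : SimpleGraph V) (f : W → V) : Prop :=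
  Function.Injective f ∧ (∀ a b : W, H.Adj a b → G.Adj (f a) (f b)) ∧
  ∀ a b : W, G.dist (f a) (f b) = H.dist a b

/-- The diamond `K₄ - e`: the complete graph on 4 vertices minus one edge. -/
def diamondGraph : SimpleGraph (Fin 4) :=
  (⊤ : SimpleGraph (Fin 4)).deleteEdges {s(0, 1)}

/-! ### Auxiliary machinery for cycles -/

open Fin.CommRing

section Cycle
variable {k : ℕ} [NeZero k]

lemma my_adj_succ (hk : 2 ≤ k) (u : Fin k) : (cycleGraph k).Adj u (u + 1) := by
  rw [cycleGraph_adj']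
  right
  have h : u + 1 - u = 1 := by ring
  rw [h, Fin.val_one' k]
  exact Nat.mod_eq_of_lt (by omega)

lemma my_adj_pred (hk : 2 ≤ k) (u : Fin k) : (cycleGraph k).Adj u (u - 1) := by
  rw [cycleGraph_adj']
  left
  have h : u - (u - 1) = 1 := by ring
  rw [h, Fin.val_one' k]
  exact Nat.mod_eq_of_lt (by omega)

/-- Walk going forward around the cycle. -/
def fwd (hk : 2 ≤ k) : (l : ℕ) → (u : Fin k) → (cycleGraph k).Walk u (u + l)
  | 0, u => Walk.nil.copy rfl (by simp)
  | (l+1), u => (Walk.cons (my_adj_succ hk u) (fwd hk l (u+1))).copy rfl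
      (by push_cast; ring)

/-- Walk going backward around the cycle. -/
def bwd (hk : 2 ≤ k) : (l : ℕ) → (u : Fin k) → (cycleGraph k).Walk u (u - l)
  | 0, u => Walk.nil.copy rfl (by simp)
  | (l+1), u => (Walk.cons (my_adj_pred hk u) (bwd hk l (u-1))).copy rfl
      (by push_cast; ring)

lemma fwd_length (hk : 2 ≤ k) (l : ℕ) (u : Fin k) : (fwd hk l u).length = l := by
  induction l generalizing u with
  | zero => simp [fwd]
  | succ n ih => simp [fwd, ih]

lemma bwd_length (hk : 2 ≤ k) (l : ℕ) (u : Fin k) : (bwd hk l u).length = l := by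
  induction l generalizing u with
  | zero => simp [bwd]
  | succ n ih => simp [bwd, ih]

lemma fwd_support (hk : 2 ≤ k) (l : ℕ) (u : Fin k) {w : Fin k}
    (hw : w ∈ (fwd hk l u).support) : ∃ t ≤ l, w = u + (t : ℕ) := by
  induction l generalizing u with
  | zero =>
    simp [fwd] at hw
    exact ⟨0, le_refl _, by simp [hw]⟩
  | succ n ih =>
    simp only [fwd, Walk.support_copy, Walk.support_cons, List.mem_cons] at hw
    rcases hw with h | h
    · exact ⟨0, by omega, by simp [h]⟩
    · obtain ⟨t, ht, hw⟩ := ih (u+1) h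
      exact ⟨t + 1, by omega, by rw [hw]; push_cast; ring⟩

lemma bwd_support (hk : 2 ≤ k) (l : ℕ) (u : Fin k) {w : Fin k}
    (hw : w ∈ (bwd hk l u).support) : ∃ t ≤ l, w = u - (t : ℕ) := by
  induction l generalizing u with
  | zero =>
    simp [bwd] at hw
    exact ⟨0, le_refl _, by simp [hw]⟩
  | succ n ih =>
    simp only [bwd, Walk.support_copy, Walk.support_cons, List.mem_cons] at hw
    rcases hw with h | h
    · exact ⟨0, by omega, by simp [h]⟩
    · obtain ⟨t, ht, hw⟩ := ih (u-1) h
      exact ⟨t + 1, by omega, by rw [hw]; push_cast; ring⟩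

lemma fwd_mem_support (hk : 2 ≤ k) (l : ℕ) (u : Fin k) (t : ℕ) (ht : t ≤ l) :
    u + (t : ℕ) ∈ (fwd hk l u).support := by
  induction l generalizing u t with
  | zero =>
    interval_cases t
    simp [fwd]
  | succ n ih =>
    simp only [fwd, Walk.support_copy, Walk.support_cons, List.mem_cons]
    rcases Nat.eq_zero_or_pos t with h | h
    · left; simp [h]
    · right
      obtain ⟨s, rfl⟩ := Nat.exists_eq_add_of_le h
      have : u + (↑(1 + s) : Fin k) = (u + 1) + (s : ℕ) := by push_cast; ring
      rw [this]
      exact ih (u+1) s (by omega)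

end Cycle

lemma modk {k : ℕ} (hk : 0 < k) (x : ℕ) (h : x < 2*k) :
    x % k = if k ≤ x then x - k else x := by
  split_ifs with h'
  · rw [Nat.mod_eq_sub_mod h', Nat.mod_eq_of_lt (by omega)]
  · exact Nat.mod_eq_of_lt (by omega)

lemma cycle_walk_lb {k : ℕ} [NeZero k] {u v : Fin k}
    (p : (cycleGraph k).Walk u v) : min (v - u).val (u - v).val ≤ p.length := by
  have hk := Nat.pos_of_ne_zero (NeZero.ne k)
  induction p with
  | nil => simp
  | @cons a b c hab p ih =>
    rw [Walk.length_cons]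
    rw [cycleGraph_adj'] at hab
    have h1 : (c - a).val = ((k - a.val) + c.val) % k := rfl
    have h2 : (a - c).val = ((k - c.val) + a.val) % k := rfl
    have h3 : (c - b).val = ((k - b.val) + c.val) % k := rfl
    have h4 : (b - c).val = ((k - c.val) + b.val) % k := rfl
    have h5 : (a - b).val = ((k - b.val) + a.val) % k := rfl
    have h6 : (b - a).val = ((k - a.val) + b.val) % k := rfl
    have ha := a.isLt; have hb := b.isLt; have hc := c.isLt
    rw [h1, h2, modk hk _ (by omega), modk hk _ (by omega)]
    rw [h3, h4, modk hk _ (by omega), modk hk _ (by omega)] at ih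
    rw [h5, h6, modk hk _ (by omega), modk hk _ (by omega)] at hab
    clear h1 h2 h3 h4 h5 h6
    split_ifs at ih hab ⊢ <;> omega

lemma cycle_dist {k : ℕ} [NeZero k] (hk : 2 ≤ k) (u v : Fin k) :
    (cycleGraph k).dist u v = min (v - u).val (u - v).val := by
  have e1 : u + ((v - u).val : ℕ) = v := by
    rw [Fin.cast_val_eq_self]; ring
  have e2 : u - ((u - v).val : ℕ) = v := by
    rw [Fin.cast_val_eq_self]; ring
  apply le_antisymm
  · apply le_min
    · have := dist_le ((fwd hk (v - u).val u).copy rfl e1)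
      rwa [Walk.length_copy, fwd_length] at this
    · have := dist_le ((bwd hk (u - v).val u).copy rfl e2)
      rwa [Walk.length_copy, bwd_length] at this
  · have hr : (cycleGraph k).Reachable u v := ⟨(fwd hk (v - u).val u).copy rfl e1⟩
    obtain ⟨p, hp⟩ := hr.exists_walk_length_eq_dist
    rw [← hp]
    exact cycle_walk_lb p

lemma dist_ne_one_of_not_adj {V : Type} {G : SimpleGraph V} {u v : V}
    (h : ¬ G.Adj u v) : G.dist u v ≠ 1 := by
  intro h1
  have hne : G.dist u v ≠ 0 := by omega
  obtain ⟨p, hp⟩ := SimpleGraph.exists_walk_of_dist_ne_zero hne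
  rw [h1] at hp
  cases p with
  | nil => simp at hp
  | @cons _ w _ hadj q =>
    rw [Walk.length_cons, Nat.add_eq_right] at hp
    exact h ((Walk.eq_of_length_eq_zero hp) ▸ hadj)

/-- If `G` has slimness `0`, then `G` contains neither a diamond nor any cycle `C_k`
with `k ≥ 4` as an isometric subgraph. -/
theorem no_isometric_diamond_or_cycle_of_slimness_eq_zero {V : Type} [Fintype V]
    (G : SimpleGraph V) (hG : G.Connected) (h0 : slimness G = 0) :
    (¬ ∃ f : Fin 4 → V, IsIsometricCopy diamondGraph G f) ∧
    ∀ k : ℕ, 4 ≤ k → ¬ ∃ f : Fin k → V, IsIsometricCopy (SimpleGraph.cycleGraph k) G f := by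
  classical
  have hS : IsSlim G (Fintype.card V) := by
    intro x y z pxy pxz pyz _ _ _ u hu
    refine ⟨x, Or.inl pxz.start_mem_support, ?_⟩
    obtain ⟨w⟩ := hG.preconnected u x
    calc G.dist u x ≤ (w.toPath : G.Walk u x).length := dist_le _
      _ ≤ Fintype.card V := (w.toPath.2.length_lt).le
  have hslim : IsSlim G 0 := by
    rcases Nat.sInf_eq_zero.mp h0 with h | h
    · exact h
    · exact absurd h (Set.nonempty_iff_ne_empty.mp ⟨_, hS⟩)
  have key : ∀ (x y z : V) (pxy : G.Walk x y) (pxz : G.Walk x z) (pyz : G.Walk y z),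
      IsGeodesic G pxy → IsGeodesic G pxz → IsGeodesic G pyz →
      ∀ u ∈ pxy.support, u ∈ pxz.support ∨ u ∈ pyz.support := by
    intro x y z pxy pxz pyz g1 g2 g3 u hu
    obtain ⟨v, hv, hd⟩ := hslim x y z pxy pxz pyz g1 g2 g3 u hu
    have huv : u = v := (hG.dist_eq_zero_iff).mp (Nat.le_zero.mp hd)
    rwa [huv]
  constructor
  · rintro ⟨f, finj, fadj, fdist⟩
    have adj_iff : ∀ a b : Fin 4, diamondGraph.Adj a b ↔ a ≠ b ∧ s(a, b) ≠ s(0, 1) := by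
      intro a b
      simp [diamondGraph]
    have a02 : diamondGraph.Adj 0 2 := (adj_iff 0 2).mpr (by decide)
    have a21 : diamondGraph.Adj 2 1 := (adj_iff 2 1).mpr (by decide)
    have a03 : diamondGraph.Adj 0 3 := (adj_iff 0 3).mpr (by decide)
    have a31 : diamondGraph.Adj 3 1 := (adj_iff 3 1).mpr (by decide)
    have hd01 : diamondGraph.dist 0 1 = 2 := by
      let w : diamondGraph.Walk 0 1 := .cons a02 (.cons a21 .nil)
      have hlen : w.length = 2 := by simp [w]
      have hle : diamondGraph.dist 0 1 ≤ 2 := hlen ▸ dist_le w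
      have hr : diamondGraph.Reachable 0 1 := ⟨w⟩
      have hne0 : diamondGraph.dist 0 1 ≠ 0 := by
        rw [ne_eq, hr.dist_eq_zero_iff]; decide
      have hne1 : diamondGraph.dist 0 1 ≠ 1 :=
        dist_ne_one_of_not_adj (by rw [adj_iff]; decide)
      omega
    let pxy : G.Walk (f 0) (f 1) := .cons (fadj _ _ a02) (.cons (fadj _ _ a21) .nil)
    let pxz : G.Walk (f 0) (f 1) := .cons (fadj _ _ a03) (.cons (fadj _ _ a31) .nil)
    have g1 : IsGeodesic G pxy := by
      show pxy.length = _
      rw [fdist, hd01]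
      simp [pxy]
    have g2 : IsGeodesic G pxz := by
      show pxz.length = _
      rw [fdist, hd01]
      simp [pxz]
    have g3 : IsGeodesic G (Walk.nil : G.Walk (f 1) (f 1)) := by
      show (0 : ℕ) = _
      rw [dist_self]
    have hmem : f 2 ∈ pxy.support := by simp [pxy]
    have hor := key (f 0) (f 1) (f 1) pxy pxz Walk.nil g1 g2 g3 (f 2) hmem
    simp only [pxz, Walk.support_cons, Walk.support_nil, List.mem_cons,
      List.mem_singleton, List.not_mem_nil, or_false] at hor
    rcases hor with (h | h | h) | h <;> exact absurd (finj h) (by decide)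
  · intro k hk4
    rintro ⟨f, finj, fadj, fdist⟩
    haveI : NeZero k := ⟨by omega⟩
    have hk2 : 2 ≤ k := by omega
    have hk0 : 0 < k := by omega
    set m : ℕ := k / 2 with hm
    have hm2 : 2 ≤ m := by omega
    have hmk : 2 * m ≤ k := by omega
    have hmk' : k ≤ 2 * m + 1 := by omega
    have hmlt : m < k := by omega
    let φ : cycleGraph k →g G := ⟨f, fun h => fadj _ _ h⟩
    set um : Fin k := ((m : ℕ) : Fin k) with hum
    set uz : Fin k := -((m : ℕ) : Fin k) with huz
    have hmval : um.val = m := by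
      rw [hum, Fin.val_natCast]
      exact Nat.mod_eq_of_lt hmlt
    have hzval : uz.val = k - m := by
      have : uz.val = (k - um.val) % k := rfl
      rw [this, hmval]
      exact Nat.mod_eq_of_lt (by omega)
    have e1 : (0 : Fin k) + ((m : ℕ) : Fin k) = um := by rw [zero_add]
    have e2 : (0 : Fin k) - ((m : ℕ) : Fin k) = uz := by rw [zero_sub]
    have e3 : um + ((k - 2*m : ℕ) : Fin k) = uz := by
      apply Fin.ext
      rw [Fin.val_add, hmval, Fin.val_natCast,
        Nat.mod_eq_of_lt (show k - 2*m < k by omega),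
        Nat.mod_eq_of_lt (show m + (k - 2*m) < k by omega), hzval]
      omega
    let p1 : G.Walk (f 0) (f um) := ((fwd hk2 m 0).copy rfl e1).map φ
    let p2 : G.Walk (f 0) (f uz) := ((bwd hk2 m 0).copy rfl e2).map φ
    let p3 : G.Walk (f um) (f uz) := ((fwd hk2 (k - 2*m) um).copy rfl e3).map φ
    have d1 : G.dist (f 0) (f um) = m := by
      rw [fdist, cycle_dist hk2, sub_zero, zero_sub, ← huz, hmval, hzval]
      omega
    have d2 : G.dist (f 0) (f uz) = m := by
      rw [fdist, cycle_dist hk2, sub_zero, zero_sub, huz, neg_neg, ← hum, hmval, hzval]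
      omega
    have d3 : G.dist (f um) (f uz) = k - 2*m := by
      rw [fdist, cycle_dist hk2]
      have hA : (uz - um).val = ((k - um.val) + uz.val) % k := rfl
      have hB : (um - uz).val = ((k - uz.val) + um.val) % k := rfl
      rw [hA, hB, hmval, hzval, modk hk0 _ (by omega), modk hk0 _ (by omega)]
      split_ifs <;> omega
    have g1 : IsGeodesic G p1 := by
      show p1.length = _
      rw [d1]
      simp [p1, fwd_length]
    have g2 : IsGeodesic G p2 := by
      show p2.length = _
      rw [d2]
      simp [p2, bwd_length]
    have g3 : IsGeodesic G p3 := by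
      show p3.length = _
      rw [d3]
      simp [p3, fwd_length]
    have hval1 : (((1 : ℕ) : Fin k)).val = 1 := by
      rw [Fin.val_natCast]
      exact Nat.mod_eq_of_lt (by omega)
    have hu1mem : f ((1 : ℕ) : Fin k) ∈ p1.support := by
      simp only [p1, Walk.support_map, Walk.support_copy]
      exact List.mem_map.mpr ⟨(0 : Fin k) + ((1 : ℕ) : Fin k),
        fwd_mem_support hk2 m 0 1 (by omega), by rw [zero_add]; rfl⟩
    have hor := key (f 0) (f um) (f uz) p1 p2 p3 g1 g2 g3 _ hu1mem
    rcases hor with h | h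
    · simp only [p2, Walk.support_map, Walk.support_copy] at h
      obtain ⟨w, hw, hfw⟩ := List.mem_map.mp h
      obtain ⟨t, ht, rfl⟩ := bwd_support hk2 m 0 hw
      have heq := finj hfw
      have hv : ((0 : Fin k) - ((t : ℕ) : Fin k)).val = ((k - t % k) + 0) % k := rfl
      have hval : ((0 : Fin k) - ((t : ℕ) : Fin k)).val = 1 := by rw [heq, hval1]
      rw [hv, Nat.mod_eq_of_lt (show t < k by omega)] at hval
      rcases Nat.eq_zero_or_pos t with h0t | h0t
      · subst h0t
        simp [Nat.mod_self] at hval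
      · rw [Nat.mod_eq_of_lt (by omega)] at hval
        omega
    · simp only [p3, Walk.support_map, Walk.support_copy] at h
      obtain ⟨w, hw, hfw⟩ := List.mem_map.mp h
      obtain ⟨t, ht, rfl⟩ := fwd_support hk2 (k - 2*m) um hw
      have heq := finj hfw
      have hv : (um + ((t : ℕ) : Fin k)).val = (um.val + t % k) % k := rfl
      have hval : (um + ((t : ℕ) : Fin k)).val = 1 := by rw [heq, hval1]
      rw [hv, hmval, Nat.mod_eq_of_lt (show t < k by omega),
        Nat.mod_eq_of_lt (show m + t < k by omega)] at hval
      omega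
end
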